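/- arXiv:2605.05321 — 8 statements merged into one kernel-verified Lean document; each statement's English description precedes it below -/
import Mathlib

section
/- Let N ≥ 1, ℓ ≥ 0, n ≥ 0. Let U be an N×N complex unitary matrix, let P̂_0 = 1, P̂_1, …, P̂_n be monic complex polynomials with deg P̂_i = i, and let α_0 = 1, α_1, …, α_n be nonzero complex numbers. Let W_1, …, W_n be unitary matrices on ℂ^{2^ℓ} ⊗ ℂ^N such that for every 0 ≤ i ≤ n one has (⟨0|^{⊗ℓ} ⊗ I_N) (W_i W_{i−1} ⋯ W_1) (|0⟩^{⊗ℓ} ⊗ I_N) = P̂_i(U)/α_i (the empty product being the identity). Let v = (v_0, …, v_n) ∈ ℂ^{n+1} be nonzero and set ‖v‖₁ = |v_0| + ⋯ + |v_n|. For 1 ≤ i ≤ n define the controlled unitary W_i^c on ℂ^{n+1} ⊗ ℂ^{2^ℓ} ⊗ ℂ^N by W_i^c (e_j ⊗ ψ) = e_j ⊗ (W_i ψ) if j ≥ i and W_i^c (e_j ⊗ ψ) = e_j ⊗ ψ if j < i, where e_0, …, e_n is the standard basis of ℂ^{n+1}. Then there exist unitary matrices V and Ṽ on ℂ^{n+1}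 such that ((e_0^† Ṽ) ⊗ ⟨0|^{⊗ℓ} ⊗ I_N) (W_n^c W_{n−1}^c ⋯ W_1^c) ((V e_0) ⊗ |0⟩^{⊗ℓ} ⊗ I_N) = (1/‖v‖₁) · Σ_{i=0}^{n} v_i P̂_i(U)/α_i. -/
open Matrix Polynomial BigOperators Module

lemma aux_onb (m : ℕ) (u : EuclideanSpace ℂ (Fin (m+1))) (hu : inner ℂ u u = (1:ℂ)) :
    ∃ b : OrthonormalBasis (Fin (m+1)) ℂ (EuclideanSpace ℂ (Fin (m+1))), b 0 = u := by
  classical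
  have hcard : finrank ℂ (EuclideanSpace ℂ (Fin (m+1))) = Fintype.card (Fin (m+1)) := by simp
  have hon : Orthonormal ℂ (Set.restrict {0} (fun _ : Fin (m+1) => u)) := by
    rw [orthonormal_iff_ite]
    rintro ⟨i, hi⟩ ⟨j, hj⟩
    simp only [Set.mem_singleton_iff] at hi hj
    subst hi; subst hj
    simp only [Set.restrict]
    rw [if_pos trivial]
    exact hu
  obtain ⟨b, hb⟩ := hon.exists_orthonormalBasis_extension_of_card_eq hcard
  exact ⟨b, hb 0 rfl⟩

lemma aux_unitary_cols (m : ℕ) (b : OrthonormalBasis (Fin m) ℂ (EuclideanSpace ℂ (Fin m))) :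
    (Matrix.of fun j k => b k j) ∈ Matrix.unitaryGroup (Fin m) ℂ := by
  rw [Matrix.mem_unitaryGroup_iff']
  ext k k'
  have h := orthonormal_iff_ite.mp b.orthonormal k k'
  simp only [PiLp.inner_apply, RCLike.inner_apply] at h
  simp [Matrix.mul_apply, Matrix.star_apply, Matrix.of_apply, RCLike.star_def,
    Matrix.one_apply]
  rw [← h]
  exact Finset.sum_congr rfl (fun _ _ => mul_comm _ _)

lemma aux_unitary_rows (m : ℕ) (b : OrthonormalBasis (Fin m) ℂ (EuclideanSpace ℂ (Fin m))) :
    (Matrix.of fun k j => b k j) ∈ Matrix.unitaryGroup (Fin m) ℂ := by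
  rw [Matrix.mem_unitaryGroup_iff]
  ext k k'
  have h := orthonormal_iff_ite.mp b.orthonormal k' k
  simp only [PiLp.inner_apply, RCLike.inner_apply] at h
  simp only [Matrix.mul_apply, Matrix.star_apply, Matrix.of_apply, RCLike.star_def,
    Matrix.one_apply]
  rw [h]
  rcases eq_or_ne k k' with rfl | h2
  · simp
  · simp [h2, Ne.symm h2]

/-- **LCU with a QSP-like select oracle (Lemma 2.1).**
`G i` is the partial product `W_i ⋯ W_1` of the QSP-like protocol, each of whose
`(⟨0|^{⊗ℓ} ⊗ I)·(·)·(|0⟩^{⊗ℓ} ⊗ I)` blocks encodes `P̂_i(U)/α_i`; `Wc i` is the controlled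
version of `W i` and `Gc i` the partial product `W_i^c ⋯ W_1^c`.  The LCU protocol with
select oracle `Gc n` block-encodes `(1/‖v‖₁)·Σ v_i P̂_i(U)/α_i`. -/
theorem stmt_0 (N ℓ n : ℕ) (hN : 1 ≤ N)
    (U : Matrix (Fin N) (Fin N) ℂ) (hU : U ∈ Matrix.unitaryGroup (Fin N) ℂ)
    (P : ℕ → Polynomial ℂ) (hP0 : P 0 = 1)
    (hPmonic : ∀ i ≤ n, (P i).Monic) (hPdeg : ∀ i ≤ n, (P i).natDegree = i)
    (α : ℕ → ℂ) (hα0 : α 0 = 1) (hα : ∀ i ≤ n, α i ≠ 0)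
    (W : ℕ → Matrix ((Fin ℓ → Fin 2) × Fin N) ((Fin ℓ → Fin 2) × Fin N) ℂ)
    (hWu : ∀ i, 1 ≤ i → i ≤ n → W i ∈ Matrix.unitaryGroup ((Fin ℓ → Fin 2) × Fin N) ℂ)
    (G : ℕ → Matrix ((Fin ℓ → Fin 2) × Fin N) ((Fin ℓ → Fin 2) × Fin N) ℂ)
    (hG0 : G 0 = 1) (hGrec : ∀ i, 1 ≤ i → i ≤ n → G i = W i * G (i - 1))
    (hblock : ∀ i ≤ n, ∀ a b : Fin N,
      G i ((fun _ => 0), a) ((fun _ => 0), b) = (α i)⁻¹ * (Polynomial.aeval U (P i)) a b)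
    (v : Fin (n + 1) → ℂ) (hv : v ≠ 0)
    (Wc : ℕ → Matrix (Fin (n + 1) × ((Fin ℓ → Fin 2) × Fin N))
      (Fin (n + 1) × ((Fin ℓ → Fin 2) × Fin N)) ℂ)
    (hWc : ∀ i, 1 ≤ i → i ≤ n → ∀ (j j' : Fin (n + 1)) (p p' : (Fin ℓ → Fin 2) × Fin N),
      Wc i (j, p) (j', p') =
        if j = j' then (if i ≤ (j : ℕ) then W i p p' else if p = p' then 1 else 0) else 0)
    (Gc : ℕ → Matrix (Fin (n + 1) × ((Fin ℓ → Fin 2) × Fin N))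
      (Fin (n + 1) × ((Fin ℓ → Fin 2) × Fin N)) ℂ)
    (hGc0 : Gc 0 = 1) (hGcrec : ∀ i, 1 ≤ i → i ≤ n → Gc i = Wc i * Gc (i - 1)) :
    ∃ V Vt : Matrix (Fin (n + 1)) (Fin (n + 1)) ℂ,
      V ∈ Matrix.unitaryGroup (Fin (n + 1)) ℂ ∧ Vt ∈ Matrix.unitaryGroup (Fin (n + 1)) ℂ ∧
      ∀ a b : Fin N,
        (∑ j : Fin (n + 1), ∑ j' : Fin (n + 1),
          Vt 0 j * Gc n (j, ((fun _ => 0), a)) (j', ((fun _ => 0), b)) * V j' 0) =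
        ((∑ i : Fin (n + 1), ‖v i‖ : ℝ) : ℂ)⁻¹ *
          ∑ i : Fin (n + 1), v i * (α (i : ℕ))⁻¹ * (Polynomial.aeval U (P (i : ℕ))) a b := by
  classical
  -- the ℓ¹ norm of v
  set S : ℝ := ∑ i : Fin (n + 1), ‖v i‖ with hSdef
  have hS : 0 < S := by
    obtain ⟨i, hi⟩ : ∃ i, v i ≠ 0 := by
      by_contra h; push_neg at h; exact hv (funext h)
    exact Finset.sum_pos' (fun i _ => norm_nonneg _)
      ⟨i, Finset.mem_univ i, norm_pos_iff.mpr hi⟩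
  -- the two unit vectors
  set u : EuclideanSpace ℂ (Fin (n + 1)) :=
    WithLp.toLp 2 fun j => ((Real.sqrt (‖v j‖) / Real.sqrt S : ℝ) : ℂ) with hudef
  set w : EuclideanSpace ℂ (Fin (n + 1)) :=
    WithLp.toLp 2 fun j => v j * (((Real.sqrt (‖v j‖) * Real.sqrt S)⁻¹ : ℝ) : ℂ) with hwdef
  have huu : ∀ j, (starRingEnd ℂ) (u j) * u j = ((‖v j‖ / S : ℝ) : ℂ) := by
    intro j
    simp only [hudef, PiLp.toLp_apply, Complex.conj_ofReal]
    rw [← Complex.ofReal_mul]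
    congr 1
    rw [div_mul_div_comm, Real.mul_self_sqrt (norm_nonneg _),
      Real.mul_self_sqrt hS.le]
  have hww : ∀ j, (starRingEnd ℂ) (w j) * w j = ((‖v j‖ / S : ℝ) : ℂ) := by
    intro j
    by_cases hj : v j = 0
    · simp [hwdef, hj]
    · have habs : 0 < ‖v j‖ := norm_pos_iff.mpr hj
      have hns : Complex.normSq (w j) = ‖v j‖ / S := by
        simp only [hwdef, PiLp.toLp_apply]
        rw [Complex.normSq_mul, Complex.normSq_ofReal, Complex.normSq_eq_norm_sq]
        have e : ((Real.sqrt (‖v j‖) * Real.sqrt S)⁻¹ *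
            (Real.sqrt (‖v j‖) * Real.sqrt S)⁻¹)
            = (Real.sqrt (‖v j‖) * Real.sqrt (‖v j‖))⁻¹ *
              (Real.sqrt S * Real.sqrt S)⁻¹ := by ring
        rw [e, Real.mul_self_sqrt habs.le, Real.mul_self_sqrt hS.le]
        field_simp
      rw [← Complex.normSq_eq_conj_mul_self, hns]
  have hsum1 : (∑ j : Fin (n + 1), ((‖v j‖ / S : ℝ) : ℂ)) = 1 := by
    rw [← Complex.ofReal_sum, ← Finset.sum_div, ← hSdef, div_self hS.ne']
    norm_num
  have hwu : ∀ j, w j * u j = v j * ((S : ℝ) : ℂ)⁻¹ := by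
    intro j
    by_cases hj : v j = 0
    · simp [hwdef, hudef, hj]
    · have habs : 0 < ‖v j‖ := norm_pos_iff.mpr hj
      simp only [hwdef, hudef, PiLp.toLp_apply]
      rw [mul_assoc, ← Complex.ofReal_mul, ← Complex.ofReal_inv]
      congr 1
      have h1 : (0:ℝ) < Real.sqrt (‖v j‖) := Real.sqrt_pos.2 habs
      have e : ((Real.sqrt (‖v j‖) * Real.sqrt S)⁻¹ *
          (Real.sqrt (‖v j‖) / Real.sqrt S))
          = (Real.sqrt (‖v j‖) / Real.sqrt (‖v j‖)) *
            (1 / (Real.sqrt S * Real.sqrt S)) := by ring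
      rw [e, div_self h1.ne', Real.mul_self_sqrt hS.le, one_mul, one_div]
  -- build the unitaries from orthonormal bases
  have hinner_u : inner ℂ u u = (1 : ℂ) := by
    rw [PiLp.inner_apply]
    simp only [RCLike.inner_apply]
    simpa [fun j => (mul_comm _ _).trans (huu j)] using hsum1
  have hinner_w : inner ℂ w w = (1 : ℂ) := by
    rw [PiLp.inner_apply]
    simp only [RCLike.inner_apply]
    simpa [fun j => (mul_comm _ _).trans (hww j)] using hsum1
  obtain ⟨b, hb⟩ := aux_onb n u hinner_u
  obtain ⟨b', hb'⟩ := aux_onb n w hinner_w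
  refine ⟨Matrix.of fun j k => b k j, Matrix.of fun k j => b' k j,
    aux_unitary_cols (n+1) b, aux_unitary_rows (n+1) b', ?_⟩
  intro a c
  -- diagonal structure of Gc
  have key : ∀ m, m ≤ n → ∀ (j j' : Fin (n+1)) (p p' : (Fin ℓ → Fin 2) × Fin N),
      Gc m (j, p) (j', p') = if j = j' then G (min m (j : ℕ)) p p' else 0 := by
    intro m
    induction m with
    | zero =>
      intro _ j j' p p'
      rw [hGc0]
      simp only [Nat.zero_min, hG0]
      by_cases h1 : j = j'
      · subst h1
        by_cases h2 : p = p' <;> simp [Matrix.one_apply, Prod.ext_iff, h2]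
      · simp [Matrix.one_apply, Prod.ext_iff, h1]
    | succ m ih =>
      intro hm j j' p p'
      rw [hGcrec (m+1) (by omega) hm]
      simp only [Nat.add_sub_cancel]
      rw [Matrix.mul_apply, Fintype.sum_prod_type]
      simp only [hWc (m+1) (by omega) hm, ite_mul, zero_mul]
      rw [Finset.sum_comm]
      simp only [Finset.sum_ite_eq, Finset.mem_univ, if_true]
      by_cases hmj : m + 1 ≤ (j : ℕ)
      · simp only [hmj, if_true, ih (by omega)]
        rcases eq_or_ne j j' with rfl | hjj
        · simp only [if_true, min_eq_left (show m ≤ (j:ℕ) by omega)]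
          rw [← Matrix.mul_apply, ← show G (m+1) = W (m+1) * G m by
            simpa using hGrec (m+1) (by omega) hm]
          rw [min_eq_left hmj]
        · simp only [hjj, if_false, mul_zero, Finset.sum_const_zero]
      · simp only [hmj, if_false, one_mul]
        rw [Finset.sum_ite_eq Finset.univ p (fun q => Gc m (j, q) (j', p'))]
        simp only [Finset.mem_univ, if_true, ih (by omega)]
        rw [min_eq_right (show (j:ℕ) ≤ m by omega), min_eq_right (show (j:ℕ) ≤ m+1 by omega)]
  simp only [key n le_rfl, Matrix.of_apply, mul_ite, mul_zero, ite_mul, zero_mul]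
  have hcollapse : ∀ j : Fin (n+1),
      (∑ j' : Fin (n+1), if j = j' then
        b' 0 j * G (min n (j : ℕ)) ((fun _ => 0), a) ((fun _ => 0), c) * b 0 j' else 0)
      = b' 0 j * G (j : ℕ) ((fun _ => 0), a) ((fun _ => 0), c) * b 0 j := by
    intro j
    rw [Finset.sum_ite_eq Finset.univ j
      (fun j' => b' 0 j * G (min n (j : ℕ)) ((fun _ => 0), a) ((fun _ => 0), c) * b 0 j')]
    simp only [Finset.mem_univ, if_true]
    rw [min_eq_right (Fin.is_le j)]
  rw [Finset.sum_congr rfl (fun j _ => hcollapse j), Finset.mul_sum]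
  refine Finset.sum_congr rfl (fun j _ => ?_)
  rw [hblock (j : ℕ) (Fin.is_le j) a c, hb, hb']
  have := hwu j
  calc w j * ((α (j:ℕ))⁻¹ * (Polynomial.aeval U (P (j:ℕ))) a c) * u j
      = (w j * u j) * ((α (j:ℕ))⁻¹ * (Polynomial.aeval U (P (j:ℕ))) a c) := by ring
    _ = ((S : ℝ) : ℂ)⁻¹ * (v j * (α (j:ℕ))⁻¹ * (Polynomial.aeval U (P (j:ℕ))) a c) := by
        rw [this]; ring
end

section
/- Let γ > 1 be a real number, let k ≥ 1 be a natural number, let M ≥ 0, and let f : ℝ → ℝ be a k-times continuously differentiable function such that: (i) for each 0 ≤ j ≤ k the function x ↦ f^{(j)}(x)·exp(−γ²(x−1)²/2) is integrable on ℝ; (ii) for each 0 ≤ j ≤ k−1 the function x ↦ f^{(j)}(x)·g^{(k−1−j)}(x) tends to 0 as x → +∞ and as x → −∞, where g(x) = exp(−γ²(x−1)²/2); (iii) the function x ↦ f(x)·H_k(γ(x−1))·exp(−γ²(x−1)²/2) is integrable on ℝ; and (iv) |∫_ℝ f^{(k)}(x)·exp(−γ²(x−1)²/2)·γ dx| ≤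 M·√(k!)/k^{1+3γ²}. Then |∫_ℝ f(x)·γ^{−k}·H_k(γ(x−1))·exp(−γ²(x−1)²/2)·γ dx| ≤ M·√(k!)·k^{−(1+3γ²)}·γ^{−2k}. -/
open MeasureTheory Filter Polynomial

lemma gaussCD (γ : ℝ) : ContDiff ℝ (⊤ : ℕ∞) (fun y : ℝ => Real.exp (-γ^2*(y-1)^2/2)) :=
  Real.contDiff_exp.comp <|
    ((contDiff_const.mul ((contDiff_id.sub contDiff_const).pow 2)).div_const 2)

lemma gaussHD (γ x : ℝ) : HasDerivAt (fun y : ℝ => Real.exp (-γ^2*(y-1)^2/2))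
    (-γ^2*(x-1) * Real.exp (-γ^2*(x-1)^2/2)) x := by
  have h1 : HasDerivAt (fun y : ℝ => -γ^2*(y-1)^2/2) (-γ^2*(x-1)) x := by
    have h0 : HasDerivAt (fun y : ℝ => (y-1)^2) (2*(x-1)) x := by
      simpa using ((hasDerivAt_id x).sub_const 1).fun_pow 2
    have h2 := h0.const_mul (-γ^2/2)
    have heq : (fun y : ℝ => -γ^2*(y-1)^2/2) = fun y => -γ^2/2*(y-1)^2 := by
      funext y; ring
    rw [heq]; exact h2.congr_deriv (by ring)
  simpa [mul_comm] using h1.exp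

lemma rodrigues (γ : ℝ) (n : ℕ) (x : ℝ) :
    iteratedDeriv n (fun y : ℝ => Real.exp (-γ^2*(y-1)^2/2)) x =
      (-1:ℝ)^n * γ^n * aeval (γ*(x-1)) (hermite n) * Real.exp (-γ^2*(x-1)^2/2) := by
  induction n generalizing x with
  | zero => simp
  | succ n ih =>
    rw [iteratedDeriv_succ]
    have ihf : iteratedDeriv n (fun y : ℝ => Real.exp (-γ^2*(y-1)^2/2)) =
        fun x => (-1:ℝ)^n * γ^n * aeval (γ*(x-1)) (hermite n) * Real.exp (-γ^2*(x-1)^2/2) :=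
      funext ih
    rw [ihf]
    have hP : HasDerivAt (fun x : ℝ => (aeval (γ*(x-1)) (hermite n) : ℝ))
        (γ * aeval (γ*(x-1)) (derivative (hermite n))) x := by
      have hin : HasDerivAt (fun x : ℝ => γ*(x-1)) γ x := by
        simpa using ((hasDerivAt_id x).sub_const 1).const_mul γ
      have hp := ((hermite n).hasDerivAt_aeval (γ*(x-1))).comp x hin
      simpa [mul_comm, Function.comp_def] using hp
    have hprod := ((hP.fun_mul (gaussHD γ x)).const_mul ((-1:ℝ)^n * γ^n))
    have := hprod.deriv
    rw [show (fun x => (-1:ℝ)^n * γ^n * aeval (γ*(x-1)) (hermite n) * Real.exp (-γ^2*(x-1)^2/2))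
        = fun x => (-1:ℝ)^n * γ^n * ((aeval (γ*(x-1)) (hermite n) : ℝ) * Real.exp (-γ^2*(x-1)^2/2))
        from funext fun x => by ring, this]
    rw [hermite_succ, map_sub, map_mul, aeval_X]
    push_cast
    ring

lemma ibp_iter (g : ℝ → ℝ) (hg : ContDiff ℝ (⊤ : ℕ∞) g) :
    ∀ (n : ℕ) (F : ℝ → ℝ), ContDiff ℝ n F → ∀ a b : ℝ,
    ∫ x in a..b, F x * iteratedDeriv n g x =
      (∑ j ∈ Finset.range n, (-1:ℝ)^j *
        (iteratedDeriv j F b * iteratedDeriv (n-1-j) g b -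
         iteratedDeriv j F a * iteratedDeriv (n-1-j) g a)) +
      (-1:ℝ)^n * ∫ x in a..b, iteratedDeriv n F x * g x := by
  intro n
  induction n with
  | zero => intro F _ a b; simp
  | succ n IH =>
    intro F hF a b
    have hgn : ContDiff ℝ (⊤ : ℕ∞) (iteratedDeriv n g) := by
      rw [iteratedDeriv_eq_iterate]
      exact hg.iterate_deriv n
    have hgn1cont : Continuous (iteratedDeriv (n+1) g) := by
      rw [iteratedDeriv_eq_iterate]
      exact (hg.iterate_deriv (n+1)).continuous
    have hFd : Differentiable ℝ F := hF.differentiable (by simp)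
    have hF' : ContDiff ℝ n (deriv F) := by
      have : ContDiff ℝ ((n : WithTop ℕ∞) + 1) F := by exact_mod_cast hF
      exact (contDiff_succ_iff_deriv.mp this).2.2
    have hderivFcont : Continuous (deriv F) := hF.continuous_deriv (by exact_mod_cast Nat.succ_le_succ n.zero_le)
    have step : ∫ x in a..b, F x * iteratedDeriv (n+1) g x =
        F b * iteratedDeriv n g b - F a * iteratedDeriv n g a -
          ∫ x in a..b, deriv F x * iteratedDeriv n g x := by
      apply intervalIntegral.integral_mul_deriv_eq_deriv_mul
        (u := F) (v := iteratedDeriv n g) (u' := deriv F) (v' := iteratedDeriv (n+1) g)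
      · exact fun x _ => (hFd x).hasDerivAt
      · intro x _
        have := ((hgn.differentiable (by simp)) x).hasDerivAt
        rwa [← iteratedDeriv_succ] at this
      · exact hderivFcont.intervalIntegrable a b
      · exact hgn1cont.intervalIntegrable a b
    rw [step, IH (deriv F) hF' a b]
    have hidx : ∀ j, iteratedDeriv j (deriv F) = iteratedDeriv (j+1) F := by
      intro j; rw [iteratedDeriv_succ']
    rw [Finset.sum_range_succ' (fun j => (-1:ℝ)^j *
        (iteratedDeriv j F b * iteratedDeriv (n+1-1-j) g b -
         iteratedDeriv j F a * iteratedDeriv (n+1-1-j) g a)) n]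
    simp only [hidx]
    have hsum : (∑ j ∈ Finset.range n, (-1:ℝ)^(j+1) *
        (iteratedDeriv (j+1) F b * iteratedDeriv (n+1-1-(j+1)) g b -
         iteratedDeriv (j+1) F a * iteratedDeriv (n+1-1-(j+1)) g a)) =
        -∑ j ∈ Finset.range n, (-1:ℝ)^j *
        (iteratedDeriv (j+1) F b * iteratedDeriv (n-1-j) g b -
         iteratedDeriv (j+1) F a * iteratedDeriv (n-1-j) g a) := by
      rw [← Finset.sum_neg_distrib]
      refine Finset.sum_congr rfl fun j hj => ?_
      have h1 : n+1-1-(j+1) = n-1-j := by omega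
      rw [h1]; ring
    rw [hsum]
    simp only [Nat.add_sub_cancel, Nat.sub_zero, pow_zero, one_mul, pow_succ,
      iteratedDeriv_zero]
    ring


/-- **Hermite-coefficient bound (key estimate in Proposition 3.9).**  If the `k`-th derivative
of `f`, integrated against the Gaussian weight `exp(−γ²(x−1)²/2)·γ`, is bounded by
`M·√(k!)/k^{1+3γ²}`, then (by the Rodrigues formula and integration by parts) the Hermite
expansion coefficient `ℒ[f·γ^{−k}H_k(γ(x−1))]` is bounded by `M·√(k!)·k^{−(1+3γ²)}·γ^{−2k}`. -/
theorem stmt_6 (γ : ℝ) (hγ : 1 < γ) (k : ℕ) (hk : 1 ≤ k) (M : ℝ) (hM : 0 ≤ M)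
    (f : ℝ → ℝ) (hf : ContDiff ℝ k f)
    (hint : ∀ j ≤ k, Integrable (fun x : ℝ =>
      iteratedDeriv j f x * Real.exp (-γ ^ 2 * (x - 1) ^ 2 / 2)))
    (hdecay : ∀ j ≤ k - 1,
      Tendsto (fun x : ℝ => iteratedDeriv j f x *
          iteratedDeriv (k - 1 - j) (fun y : ℝ => Real.exp (-γ ^ 2 * (y - 1) ^ 2 / 2)) x)
        atTop (nhds 0) ∧
      Tendsto (fun x : ℝ => iteratedDeriv j f x *
          iteratedDeriv (k - 1 - j) (fun y : ℝ => Real.exp (-γ ^ 2 * (y - 1) ^ 2 / 2)) x)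
        atBot (nhds 0))
    (hint2 : Integrable (fun x : ℝ =>
      f x * (Polynomial.aeval (γ * (x - 1)) (Polynomial.hermite k)) *
        Real.exp (-γ ^ 2 * (x - 1) ^ 2 / 2)))
    (hbound : |∫ x : ℝ, iteratedDeriv k f x * Real.exp (-γ ^ 2 * (x - 1) ^ 2 / 2) * γ| ≤
      M * Real.sqrt (Nat.factorial k) / (k : ℝ) ^ (1 + 3 * γ ^ 2)) :
    |∫ x : ℝ, f x * (γ ^ k)⁻¹ * (Polynomial.aeval (γ * (x - 1)) (Polynomial.hermite k)) *
        Real.exp (-γ ^ 2 * (x - 1) ^ 2 / 2) * γ| ≤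
      M * Real.sqrt (Nat.factorial k) * ((k : ℝ) ^ (1 + 3 * γ ^ 2))⁻¹ * (γ ^ (2 * k))⁻¹ := by
  set g : ℝ → ℝ := fun y : ℝ => Real.exp (-γ ^ 2 * (y - 1) ^ 2 / 2) with hgdef
  have hγ0 : (0:ℝ) < γ := lt_trans one_pos hγ
  have hγk : (γ:ℝ) ^ k ≠ 0 := pow_ne_zero k (ne_of_gt hγ0)
  -- integrability of f * g^(k)
  have hint1 : Integrable (fun x : ℝ => f x * iteratedDeriv k g x) := by
    have heq : (fun x : ℝ => f x * iteratedDeriv k g x) =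
        fun x => ((-1:ℝ)^k * γ^k) * (f x * (Polynomial.aeval (γ * (x - 1)) (Polynomial.hermite k)) *
          Real.exp (-γ ^ 2 * (x - 1) ^ 2 / 2)) := by
      funext x
      rw [hgdef, rodrigues γ k x]
      ring
    rw [heq]
    exact hint2.const_mul _
  have hintk : Integrable (fun x : ℝ => iteratedDeriv k f x * g x) := hint k le_rfl
  -- limits of interval integrals
  have hT1 : Tendsto (fun r : ℝ => ∫ x in (-r)..r, f x * iteratedDeriv k g x) atTop
      (nhds (∫ x : ℝ, f x * iteratedDeriv k g x)) :=
    intervalIntegral_tendsto_integral hint1 tendsto_neg_atTop_atBot tendsto_id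
  have hT2 : Tendsto (fun r : ℝ => ∫ x in (-r)..r, iteratedDeriv k f x * g x) atTop
      (nhds (∫ x : ℝ, iteratedDeriv k f x * g x)) :=
    intervalIntegral_tendsto_integral hintk tendsto_neg_atTop_atBot tendsto_id
  -- boundary sum tends to 0
  have hB : Tendsto (fun r : ℝ => ∑ j ∈ Finset.range k, (-1:ℝ)^j *
      (iteratedDeriv j f r * iteratedDeriv (k-1-j) g r -
       iteratedDeriv j f (-r) * iteratedDeriv (k-1-j) g (-r))) atTop (nhds 0) := by
    have : Tendsto (fun r : ℝ => ∑ j ∈ Finset.range k, (-1:ℝ)^j *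
        (iteratedDeriv j f r * iteratedDeriv (k-1-j) g r -
         iteratedDeriv j f (-r) * iteratedDeriv (k-1-j) g (-r))) atTop
        (nhds (∑ j ∈ Finset.range k, (0:ℝ))) := by
      apply tendsto_finset_sum
      intro j hj
      have hjk : j ≤ k - 1 := Nat.le_sub_one_of_lt (Finset.mem_range.mp hj)
      have h1 := (hdecay j hjk).1
      have h2 := (hdecay j hjk).2.comp tendsto_neg_atTop_atBot
      have h3 := h1.sub h2
      rw [sub_zero] at h3
      have h4 := h3.const_mul ((-1:ℝ)^j)
      rw [mul_zero] at h4
      exact h4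
    simpa using this
  -- IBP identity
  have hident : ∀ r : ℝ, ∫ x in (-r)..r, f x * iteratedDeriv k g x =
      (∑ j ∈ Finset.range k, (-1:ℝ)^j *
        (iteratedDeriv j f r * iteratedDeriv (k-1-j) g r -
         iteratedDeriv j f (-r) * iteratedDeriv (k-1-j) g (-r))) +
      (-1:ℝ)^k * ∫ x in (-r)..r, iteratedDeriv k f x * g x := fun r =>
    ibp_iter g (gaussCD γ) k f hf (-r) r
  -- key equality
  have hkey : (∫ x : ℝ, f x * iteratedDeriv k g x) =
      (-1:ℝ)^k * ∫ x : ℝ, iteratedDeriv k f x * g x := by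
    have hT3 : Tendsto (fun r : ℝ => ∫ x in (-r)..r, f x * iteratedDeriv k g x) atTop
        (nhds (0 + (-1:ℝ)^k * ∫ x : ℝ, iteratedDeriv k f x * g x)) := by
      simp only [hident]
      exact hB.add (hT2.const_mul _)
    rw [zero_add] at hT3
    exact tendsto_nhds_unique hT1 hT3
  -- rewrite the target integral
  have htarget : (∫ x : ℝ, f x * (γ ^ k)⁻¹ * (Polynomial.aeval (γ * (x - 1)) (Polynomial.hermite k)) *
        Real.exp (-γ ^ 2 * (x - 1) ^ 2 / 2) * γ) =
      ((γ ^ (2*k))⁻¹) * ∫ x : ℝ, iteratedDeriv k f x * Real.exp (-γ ^ 2 * (x - 1) ^ 2 / 2) * γ := by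
    have heq : (fun x : ℝ => f x * (γ ^ k)⁻¹ * (Polynomial.aeval (γ * (x - 1)) (Polynomial.hermite k)) *
        Real.exp (-γ ^ 2 * (x - 1) ^ 2 / 2) * γ) =
        fun x => ((-1:ℝ)^k * (γ ^ k)⁻¹ * (γ ^ k)⁻¹ * γ) * (f x * iteratedDeriv k g x) := by
      funext x
      rw [hgdef, rodrigues γ k x]
      have hsign : (-1:ℝ)^k * ((-1:ℝ)^k) = 1 := by
        rw [← pow_add]
        exact Even.neg_one_pow ⟨k, by ring⟩
      have h2 : (γ^k)⁻¹ * γ^k = 1 := inv_mul_cancel₀ hγk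
      calc f x * (γ ^ k)⁻¹ * ((Polynomial.aeval (γ * (x - 1))) (Polynomial.hermite k)) *
            Real.exp (-γ ^ 2 * (x - 1) ^ 2 / 2) * γ
          = ((-1:ℝ)^k * (-1:ℝ)^k) * ((γ^k)⁻¹ * γ^k) *
            (f x * (γ ^ k)⁻¹ * ((Polynomial.aeval (γ * (x - 1))) (Polynomial.hermite k)) *
              Real.exp (-γ ^ 2 * (x - 1) ^ 2 / 2) * γ) := by rw [hsign, h2]; ring
        _ = _ := by ring
    rw [heq, integral_const_mul, hkey]
    rw [integral_mul_const]
    have : (-1:ℝ)^k * (γ ^ k)⁻¹ * (γ ^ k)⁻¹ * γ * ((-1:ℝ)^k * ∫ x : ℝ, iteratedDeriv k f x * g x) =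
        ((γ ^ (2*k))⁻¹) * ((∫ x : ℝ, iteratedDeriv k f x * g x) * γ) := by
      have hsign : (-1:ℝ)^k * ((-1:ℝ)^k) = 1 := by
        rw [← pow_add]; exact Even.neg_one_pow ⟨k, by ring⟩
      have h2k : (γ ^ (2*k))⁻¹ = (γ ^ k)⁻¹ * (γ ^ k)⁻¹ := by
        rw [two_mul, pow_add, mul_inv]
      calc (-1:ℝ)^k * (γ ^ k)⁻¹ * (γ ^ k)⁻¹ * γ * ((-1:ℝ)^k * ∫ x : ℝ, iteratedDeriv k f x * g x)
          = ((-1:ℝ)^k * (-1:ℝ)^k) * ((γ ^ k)⁻¹ * (γ ^ k)⁻¹ *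
              ((∫ x : ℝ, iteratedDeriv k f x * g x) * γ)) := by ring
        _ = _ := by rw [hsign, ← h2k]; ring
    rw [this]
  rw [htarget, abs_mul]
  have habs : |((γ:ℝ) ^ (2*k))⁻¹| = (γ ^ (2*k))⁻¹ :=
    abs_of_pos (inv_pos.mpr (pow_pos hγ0 _))
  rw [habs]
  calc (γ ^ (2*k))⁻¹ * |∫ x : ℝ, iteratedDeriv k f x * Real.exp (-γ ^ 2 * (x - 1) ^ 2 / 2) * γ|
      ≤ (γ ^ (2*k))⁻¹ * (M * Real.sqrt (Nat.factorial k) / (k : ℝ) ^ (1 + 3 * γ ^ 2)) := by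
        apply mul_le_mul_of_nonneg_left hbound
        exact le_of_lt (inv_pos.mpr (pow_pos hγ0 _))
    _ = M * Real.sqrt (Nat.factorial k) * ((k : ℝ) ^ (1 + 3 * γ ^ 2))⁻¹ * (γ ^ (2 * k))⁻¹ := by
        rw [div_eq_mul_inv]; ring
end

section
/- Let n ≥ 1, let θ_1, …, θ_n and φ_1, …, φ_n be real numbers with sin θ_i ≠ 0 for all i, and let P_0, …, P_n and Q_0, …, Q_n be complex polynomials with deg P_i = deg Q_i = i, satisfying for all 1 ≤ i ≤ n the recurrences P_i(z) = e^{iφ_i}·cos θ_i·z·P_{i−1}(z) + e^{iφ_i}·sin θ_i·Q_{i−1}(z) and Q_i(z) = sin θ_i·z·P_{i−1}(z) − cos θ_i·Q_{i−1}(z). Suppose r > 0 is such that every root of P_n has modulus strictly less than r and every root of Q_n has modulus strictly greater than r. Then there exist complex numbers χ_0, …, χ_n such that for all 0 ≤ i, j ≤ n: the contour integral over the positively oriented circle of radius r centered at 0 of the function z ↦ z^{n−i−1}·Q_i(z)·P_j(z)/(P_n(z)·Q_n(z)) equals χ_i if i = j and equals 0 if i ≠ j. -/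
open Polynomial Metric Set Complex Filter

lemma circleIntegral_add' {f g : ℂ → ℂ} {c : ℂ} {R : ℝ} (hf : CircleIntegrable f c R)
    (hg : CircleIntegrable g c R) :
    (∮ z in C(c, R), (f z + g z)) = (∮ z in C(c, R), f z) + ∮ z in C(c, R), g z := by
  simp only [circleIntegral, smul_add, intervalIntegral.integral_add hf.out hg.out]

lemma poly_lower_bound (p : Polynomial ℂ) (hp : p ≠ 0) :
    ∃ R1 : ℝ, 1 ≤ R1 ∧ ∀ z : ℂ, R1 ≤ ‖z‖ →
      ‖p.leadingCoeff‖ / 2 * ‖z‖ ^ p.natDegree ≤ ‖p.eval z‖ := by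
  set d := p.natDegree with hd
  set a := ‖p.leadingCoeff‖ with haa
  have ha : 0 < a := by
    simpa [haa] using (Polynomial.leadingCoeff_ne_zero.mpr hp)
  set B : ℝ := ∑ k ∈ Finset.range d, ‖p.coeff k‖ with hB
  have hBnn : 0 ≤ B := Finset.sum_nonneg fun k _ => norm_nonneg _
  refine ⟨max 1 (2 * B / a + 1), le_max_left _ _, ?_⟩
  intro z hz
  have h1 : (1 : ℝ) ≤ ‖z‖ := le_trans (le_max_left _ _) hz
  have hz0 : (0:ℝ) < ‖z‖ := lt_of_lt_of_le one_pos h1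
  have h2 : 2 * B / a + 1 ≤ ‖z‖ := le_trans (le_max_right _ _) hz
  have heval : p.eval z = (∑ k ∈ Finset.range d, p.coeff k * z ^ k) + p.leadingCoeff * z ^ d := by
    conv_lhs => rw [Polynomial.eval_eq_sum_range, Finset.sum_range_succ]
    rw [Polynomial.coeff_natDegree]
  have htail : ‖∑ k ∈ Finset.range d, p.coeff k * z ^ k‖ ≤ B / ‖z‖ * ‖z‖ ^ d := by
    calc ‖∑ k ∈ Finset.range d, p.coeff k * z ^ k‖
        ≤ ∑ k ∈ Finset.range d, ‖p.coeff k * z ^ k‖ := norm_sum_le _ _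
      _ ≤ ∑ k ∈ Finset.range d, ‖p.coeff k‖ * (‖z‖ ^ d / ‖z‖) := by
          refine Finset.sum_le_sum fun k hk => ?_
          rw [norm_mul, norm_pow]
          refine mul_le_mul_of_nonneg_left ?_ (norm_nonneg _)
          rw [le_div_iff₀ hz0, ← pow_succ]
          exact pow_le_pow_right₀ h1 (Finset.mem_range.mp hk)
      _ = B / ‖z‖ * ‖z‖ ^ d := by rw [← Finset.sum_mul]; ring
  have hBz : B / ‖z‖ ≤ a / 2 := by
    rw [div_le_div_iff₀ hz0 two_pos]
    have : 2 * B / a ≤ ‖z‖ - 1 := by linarith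
    have := (div_le_iff₀ ha).mp this
    nlinarith
  have hmain : a * ‖z‖ ^ d - B / ‖z‖ * ‖z‖ ^ d ≤ ‖p.eval z‖ := by
    have := norm_sub_norm_le (p.leadingCoeff * z ^ d)
      (-(∑ k ∈ Finset.range d, p.coeff k * z ^ k))
    rw [norm_neg, sub_neg_eq_add] at this
    calc a * ‖z‖ ^ d - B / ‖z‖ * ‖z‖ ^ d
        ≤ ‖p.leadingCoeff * z ^ d‖ - ‖∑ k ∈ Finset.range d, p.coeff k * z ^ k‖ := by
          rw [norm_mul, norm_pow]; exact sub_le_sub le_rfl htail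
      _ ≤ ‖p.leadingCoeff * z ^ d + ∑ k ∈ Finset.range d, p.coeff k * z ^ k‖ := this
      _ = ‖p.eval z‖ := by rw [heval, add_comm]
  have hpd : (0:ℝ) ≤ ‖z‖ ^ d := pow_nonneg (norm_nonneg _) _
  nlinarith [mul_le_mul_of_nonneg_right hBz hpd]

lemma lemA (q : Polynomial ℂ) {r : ℝ} (hr : 0 < r)
    (hq : ∀ z ∈ closedBall (0:ℂ) r, q.eval z ≠ 0) (m : ℕ) :
    (∮ z in C(0, r), z ^ m / q.eval z) = 0 := by
  have hdiff : ∀ z ∈ closedBall (0:ℂ) r, DifferentiableAt ℂ (fun z : ℂ => z ^ m / q.eval z) z := by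
    intro z hz
    exact (differentiableAt_pow m).div (q.differentiable.differentiableAt) (hq z hz)
  refine Complex.circleIntegral_eq_zero_of_differentiable_on_off_countable hr.le
    Set.countable_empty (fun z hz => (hdiff z hz).continuousAt.continuousWithinAt) ?_
  intro z hz
  exact hdiff z (ball_subset_closedBall hz.1)

lemma lemB (p : Polynomial ℂ) {r : ℝ} (hr : 0 < r)
    (hroots : ∀ z : ℂ, p.eval z = 0 → ‖z‖ < r)
    (hp : p ≠ 0) (m : ℤ) (hm : m + 2 ≤ (p.natDegree : ℤ)) :
    (∮ z in C(0, r), z ^ m / p.eval z) = 0 := by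
  set f : ℂ → ℂ := fun z => z ^ m / p.eval z with hf
  have hne : ∀ z : ℂ, r ≤ ‖z‖ → p.eval z ≠ 0 := by
    intro z hz h
    exact absurd (hroots z h) (not_lt.2 (by simpa using hz))
  have hdiff : ∀ z : ℂ, r ≤ ‖z‖ → DifferentiableAt ℂ f z := by
    intro z hz
    have hz0 : z ≠ 0 := by
      intro h; rw [h] at hz; simp at hz; linarith
    exact (differentiableAt_zpow.mpr (Or.inl hz0)).div (p.differentiable.differentiableAt)
      (hne z hz)
  have heq : ∀ R : ℝ, r ≤ R → (∮ z in C(0, R), f z) = ∮ z in C(0, r), f z := by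
    intro R hR
    refine Complex.circleIntegral_eq_of_differentiable_on_annulus_off_countable hr hR
      Set.countable_empty ?_ ?_
    · intro z hz
      have : r ≤ ‖z‖ := by
        have := hz.2
        simp only [mem_ball, Complex.dist_eq, sub_zero, not_lt] at this
        simpa using this
      exact (hdiff z this).continuousAt.continuousWithinAt
    · intro z hz
      have := hz.1.2
      simp only [mem_closedBall, Complex.dist_eq, sub_zero, not_le] at this
      exact hdiff z (by simpa using this.le)
  obtain ⟨R1, hR11, hbound⟩ := poly_lower_bound p hp
  set a := ‖p.leadingCoeff‖ with haa
  have ha : 0 < a := by simpa [haa] using (Polynomial.leadingCoeff_ne_zero.mpr hp)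
  set d := p.natDegree with hd
  have key : ∀ R : ℝ, max r R1 ≤ R →
      ‖∮ z in C(0, r), f z‖ ≤ 2 * Real.pi * (2 / a) * R⁻¹ := by
    intro R hR
    have hrR : r ≤ R := le_trans (le_max_left _ _) hR
    have hR1R : R1 ≤ R := le_trans (le_max_right _ _) hR
    have h1R : (1:ℝ) ≤ R := le_trans hR11 hR1R
    have hR0 : (0:ℝ) < R := lt_of_lt_of_le one_pos h1R
    rw [← heq R hrR]
    have hCb : ∀ z ∈ sphere (0:ℂ) R, ‖f z‖ ≤ (2 / a) * R ^ (m - d : ℤ) := by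
      intro z hz
      have hzn : ‖z‖ = R := by
        simpa [Complex.dist_eq] using hz
      have hlow : a / 2 * R ^ d ≤ ‖p.eval z‖ := by
        have := hbound z (by rw [hzn]; exact hR1R)
        rwa [hzn] at this
      have hposd : (0:ℝ) < a / 2 * R ^ d := by positivity
      have hfz : ‖f z‖ = R ^ (m:ℤ) / ‖p.eval z‖ := by
        rw [hf]; rw [norm_div, norm_zpow, hzn]
      rw [hfz]
      calc (R:ℝ) ^ (m:ℤ) / ‖p.eval z‖ ≤ R ^ (m:ℤ) / (a / 2 * R ^ d) := by
            apply div_le_div_of_nonneg_left _ hposd hlow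
            positivity
        _ = (2 / a) * R ^ (m - d : ℤ) := by
            rw [zpow_sub₀ (ne_of_gt hR0)]
            rw [zpow_natCast]
            field_simp
    have hb2 : ∀ z ∈ sphere (0:ℂ) R, ‖f z‖ ≤ (2 / a) * R ^ (-2 : ℤ) := by
      intro z hz
      refine le_trans (hCb z hz) ?_
      have h2 : (m - d : ℤ) ≤ -2 := by omega
      exact mul_le_mul_of_nonneg_left (zpow_le_zpow_right₀ h1R h2) (by positivity)
    have := circleIntegral.norm_integral_le_of_norm_le_const hR0.le hb2
    refine le_trans this (le_of_eq ?_)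
    rw [show ((-2:ℤ)) = -1 + -1 by ring, zpow_add₀ (ne_of_gt hR0), zpow_neg_one]
    field_simp
  have htend : Tendsto (fun R : ℝ => 2 * Real.pi * (2 / a) * R⁻¹) atTop (nhds 0) := by
    simpa using tendsto_inv_atTop_zero.const_mul (2 * Real.pi * (2 / a))
  have hev : ∀ᶠ R in atTop, ‖∮ z in C(0, r), f z‖ ≤ 2 * Real.pi * (2 / a) * R⁻¹ :=
    eventually_atTop.mpr ⟨max r R1, fun R hR => key R hR⟩
  exact norm_le_zero_iff.mp (ge_of_tendsto htend hev)

/-- **Proposition 4.1 (biorthogonality of generalized-QSP sequences).** -/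
theorem stmt_9 (n : ℕ) (hn : 1 ≤ n) (θ φ : ℕ → ℝ)
    (hθ : ∀ i, 1 ≤ i → i ≤ n → Real.sin (θ i) ≠ 0)
    (P Q : ℕ → Polynomial ℂ)
    (hdeg : ∀ i ≤ n, (P i).degree = (i : ℕ) ∧ (Q i).degree = (i : ℕ))
    (hrecP : ∀ i, 1 ≤ i → i ≤ n →
      P i = C (Complex.exp ((φ i : ℂ) * Complex.I) * (Real.cos (θ i) : ℂ)) * (X * P (i - 1))
          + C (Complex.exp ((φ i : ℂ) * Complex.I) * (Real.sin (θ i) : ℂ)) * Q (i - 1))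
    (hrecQ : ∀ i, 1 ≤ i → i ≤ n →
      Q i = C ((Real.sin (θ i) : ℂ)) * (X * P (i - 1)) - C ((Real.cos (θ i) : ℂ)) * Q (i - 1))
    (r : ℝ) (hr : 0 < r)
    (hProots : ∀ z : ℂ, (P n).eval z = 0 → ‖z‖ < r)
    (hQroots : ∀ z : ℂ, (Q n).eval z = 0 → r < ‖z‖) :
    ∃ χ : ℕ → ℂ, ∀ i ≤ n, ∀ j ≤ n,
      circleIntegral (fun z : ℂ =>
          z ^ ((n : ℤ) - (i : ℤ) - 1) * (Q i).eval z * (P j).eval z /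
            ((P n).eval z * (Q n).eval z)) 0 r =
        if i = j then χ i else 0 := by
  classical
  have habs : ∀ z : ℂ, z ∈ sphere (0:ℂ) r → ‖z‖ = r := by
    intro z hz; simpa [Complex.dist_eq] using hz
  have hPno : ∀ z ∈ sphere (0:ℂ) r, (P n).eval z ≠ 0 := by
    intro z hz h
    have := hProots z h; rw [habs z hz] at this; exact lt_irrefl r this
  have hQno : ∀ z ∈ sphere (0:ℂ) r, (Q n).eval z ≠ 0 := by
    intro z hz h
    have := hQroots z h; rw [habs z hz] at this; exact lt_irrefl r this
  have hzno : ∀ z ∈ sphere (0:ℂ) r, z ≠ 0 := by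
    intro z hz h
    have := habs z hz; rw [h] at this; simp at this; exact absurd this.symm (ne_of_gt hr)
  have hQcb : ∀ z ∈ closedBall (0:ℂ) r, (Q n).eval z ≠ 0 := by
    intro z hz h
    have h1 := hQroots z h
    have h2 : ‖z‖ ≤ r := by simpa [Complex.dist_eq] using hz
    linarith
  have hPne : P n ≠ 0 := by
    intro h
    have := (hdeg n le_rfl).1
    rw [h, degree_zero] at this
    simp at this
  have hPdeg : (P n).natDegree = n := natDegree_eq_of_degree_eq_some (hdeg n le_rfl).1
  set D : ℂ → ℂ := fun z => (P n).eval z * (Q n).eval z with hDdef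
  have hDno : ∀ z ∈ sphere (0:ℂ) r, D z ≠ 0 := fun z hz =>
    mul_ne_zero (hPno z hz) (hQno z hz)
  set J : ℤ → Polynomial ℂ → ℂ := fun m f => ∮ z in C(0, r), z ^ m * f.eval z / D z with hJdef
  have hcont : ∀ (m : ℤ) (f : Polynomial ℂ),
      ContinuousOn (fun z : ℂ => z ^ m * f.eval z / D z) (sphere (0:ℂ) r) := by
    intro m f z hz
    refine ContinuousAt.continuousWithinAt ?_
    refine ContinuousAt.div ?_ ?_ (hDno z hz)
    · exact ((differentiableAt_zpow.mpr (Or.inl (hzno z hz))).continuousAt).mul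
        (f.continuous_aeval.continuousAt)
    · rw [hDdef]
      exact ((P n).continuous_aeval.continuousAt).mul ((Q n).continuous_aeval.continuousAt)
  have hci : ∀ (m : ℤ) (f : Polynomial ℂ),
      CircleIntegrable (fun z : ℂ => z ^ m * f.eval z / D z) 0 r :=
    fun m f => (hcont m f).circleIntegrable hr.le
  have Jadd : ∀ (m : ℤ) (f g : Polynomial ℂ), J m (f + g) = J m f + J m g := by
    intro m f g
    simp only [hJdef]
    have h₁ : (fun z : ℂ => z ^ m * (f + g).eval z / D z)
        = fun z : ℂ => z ^ m * f.eval z / D z + z ^ m * g.eval z / D z := by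
      funext z; rw [eval_add]; ring
    rw [h₁]
    exact circleIntegral_add' (hci m f) (hci m g)
  have Jsub : ∀ (m : ℤ) (f g : Polynomial ℂ), J m (f - g) = J m f - J m g := by
    intro m f g
    simp only [hJdef]
    have h₁ : (fun z : ℂ => z ^ m * (f - g).eval z / D z)
        = fun z : ℂ => z ^ m * f.eval z / D z - z ^ m * g.eval z / D z := by
      funext z; rw [eval_sub]; ring
    rw [h₁]
    exact circleIntegral.integral_sub (hci m f) (hci m g)
  have Jsmul : ∀ (m : ℤ) (a : ℂ) (f : Polynomial ℂ), J m (C a * f) = a * J m f := by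
    intro m a f
    simp only [hJdef]
    have h₁ : (fun z : ℂ => z ^ m * (C a * f).eval z / D z)
        = fun z : ℂ => a • (z ^ m * f.eval z / D z) := by
      funext z; rw [eval_mul, eval_C, smul_eq_mul]; ring
    rw [h₁, circleIntegral.integral_smul, smul_eq_mul]
  have JX : ∀ (m : ℤ) (f : Polynomial ℂ), J m (X * f) = J (m + 1) f := by
    intro m f
    simp only [hJdef]
    refine circleIntegral.integral_congr hr.le fun z hz => ?_
    have hz' : z ≠ 0 := hzno z hz
    show z ^ m * (X * f).eval z / D z = z ^ (m + 1) * f.eval z / D z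
    rw [eval_mul, eval_X, zpow_add_one₀ hz']
    ring
  have Jzero : ∀ m : ℤ, J m 0 = 0 := by
    intro m
    simp only [hJdef]
    have h₁ : (fun z : ℂ => z ^ m * (0 : Polynomial ℂ).eval z / D z) = fun _ : ℂ => (0:ℂ) := by
      funext z; simp
    rw [h₁]
    simp [circleIntegral]
  have JXpow : ∀ (k : ℕ) (m : ℤ) (f : Polynomial ℂ), J m (X ^ k * f) = J (m + k) f := by
    intro k
    induction k with
    | zero => intro m f; simp only [pow_zero, one_mul, Nat.cast_zero, add_zero]
    | succ k ihk =>
      intro m f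
      have h₁ : (X : Polynomial ℂ) ^ (k + 1) * f = X ^ k * (X * f) := by ring
      rw [h₁, ihk, JX]
      congr 1
      push_cast
      ring
  have Jsum : ∀ (m : ℤ) (s : Finset ℕ) (F : ℕ → Polynomial ℂ),
      J m (∑ k ∈ s, F k) = ∑ k ∈ s, J m (F k) := by
    intro m s F
    induction s using Finset.cons_induction with
    | empty => simpa using Jzero m
    | cons k s hk ih => rw [Finset.sum_cons, Finset.sum_cons, Jadd, ih]
  have Jexpand : ∀ (m : ℤ) (p f : Polynomial ℂ),
      J m (p * f) = ∑ k ∈ Finset.range (p.natDegree + 1), p.coeff k * J (m + k) f := by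
    intro m p f
    conv_lhs => rw [p.as_sum_range_C_mul_X_pow]
    rw [Finset.sum_mul, Jsum]
    refine Finset.sum_congr rfl fun k hk => ?_
    rw [mul_assoc, Jsmul, JXpow]
  -- base cases
  have baseP : ∀ m : ℤ, 0 ≤ m → J m (P n) = 0 := by
    intro m hm
    have h₁ : J m (P n) = ∮ z in C(0, r), z ^ m.toNat / (Q n).eval z := by
      simp only [hJdef]
      refine circleIntegral.integral_congr hr.le fun z hz => ?_
      show z ^ m * (P n).eval z / D z = z ^ m.toNat / (Q n).eval z
      have hzm : z ^ m = z ^ m.toNat := by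
        conv_lhs => rw [← Int.toNat_of_nonneg hm]
        exact zpow_natCast z m.toNat
      rw [hzm, hDdef]
      rw [div_eq_div_iff (mul_ne_zero (hPno z hz) (hQno z hz)) (hQno z hz)]
      ring
    rw [h₁]
    exact lemA (Q n) hr hQcb m.toNat
  have baseQ : ∀ m : ℤ, m ≤ (n:ℤ) - 2 → J m (Q n) = 0 := by
    intro m hm
    have h₁ : J m (Q n) = ∮ z in C(0, r), z ^ m / (P n).eval z := by
      simp only [hJdef]
      refine circleIntegral.integral_congr hr.le fun z hz => ?_
      show z ^ m * (Q n).eval z / D z = z ^ m / (P n).eval z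
      rw [hDdef]
      rw [div_eq_div_iff (mul_ne_zero (hPno z hz) (hQno z hz)) (hPno z hz)]
      ring
    rw [h₁]
    refine lemB (P n) hr hProots hPne m ?_
    rw [hPdeg]; omega
  -- rearranged recurrences
  have hrec1 : ∀ i, 1 ≤ i → i ≤ n →
      C (Complex.exp ((φ i : ℂ) * Complex.I)) * (X * P (i - 1))
        = C ((Real.cos (θ i) : ℂ)) * P i
          + C (Complex.exp ((φ i : ℂ) * Complex.I) * (Real.sin (θ i) : ℂ)) * Q i := by
    intro i h1 h2
    set e := Complex.exp ((φ i : ℂ) * Complex.I) with hedef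
    set c := ((Real.cos (θ i) : ℂ)) with hcdef
    set s := ((Real.sin (θ i) : ℂ)) with hsdef
    have hcs : c * c + s * s = 1 := by
      have hR : Real.cos (θ i) * Real.cos (θ i) + Real.sin (θ i) * Real.sin (θ i) = 1 := by
        nlinarith [Real.sin_sq_add_cos_sq (θ i)]
      rw [hcdef, hsdef]
      exact_mod_cast congrArg (Complex.ofReal) hR
    have coeff1 : C c * C (e * c) + C (e * s) * C s = C e := by
      rw [← C_mul, ← C_mul, ← C_add]
      congr 1
      linear_combination e * hcs
    rw [hrecP i h1 h2, hrecQ i h1 h2]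
    linear_combination (-(X * P (i - 1))) * coeff1
  have hrec2 : ∀ i, 1 ≤ i → i ≤ n →
      C (Complex.exp ((φ i : ℂ) * Complex.I)) * Q (i - 1)
        = C ((Real.sin (θ i) : ℂ)) * P i
          - C (Complex.exp ((φ i : ℂ) * Complex.I) * (Real.cos (θ i) : ℂ)) * Q i := by
    intro i h1 h2
    set e := Complex.exp ((φ i : ℂ) * Complex.I) with hedef
    set c := ((Real.cos (θ i) : ℂ)) with hcdef
    set s := ((Real.sin (θ i) : ℂ)) with hsdef
    have hcs : c * c + s * s = 1 := by
      have hR : Real.cos (θ i) * Real.cos (θ i) + Real.sin (θ i) * Real.sin (θ i) = 1 := by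
        nlinarith [Real.sin_sq_add_cos_sq (θ i)]
      rw [hcdef, hsdef]
      exact_mod_cast congrArg (Complex.ofReal) hR
    have coeff2 : C s * C (e * s) + C (e * c) * C c = C e := by
      rw [← C_mul, ← C_mul, ← C_add]
      congr 1
      linear_combination e * hcs
    rw [hrecP i h1 h2, hrecQ i h1 h2]
    linear_combination (-(Q (i - 1))) * coeff2
  -- main induction
  have main : ∀ d : ℕ, d ≤ n →
      (∀ m : ℤ, (n:ℤ) - ((n - d : ℕ) : ℤ) ≤ m → m ≤ (n:ℤ) - 1 → J m (P (n - d)) = 0) ∧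
      (∀ m : ℤ, (n:ℤ) - ((n - d : ℕ) : ℤ) - 1 ≤ m → m ≤ (n:ℤ) - 2 → J m (Q (n - d)) = 0) := by
    intro d
    induction d with
    | zero =>
      intro _
      constructor
      · intro m hm1 _
        exact baseP m (by omega)
      · intro m _ hm2
        exact baseQ m hm2
    | succ k ih =>
      intro hk
      have hk' : k ≤ n := Nat.le_of_succ_le hk
      obtain ⟨ihP, ihQ⟩ := ih hk'
      have hi1 : 1 ≤ n - k := by omega
      have hin : n - k ≤ n := by omega
      have hisub : n - (k + 1) = (n - k) - 1 := by omega
      have he : Complex.exp ((φ (n - k) : ℂ) * Complex.I) ≠ 0 := Complex.exp_ne_zero _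
      constructor
      · intro m hm1 hm2
        have h0 : J (m - 1) (P (n - k)) = 0 := ihP (m - 1) (by omega) (by omega)
        have h1 : J (m - 1) (Q (n - k)) = 0 := ihQ (m - 1) (by omega) (by omega)
        have hA := congrArg (fun p => J (m - 1) p) (hrec1 (n - k) hi1 hin)
        rw [Jsmul, Jadd, Jsmul, Jsmul, JX, h0, h1, mul_zero, mul_zero, add_zero] at hA
        have hm' : m - 1 + 1 = m := by ring
        rw [hm'] at hA
        rw [hisub]
        rcases mul_eq_zero.mp hA with h | h
        · exact absurd h he
        · exact h
      · intro m hm1 hm2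
        have h0 : J m (P (n - k)) = 0 := ihP m (by omega) (by omega)
        have h1 : J m (Q (n - k)) = 0 := ihQ m (by omega) (by omega)
        have hA := congrArg (fun p => J m p) (hrec2 (n - k) hi1 hin)
        rw [Jsmul, Jsub, Jsmul, Jsmul, h0, h1, mul_zero, mul_zero, sub_zero] at hA
        rw [hisub]
        rcases mul_eq_zero.mp hA with h | h
        · exact absurd h he
        · exact h
  -- conclusion
  have hfuneq : ∀ i j : ℕ,
      (fun z : ℂ => z ^ ((n : ℤ) - (i : ℤ) - 1) * (Q i).eval z * (P j).eval z / D z)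
        = fun z : ℂ => z ^ ((n : ℤ) - (i : ℤ) - 1) * (Q i * P j).eval z / D z := by
    intro i j
    funext z
    rw [eval_mul]
    ring
  refine ⟨fun i => J ((n : ℤ) - (i : ℤ) - 1) (Q i * P i), ?_⟩
  intro i hi j hj
  have hQi : (Q i).natDegree = i := natDegree_eq_of_degree_eq_some (hdeg i hi).2
  have hPj : (P j).natDegree = j := natDegree_eq_of_degree_eq_some (hdeg j hj).1
  rw [hfuneq i j]
  have hJgoal : circleIntegral
      (fun z : ℂ => z ^ ((n : ℤ) - (i : ℤ) - 1) * (Q i * P j).eval z / D z) 0 r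
      = J ((n : ℤ) - (i : ℤ) - 1) (Q i * P j) := by rw [hJdef]
  rw [hJgoal]
  by_cases hij : i = j
  · subst hij; simp
  · rw [if_neg hij]
    rcases Nat.lt_or_ge i j with hlt | hge
    · rw [Jexpand]
      refine Finset.sum_eq_zero fun k hk => ?_
      have hkm := Finset.mem_range.mp hk
      rw [hQi] at hkm
      have hmain := (main (n - j) (by omega)).1
      have hnj : n - (n - j) = j := by omega
      rw [hnj] at hmain
      rw [hmain ((n : ℤ) - (i : ℤ) - 1 + k) (by omega) (by omega), mul_zero]
    · have hgt : j < i := by omega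
      rw [mul_comm (Q i) (P j), Jexpand]
      refine Finset.sum_eq_zero fun k hk => ?_
      have hkm := Finset.mem_range.mp hk
      rw [hPj] at hkm
      have hmain := (main (n - i) (by omega)).2
      have hni : n - (n - i) = i := by omega
      rw [hni] at hmain
      rw [hmain ((n : ℤ) - (i : ℤ) - 1 + k) (by omega) (by omega), mul_zero]
end

section
/- Let c : ℤ → ℂ and let L be the unique ℂ-linear functional on Laurent polynomials with L(z^k) = c_k for every k ∈ ℤ. Let n ≥ 1, let P_0, …, P_n and Q_0, …, Q_n be complex polynomials with deg P_i = deg Q_i = i, and let χ_0, …, χ_n be nonzero complex numbers such that for all 0 ≤ i, j ≤ n: L(z^{−i}·Q_i(z)·P_j(z)) = χ_i if i = j and = 0 if i ≠ j. Then for every 1 ≤ i ≤ n there exist complex numbers ζ_i, β_i, γ_i, δ_i such that P_i(z) = ζ_i·z·P_{i−1}(z) + β_i·Q_{i−1}(z) and Q_i(z) = γ_i·z·P_{i−1}(z) + δ_i·Q_{i−1}(z). -/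
open Polynomial

open Finset

namespace Stmt11Aux

lemma L_C_mul (L : LaurentPolynomial ℂ →ₗ[ℂ] ℂ) (a : ℂ) (w : LaurentPolynomial ℂ) :
    L (LaurentPolynomial.C a * w) = a * L w := by
  have h : LaurentPolynomial.C a * w = a • w := by
    rw [Algebra.smul_def, LaurentPolynomial.algebraMap_apply]
    simp
  rw [h, map_smul, smul_eq_mul]

lemma L_Cmul (L : LaurentPolynomial ℂ →ₗ[ℂ] ℂ) (w : LaurentPolynomial ℂ) (a : ℂ)
    (f : ℂ[X]) : L (w * (Polynomial.C a * f).toLaurent) = a * L (w * f.toLaurent) := by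
  rw [show (Polynomial.C a * f).toLaurent = LaurentPolynomial.C a * f.toLaurent by
      rw [map_mul, Polynomial.toLaurent_C],
    show w * (LaurentPolynomial.C a * f.toLaurent) =
      LaurentPolynomial.C a * (w * f.toLaurent) by ring, L_C_mul]

lemma L_add (L : LaurentPolynomial ℂ →ₗ[ℂ] ℂ) (w : LaurentPolynomial ℂ) (f g : ℂ[X]) :
    L (w * (f + g).toLaurent) = L (w * f.toLaurent) + L (w * g.toLaurent) := by
  rw [map_add, mul_add, map_add]

lemma L_sub (L : LaurentPolynomial ℂ →ₗ[ℂ] ℂ) (w : LaurentPolynomial ℂ) (f g : ℂ[X]) :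
    L (w * (f - g).toLaurent) = L (w * f.toLaurent) - L (w * g.toLaurent) := by
  rw [map_sub, mul_sub, map_sub]

lemma expand (L : LaurentPolynomial ℂ →ₗ[ℂ] ℂ) (g : ℂ[X]) (s : ℕ) (hg : g.natDegree ≤ s)
    (u : LaurentPolynomial ℂ) :
    L (LaurentPolynomial.T (-(s : ℤ)) * g.toLaurent * u)
      = ∑ e ∈ Finset.range (s + 1),
          g.coeff (s - e) * L (LaurentPolynomial.T (-(e : ℤ)) * u) := by
  have key : L (LaurentPolynomial.T (-(s : ℤ)) * g.toLaurent * u)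
      = ∑ m ∈ Finset.range (s + 1),
          g.coeff m * L (LaurentPolynomial.T (-((s - m : ℕ) : ℤ)) * u) := by
    conv_lhs => rw [g.as_sum_range' (s + 1) (Nat.lt_succ_of_le hg)]
    rw [map_sum, Finset.mul_sum, Finset.sum_mul, map_sum]
    refine Finset.sum_congr rfl fun m hm => ?_
    have hm' : m ≤ s := Nat.lt_succ_iff.mp (Finset.mem_range.mp hm)
    rw [Polynomial.toLaurent_C_mul_T]
    have h1 : LaurentPolynomial.T (-(s : ℤ)) *
        (LaurentPolynomial.C (g.coeff m) * LaurentPolynomial.T (m : ℤ)) * u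
        = LaurentPolynomial.C (g.coeff m) *
          (LaurentPolynomial.T (-((s - m : ℕ) : ℤ)) * u) := by
      rw [show (-((s - m : ℕ) : ℤ)) = -(s : ℤ) + (m : ℤ) by push_cast; omega,
        LaurentPolynomial.T_add]
      ring
    rw [h1, L_C_mul]
  rw [key, ← Finset.sum_range_reflect (fun e => g.coeff (s - e) *
      L (LaurentPolynomial.T (-(e : ℤ)) * u)) (s + 1)]
  refine Finset.sum_congr rfl fun m hm => ?_
  have hm' : m ≤ s := Nat.lt_succ_iff.mp (Finset.mem_range.mp hm)
  have e1 : s + 1 - 1 - m = s - m := by omega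
  rw [e1, Nat.sub_sub_self hm']

variable (L : LaurentPolynomial ℂ →ₗ[ℂ] ℂ) (n : ℕ) (P Q : ℕ → Polynomial ℂ) (χ : ℕ → ℂ)

lemma coeff_self_ne (f : ℂ[X]) (j : ℕ) (h : f.degree = (j : ℕ)) : f.coeff j ≠ 0 := by
  have h1 : f.natDegree = j := natDegree_eq_of_degree_eq_some h
  have h2 : f ≠ 0 := fun hf => by simp [hf] at h
  rw [← h1]
  exact mt leadingCoeff_eq_zero.mp h2

lemma coeff_gt_zero (f : ℂ[X]) (j m : ℕ) (h : f.degree = (j : ℕ)) (hm : j < m) :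
    f.coeff m = 0 := by
  apply coeff_eq_zero_of_degree_lt
  rw [h]
  exact_mod_cast hm

/-- peel off the top coefficient against `P d`. -/
lemma peel (hdeg : ∀ i ≤ n, (P i).degree = (i : ℕ) ∧ (Q i).degree = (i : ℕ))
    (d : ℕ) (hd : d ≤ n) (f : ℂ[X]) (hf : ∀ m, d < m → f.coeff m = 0) :
    ∃ g : ℂ[X], f = Polynomial.C (f.coeff d * ((P d).coeff d)⁻¹) * P d + g ∧
      ∀ m, d ≤ m → g.coeff m = 0 := by
  have hPd := (hdeg d hd).1
  have hpd : (P d).coeff d ≠ 0 := coeff_self_ne _ _ hPd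
  refine ⟨f - Polynomial.C (f.coeff d * ((P d).coeff d)⁻¹) * P d, by ring, fun m hm => ?_⟩
  rcases eq_or_lt_of_le hm with h | h
  · subst h
    simp only [coeff_sub, coeff_C_mul]
    field_simp
    ring
  · simp only [coeff_sub, coeff_C_mul]
    rw [hf m h, coeff_gt_zero _ _ _ hPd h]
    ring


lemma C1 (hbi : ∀ i ≤ n, ∀ j ≤ n,
      L (LaurentPolynomial.T (-(i : ℤ)) * (Q i).toLaurent * (P j).toLaurent) =
        if i = j then χ i else 0)
    (hdeg : ∀ i ≤ n, (P i).degree = (i : ℕ) ∧ (Q i).degree = (i : ℕ))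
    (j : ℕ) (hj : j ≤ n) :
    ∀ d, d ≤ j → ∀ g : ℂ[X], (∀ m, d ≤ m → g.coeff m = 0) →
      L (LaurentPolynomial.T (-(j : ℤ)) * (Q j).toLaurent * g.toLaurent) = 0 := by
  intro d
  induction d with
  | zero =>
    intro _ g hg
    have : g = 0 := Polynomial.ext fun m => by simpa using hg m (Nat.zero_le m)
    simp [this]
  | succ d ih =>
    intro hd g hg
    obtain ⟨g', hdec, hg'⟩ := peel n P Q hdeg d (by omega) g (fun m hm => hg m (by omega))
    rw [hdec, L_add, L_Cmul, hbi j hj d (by omega), ih (by omega) g' hg']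
    have : j ≠ d := by omega
    simp [this]

lemma C2value (hbi : ∀ i ≤ n, ∀ j ≤ n,
      L (LaurentPolynomial.T (-(i : ℤ)) * (Q i).toLaurent * (P j).toLaurent) =
        if i = j then χ i else 0)
    (hdeg : ∀ i ≤ n, (P i).degree = (i : ℕ) ∧ (Q i).degree = (i : ℕ))
    (j : ℕ) (hj : j ≤ n) :
    L (LaurentPolynomial.T (-(j : ℤ)) * (Q j).toLaurent * ((X : ℂ[X]) ^ j).toLaurent)
      = ((P j).coeff j)⁻¹ * χ j := by
  obtain ⟨g, hdec, hg⟩ := peel n P Q hdeg j hj ((X : ℂ[X]) ^ j)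
    (fun m hm => by rw [coeff_X_pow]; simp [Nat.ne_of_gt hm])
  rw [hdec, L_add, L_Cmul, hbi j hj j hj, C1 L n P Q χ hbi hdeg j hj j le_rfl g hg]
  simp [coeff_X_pow]

lemma A' (hbi : ∀ i ≤ n, ∀ j ≤ n,
      L (LaurentPolynomial.T (-(i : ℤ)) * (Q i).toLaurent * (P j).toLaurent) =
        if i = j then χ i else 0)
    (hdeg : ∀ i ≤ n, (P i).degree = (i : ℕ) ∧ (Q i).degree = (i : ℕ))
    (j : ℕ) (hj : j ≤ n) (e : ℕ) (he : e ≤ j) :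
    L (LaurentPolynomial.T (-(e : ℤ)) * (Q j).toLaurent)
      = if e = 0 then ((P j).coeff j)⁻¹ * χ j else 0 := by
  have h1 : LaurentPolynomial.T (-(e : ℤ)) * (Q j).toLaurent
      = LaurentPolynomial.T (-(j : ℤ)) * (Q j).toLaurent * ((X : ℂ[X]) ^ (j - e)).toLaurent := by
    rw [Polynomial.toLaurent_X_pow,
      show (-(e : ℤ)) = -(j : ℤ) + ((j - e : ℕ) : ℤ) by push_cast [Nat.cast_sub he]; ring,
      LaurentPolynomial.T_add]
    ring
  rw [h1]
  rcases Nat.eq_zero_or_pos e with he0 | he0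
  · subst he0
    simp only [Nat.sub_zero, if_pos rfl]
    exact C2value L n P Q χ hbi hdeg j hj
  · rw [C1 L n P Q χ hbi hdeg j hj (j - e + 1) (by omega) _
      (fun m hm => by rw [coeff_X_pow]; simp [show m ≠ j - e by omega])]
    simp [Nat.pos_iff_ne_zero.mp he0]

lemma lemD (hbi : ∀ i ≤ n, ∀ j ≤ n,
      L (LaurentPolynomial.T (-(i : ℤ)) * (Q i).toLaurent * (P j).toLaurent) =
        if i = j then χ i else 0)
    (hdeg : ∀ i ≤ n, (P i).degree = (i : ℕ) ∧ (Q i).degree = (i : ℕ))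
    (hχ : ∀ i ≤ n, χ i ≠ 0)
    (j : ℕ) (hj : j ≤ n) :
    ∀ e, e < j → L (LaurentPolynomial.T (-(e : ℤ)) * (P j).toLaurent) = 0 := by
  classical
  set Mf : ℕ → ℕ → ℂ := fun s e => if e ≤ s then (Q s).coeff (s - e) else 0 with hMf
  have key : ∀ s, s < j → ∀ g : ℂ[X],
      (∑ e ∈ Finset.range j, Mf s e * L (LaurentPolynomial.T (-(e : ℤ)) * g.toLaurent))
        = L (LaurentPolynomial.T (-(s : ℤ)) * (Q s).toLaurent * g.toLaurent) := by
    intro s hs g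
    have hnat : (Q s).natDegree ≤ s :=
      le_of_eq (natDegree_eq_of_degree_eq_some (hdeg s (by omega)).2)
    rw [expand L (Q s) s hnat g.toLaurent]
    rw [show (∑ e ∈ Finset.range j, Mf s e * L (LaurentPolynomial.T (-(e : ℤ)) * g.toLaurent))
        = ∑ e ∈ Finset.range (s + 1), Mf s e * L (LaurentPolynomial.T (-(e : ℤ)) * g.toLaurent) from
      (Finset.sum_subset (Finset.range_subset_range.mpr (by omega))
        (fun e _ he => by
          have : ¬ e ≤ s := by simp at he; omega
          simp [hMf, this])).symm]
    refine Finset.sum_congr rfl fun e he => ?_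
    have : e ≤ s := by simp at he; omega
    simp [hMf, this]
  let M : Matrix (Fin j) (Fin j) ℂ := fun s e => Mf s e
  let Y : Matrix (Fin j) (Fin j) ℂ :=
    fun e t => L (LaurentPolynomial.T (-((e : ℕ) : ℤ)) * (P (t : ℕ)).toLaurent)
  have hMY : M * Y = Matrix.diagonal (fun s : Fin j => χ (s : ℕ)) := by
    ext s t
    rw [Matrix.mul_apply]
    rw [show (∑ e : Fin j, M s e * Y e t)
        = ∑ e ∈ Finset.range j, Mf s e *
            L (LaurentPolynomial.T (-(e : ℤ)) * (P (t : ℕ)).toLaurent) from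
      Fin.sum_univ_eq_sum_range
        (fun e => Mf s e * L (LaurentPolynomial.T (-(e : ℤ)) * (P (t : ℕ)).toLaurent)) j]
    rw [key s s.2 (P (t : ℕ)), hbi s (by omega) t (by omega)]
    rw [Matrix.diagonal_apply]
    by_cases h : s = t
    · simp [h]
    · have : (s : ℕ) ≠ (t : ℕ) := fun hc => h (Fin.ext hc)
      simp [h, this]
  have hD : M * (Y * Matrix.diagonal (fun s : Fin j => (χ (s : ℕ))⁻¹)) = 1 := by
    rw [← Matrix.mul_assoc, hMY, Matrix.diagonal_mul_diagonal]
    have : (fun s : Fin j => χ (s : ℕ) * (χ (s : ℕ))⁻¹) = fun _ => (1 : ℂ) := by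
      funext s
      exact mul_inv_cancel₀ (hχ s (by omega))
    rw [this, Matrix.diagonal_one]
  haveI : Invertible M := invertibleOfRightInverse _ _ hD
  let x : Fin j → ℂ := fun e => L (LaurentPolynomial.T (-((e : ℕ) : ℤ)) * (P j).toLaurent)
  have hMx : M.mulVec x = 0 := by
    funext s
    rw [Matrix.mulVec, dotProduct]
    rw [show (∑ e : Fin j, M s e * x e)
        = ∑ e ∈ Finset.range j, Mf s e *
            L (LaurentPolynomial.T (-(e : ℤ)) * (P j).toLaurent) from
      Fin.sum_univ_eq_sum_range
        (fun e => Mf s e * L (LaurentPolynomial.T (-(e : ℤ)) * (P j).toLaurent)) j]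
    rw [key s s.2 (P j), hbi s (by omega) j hj]
    have : (s : ℕ) ≠ j := by omega
    simp [this]
  have hx : x = 0 := by
    have h1 : (⅟M * M).mulVec x = x := by rw [invOf_mul_self, Matrix.one_mulVec]
    rw [← h1, ← Matrix.mulVec_mulVec, hMx, Matrix.mulVec_zero]
  intro e he
  have := congrFun hx ⟨e, he⟩
  simpa [x] using this

lemma lemA (hbi : ∀ i ≤ n, ∀ j ≤ n,
      L (LaurentPolynomial.T (-(i : ℤ)) * (Q i).toLaurent * (P j).toLaurent) =
        if i = j then χ i else 0)
    (hdeg : ∀ i ≤ n, (P i).degree = (i : ℕ) ∧ (Q i).degree = (i : ℕ))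
    (j : ℕ) (hj : j ≤ n) (k : ℕ) (hk : k ≤ j) :
    L (LaurentPolynomial.T (-(k : ℤ)) * (Q k).toLaurent * (Q j).toLaurent)
      = (Q k).coeff k * (((P j).coeff j)⁻¹ * χ j) := by
  have hnat : (Q k).natDegree ≤ k :=
    le_of_eq (natDegree_eq_of_degree_eq_some (hdeg k (by omega)).2)
  rw [expand L (Q k) k hnat (Q j).toLaurent]
  rw [Finset.sum_eq_single 0]
  · rw [A' L n P Q χ hbi hdeg j hj 0 (by omega)]
    simp
  · intro e he hne
    rw [A' L n P Q χ hbi hdeg j hj e (by simp at he; omega)]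
    simp [hne]
  · simp
lemma lemB (hbi : ∀ i ≤ n, ∀ j ≤ n,
      L (LaurentPolynomial.T (-(i : ℤ)) * (Q i).toLaurent * (P j).toLaurent) =
        if i = j then χ i else 0)
    (hdeg : ∀ i ≤ n, (P i).degree = (i : ℕ) ∧ (Q i).degree = (i : ℕ))
    (hχ : ∀ i ≤ n, χ i ≠ 0)
    (J : ℕ) (hJ : J ≤ n) (k : ℕ) (hk : k ≤ J) :
    L (LaurentPolynomial.T (-(k : ℤ)) * (Q k).toLaurent * (X * P J).toLaurent)
      = (Q k).coeff k * L (LaurentPolynomial.T 1 * (P J).toLaurent) := by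
  have hnat : (Q k).natDegree ≤ k :=
    le_of_eq (natDegree_eq_of_degree_eq_some (hdeg k (by omega)).2)
  have hexp := expand L (Q k) k hnat ((X * P J).toLaurent)
  rw [hexp]
  have hterm : ∀ e : ℕ, e ≤ k → LaurentPolynomial.T (-(e : ℤ)) * (X * P J).toLaurent
      = LaurentPolynomial.T (1 - (e : ℤ)) * (P J).toLaurent := by
    intro e he
    rw [map_mul, Polynomial.toLaurent_X,
      show (1 - (e : ℤ)) = -(e : ℤ) + 1 by ring, LaurentPolynomial.T_add]
    ring
  rw [Finset.sum_eq_single 0]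
  · rw [hterm 0 (by omega)]
    norm_num
  · intro e he hne
    have he' : e ≤ k := by simp at he; omega
    have he1 : 1 ≤ e := Nat.one_le_iff_ne_zero.mpr hne
    rw [hterm e he',
      show (1 - (e : ℤ)) = -(((e - 1 : ℕ)) : ℤ) by push_cast [Nat.cast_sub he1]; ring,
      lemD L n P Q χ hbi hdeg hχ J hJ (e - 1) (by omega)]
    simp
  · simp

lemma van (hbi : ∀ i ≤ n, ∀ j ≤ n,
      L (LaurentPolynomial.T (-(i : ℤ)) * (Q i).toLaurent * (P j).toLaurent) =
        if i = j then χ i else 0)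
    (hdeg : ∀ i ≤ n, (P i).degree = (i : ℕ) ∧ (Q i).degree = (i : ℕ))
    (hχ : ∀ i ≤ n, χ i ≠ 0) :
    ∀ d, d ≤ n + 1 → ∀ f : ℂ[X], (∀ m, d ≤ m → f.coeff m = 0) →
      (∀ k, k < d → L (LaurentPolynomial.T (-(k : ℤ)) * (Q k).toLaurent * f.toLaurent) = 0) →
      f = 0 := by
  intro d
  induction d with
  | zero =>
    intro _ f hf _
    exact Polynomial.ext fun m => by simpa using hf m (Nat.zero_le m)
  | succ d ih =>
    intro hd f hf hl
    obtain ⟨g, hdec, hg⟩ := peel n P Q hdeg d (by omega) f (fun m hm => hf m (by omega))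
    have hpd : (P d).coeff d ≠ 0 := coeff_self_ne _ _ (hdeg d (by omega)).1
    have hgl : ∀ k, k < d →
        L (LaurentPolynomial.T (-(k : ℤ)) * (Q k).toLaurent * g.toLaurent) = 0 := by
      intro k hk
      have h1 := hl k (by omega)
      rw [hdec, L_add, L_Cmul, hbi k (by omega) d (by omega)] at h1
      simpa [show k ≠ d by omega] using h1
    have hg0 : g = 0 := ih (by omega) g hg hgl
    have hf2 : f = Polynomial.C (f.coeff d * ((P d).coeff d)⁻¹) * P d := by
      nth_rewrite 1 [hdec]
      rw [hg0, add_zero]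
    have h2 := hl d (by omega)
    rw [hf2, L_Cmul, hbi d (by omega) d (by omega)] at h2
    simp only [if_pos rfl] at h2
    have hcoef : f.coeff d * ((P d).coeff d)⁻¹ = 0 := by
      rcases mul_eq_zero.mp h2 with h | h
      · exact h
      · exact absurd h (hχ d (by omega))
    rw [hf2, hcoef, map_zero, zero_mul]

end Stmt11Aux

/-- **Proposition 4.4.** Laurent biorthogonal polynomial pairs satisfy the coupled first-order
recurrences `P_i = ζ_i·z·P_{i−1} + β_i·Q_{i−1}`, `Q_i = γ_i·z·P_{i−1} + δ_i·Q_{i−1}`. -/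
theorem stmt_11 (c : ℤ → ℂ) (L : LaurentPolynomial ℂ →ₗ[ℂ] ℂ)
    (hL : ∀ k : ℤ, L (LaurentPolynomial.T k) = c k)
    (n : ℕ) (hn : 1 ≤ n) (P Q : ℕ → Polynomial ℂ)
    (hdeg : ∀ i ≤ n, (P i).degree = (i : ℕ) ∧ (Q i).degree = (i : ℕ))
    (χ : ℕ → ℂ) (hχ : ∀ i ≤ n, χ i ≠ 0)
    (hbi : ∀ i ≤ n, ∀ j ≤ n,
      L (LaurentPolynomial.T (-(i : ℤ)) * (Q i).toLaurent * (P j).toLaurent) =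
        if i = j then χ i else 0) :
    ∀ i, 1 ≤ i → i ≤ n → ∃ ζ β γ δ : ℂ,
      P i = C ζ * (X * P (i - 1)) + C β * Q (i - 1) ∧
      Q i = C γ * (X * P (i - 1)) + C δ * Q (i - 1) := by
  intro i hi1 hin
  open Stmt11Aux in
  have hJ1 : i - 1 + 1 = i := by omega
  have hJn : i - 1 ≤ n := by omega
  have hPi := (hdeg i hin).1
  have hQi := (hdeg i hin).2
  have hPJ := (hdeg (i - 1) hJn).1
  have hQJ := (hdeg (i - 1) hJn).2
  have hpI : (P i).coeff i ≠ 0 := coeff_self_ne _ _ hPi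
  have hpJ : (P (i - 1)).coeff (i - 1) ≠ 0 := coeff_self_ne _ _ hPJ
  have hχI : χ i ≠ 0 := hχ i hin
  have hχJ : χ (i - 1) ≠ 0 := hχ (i - 1) hJn
  -- abbreviations (scalars)
  set pI := (P i).coeff i with hpIdef
  set pJ := (P (i - 1)).coeff (i - 1) with hpJdef
  set qI := (Q i).coeff i with hqIdef
  set E := L (LaurentPolynomial.T 1 * (P (i - 1)).toLaurent) with hEdef
  set lXP := L (LaurentPolynomial.T (-(i : ℤ)) * (Q i).toLaurent *
      (X * P (i - 1)).toLaurent) with hlXPdef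
  set c' := lXP - E * qI with hc'def
  -- the polynomial identities
  have hu : C (χ i) * (X * P (i - 1)) - C E * (C pI * Q i) - C c' * P i = 0 := by
    apply van L n P Q χ hbi hdeg hχ (i + 1) (by omega)
    · intro m hm
      obtain ⟨m', rfl⟩ : ∃ m', m = m' + 1 := ⟨m - 1, by omega⟩
      simp only [coeff_sub, coeff_C_mul, coeff_X_mul]
      rw [coeff_gt_zero _ _ _ hPJ (by omega), coeff_gt_zero _ _ _ hQi (by omega),
        coeff_gt_zero _ _ _ hPi (by omega)]
      ring
    · intro k hk
      rw [L_sub, L_sub, L_Cmul, L_Cmul, L_Cmul, L_Cmul]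
      rcases Nat.lt_or_ge k i with hki | hki
      · -- k ≤ i - 1
        have hkJ : k ≤ i - 1 := by omega
        have hB := lemB L n P Q χ hbi hdeg hχ (i - 1) hJn k hkJ
        rw [hB, lemA L n P Q χ hbi hdeg i hin k (by omega),
          hbi k (by omega) i hin]
        rw [← hpIdef, ← hEdef]
        simp only [show ¬ (k = i) by omega, if_false]
        field_simp
        ring
      · -- k = i
        have hki' : k = i := by omega
        rw [hki']
        rw [lemA L n P Q χ hbi hdeg i hin i le_rfl, hbi i hin i hin]
        rw [← hpIdef, ← hqIdef, ← hlXPdef]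
        rw [if_pos rfl]
        rw [hc'def]
        field_simp
        ring
  have hv : C pI * (C (χ (i - 1)) * Q i) - C pJ * (C (χ i) * Q (i - 1))
      - C qI * (C (χ (i - 1)) * P i) = 0 := by
    apply van L n P Q χ hbi hdeg hχ (i + 1) (by omega)
    · intro m hm
      simp only [coeff_sub, coeff_C_mul]
      rw [coeff_gt_zero _ _ _ hQi (by omega), coeff_gt_zero _ _ _ hQJ (by omega),
        coeff_gt_zero _ _ _ hPi (by omega)]
      ring
    · intro k hk
      rw [L_sub, L_sub, L_Cmul, L_Cmul, L_Cmul, L_Cmul, L_Cmul, L_Cmul]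
      rw [lemA L n P Q χ hbi hdeg i hin k (by omega), hbi k (by omega) i hin]
      rcases Nat.lt_or_ge k i with hki | hki
      · rw [lemA L n P Q χ hbi hdeg (i - 1) hJn k (by omega)]
        rw [← hpIdef, ← hpJdef]
        simp only [show ¬ (k = i) by omega, if_false]
        field_simp
        ring
      · have hki' : k = i := by omega
        rw [hki']
        rw [C1 L n P Q χ hbi hdeg i hin i le_rfl (Q (i - 1))
          (fun m hm => coeff_gt_zero _ _ _ hQJ (by omega))]
        rw [← hpIdef, ← hqIdef]
        rw [if_pos rfl]
        field_simp
        ring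
  have H1 : C (χ i) * (X * P (i - 1)) = C E * (C pI * Q i) + C c' * P i := by
    linear_combination hu
  have H2 : C pI * (C (χ (i - 1)) * Q i) = C pJ * (C (χ i) * Q (i - 1))
      + C qI * (C (χ (i - 1)) * P i) := by
    linear_combination hv
  set A := E * qI * χ (i - 1) + χ (i - 1) * c' with hAdef
  have hA' : C E * C qI * C (χ (i - 1)) + C (χ (i - 1)) * C c' = C A := by
    rw [hAdef]
    simp only [map_add, map_mul]
  have hm1 : C (χ i * χ (i - 1)) = C (χ i) * C (χ (i - 1)) := by simp [map_mul]
  have hm2 : C (E * pJ * χ i) = C E * C pJ * C (χ i) := by simp [map_mul]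
  have H3 : C (χ i * χ (i - 1)) * (X * P (i - 1))
      = C (E * pJ * χ i) * Q (i - 1) + C A * P i := by
    linear_combination C (χ (i - 1)) * H1 + C E * H2 + hA' * P i
      + hm1 * (X * P (i - 1)) - hm2 * Q (i - 1)
  -- A ≠ 0
  have hA0 : A ≠ 0 := by
    have hc := congrArg (fun p : ℂ[X] => p.coeff i) H3
    simp only [coeff_add, coeff_C_mul] at hc
    have hXc : (X * P (i - 1)).coeff i = pJ := by
      have h := coeff_X_mul (P (i - 1)) (i - 1)
      rw [hJ1] at h
      rw [h, hpJdef]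
    rw [hXc, coeff_gt_zero _ _ _ hQJ (by omega), ← hpIdef] at hc
    intro hA0
    rw [hA0] at hc
    simp [hχI, hχJ, hpJ] at hc
  -- the coefficients
  set ζv := χ i * χ (i - 1) / A with hζv
  set βv := -(E * pJ * χ i) / A with hβv
  set γv := qI * ζv / pI with hγv
  set δv := (pJ * χ i + qI * χ (i - 1) * βv) / (pI * χ (i - 1)) with hδv
  have G1 : P i = C ζv * (X * P (i - 1)) + C βv * Q (i - 1) := by
    apply mul_left_cancel₀ (show (C A : ℂ[X]) ≠ 0 from fun h => hA0 (by
      simpa using (Polynomial.C_eq_zero.mp h)))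
    have h1 : C A * C ζv = C (χ i * χ (i - 1)) := by
      rw [← map_mul]
      congr 1
      rw [hζv]
      field_simp
      try ring
    have h2 : C A * C βv = -C (E * pJ * χ i) := by
      rw [← map_mul, show A * βv = -(E * pJ * χ i) by rw [hβv]; field_simp; try ring,
        map_neg]
    linear_combination (-1 : ℂ[X]) * H3 - h1 * (X * P (i - 1)) - h2 * Q (i - 1)
  have hCpI : (C pI : ℂ[X]) ≠ 0 := fun h => hpI (by simpa using Polynomial.C_eq_zero.mp h)
  have hCχJ : (C (χ (i - 1)) : ℂ[X]) ≠ 0 := fun h =>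
    hχJ (by simpa using Polynomial.C_eq_zero.mp h)
  have k1 : C pI * C (χ (i - 1)) * C γv = C qI * C (χ (i - 1)) * C ζv := by
    simp only [← map_mul]
    congr 1
    rw [hγv]
    field_simp
    try ring
  have k2 : C pI * C (χ (i - 1)) * C δv = C pJ * C (χ i) + C qI * C (χ (i - 1)) * C βv := by
    simp only [← map_mul, ← map_add]
    congr 1
    rw [hδv]
    field_simp
    try ring
  have step : C pI * (C (χ (i - 1)) * Q i)
      = C pI * (C (χ (i - 1)) * (C γv * (X * P (i - 1)) + C δv * Q (i - 1))) := by
    linear_combination H2 + (C qI * C (χ (i - 1))) * G1 - k1 * (X * P (i - 1))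
      - k2 * Q (i - 1)
  exact ⟨ζv, βv, γv, δv, G1, mul_left_cancel₀ hCχJ (mul_left_cancel₀ hCpI step)⟩
end

section
/- Let c : ℤ → ℂ and let L be the unique ℂ-linear functional on Laurent polynomials with L(z^k) = c_k for every k ∈ ℤ. Let n ≥ 1, let P̂_0, …, P̂_n and Q̂_0, …, Q̂_n be monic complex polynomials with deg P̂_i = deg Q̂_i = i, biorthogonal in the sense that L(z^{−i}·Q̂_i(z)·P̂_j(z)) = χ_i·δ_{ij} for all 0 ≤ i, j ≤ n with all χ_i ≠ 0. Then the following are equivalent. (1) There exist real angles θ_1, …, θ_n and φ_1, …, φ_n and nonzero complex numbers α_0, …, α_n, α̃_0, …, α̃_n such that the rescaled sequences P_i = P̂_i/α_i and R_i = Q̂_i/α̃_i satisfy, for all 1 ≤ i ≤ n, the generalized-QSP recurrences P_i(z) = e^{iφ_i}·cos θ_i·z·P_{i−1}(z) + e^{iφ_i}·sin θ_i·R_{i−1}(z) and R_i(z) = sin θ_i·z·P_{i−1}(z) − cos θ_i·R_{i−1}(z). (2) There exist nonzero complex numbers α_n and α̃_n such that for every z ∈ ℂ with |z| = 1: |P̂_n(z)/α_n|²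 + |Q̂_n(z)/α̃_n|² = 1. -/
open Polynomial Complex

noncomputable section

/-- The unit circle in ℂ is infinite. -/
lemma aux_circle_infinite : {z : ℂ | ‖z‖ = 1}.Infinite := by
  have hinj : Set.InjOn (fun t : ℝ => Complex.exp (t * Complex.I)) (Set.Ioo 0 1) := by
    intro a ha b hb hab
    simp only at hab
    have h1 : Complex.exp ((a : ℂ) * Complex.I - (b:ℂ) * Complex.I) = 1 := by
      rw [Complex.exp_sub, hab, div_self (Complex.exp_ne_zero _)]
    rw [show (a : ℂ) * Complex.I - (b:ℂ)*Complex.I = ((a - b : ℝ) : ℂ) * Complex.I by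
      push_cast; ring] at h1
    rw [Complex.exp_eq_one_iff] at h1
    obtain ⟨k, hk⟩ := h1
    have hI : (Complex.I : ℂ) ≠ 0 := Complex.I_ne_zero
    have : ((a - b : ℝ) : ℂ) = (k : ℂ) * (2 * Real.pi) := by
      have hk' : ((a - b : ℝ) : ℂ) * Complex.I = ((k : ℂ) * (2 * Real.pi)) * Complex.I := by
        rw [hk]; ring
      exact mul_right_cancel₀ hI hk'
    have hreal : (a - b : ℝ) = (k : ℝ) * (2 * Real.pi) := by
      exact_mod_cast this
    have hpi : (2:ℝ) < 2 * Real.pi := by nlinarith [Real.pi_gt_three]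
    have hb1 : |a - b| < 1 := by
      rw [abs_lt]; constructor <;> [nlinarith [ha.1, ha.2, hb.1, hb.2]; nlinarith [ha.1, ha.2, hb.1, hb.2]]
    have hk0 : k = 0 := by
      by_contra hk0
      have : (1:ℝ) ≤ |(k:ℝ)| := by
        have := Int.one_le_abs (by omega : k ≠ 0)
        exact_mod_cast (by exact_mod_cast this : (1:ℤ) ≤ |k|)
      have : (2:ℝ) ≤ |a - b| := by
        rw [hreal, abs_mul]
        have hpos : 0 < 2*Real.pi := by positivity
        calc (2:ℝ) = 1 * 2 := by ring
        _ ≤ |(k:ℝ)| * (2*Real.pi) := by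
            apply mul_le_mul this (by nlinarith) (by norm_num) (by positivity)
        _ = |(k:ℝ)| * |2*Real.pi| := by rw [abs_of_pos hpos]
      linarith
    rw [hk0] at hreal; simp at hreal; linarith [hreal]
  have hIoo : (Set.Ioo (0:ℝ) 1).Infinite := Set.Ioo_infinite (by norm_num)
  have himg := hIoo.image hinj
  apply himg.mono
  rintro z ⟨t, _, rfl⟩
  exact Complex.norm_exp_ofReal_mul_I t

/-- Two polynomials agreeing on the unit circle are equal. -/
lemma aux_poly_eq_of_circle (f g : Polynomial ℂ)
    (h : ∀ z : ℂ, ‖z‖ = 1 → f.eval z = g.eval z) : f = g := by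
  have : f - g = 0 := by
    apply Polynomial.eq_zero_of_infinite_isRoot
    apply aux_circle_infinite.mono
    intro z hz
    simp only [Set.mem_setOf_eq, IsRoot, eval_sub, sub_eq_zero]
    exact h z hz
  exact sub_eq_zero.mp this

/-- Rotation-sum identity used in the forward direction. -/
lemma aux_rot_sum (c s : ℝ) (A B : ℂ) :
    Complex.normSq ((c:ℂ) * A + (s:ℂ) * B) + Complex.normSq ((s:ℂ) * A - (c:ℂ) * B)
      = (c^2 + s^2) * (Complex.normSq A + Complex.normSq B) := by
  simp only [Complex.normSq_apply, Complex.add_re, Complex.add_im, Complex.sub_re,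
    Complex.sub_im, Complex.mul_re, Complex.mul_im, Complex.ofReal_re, Complex.ofReal_im]
  ring

lemma aux_forward_step (θ φ' : ℝ) (z w₁ w₂ : ℂ) (hz : Complex.normSq z = 1) :
    Complex.normSq (Complex.exp ((φ':ℂ) * Complex.I) * (Real.cos θ : ℂ) * (z * w₁)
        + Complex.exp ((φ':ℂ) * Complex.I) * (Real.sin θ : ℂ) * w₂)
      + Complex.normSq ((Real.sin θ : ℂ) * (z * w₁) - (Real.cos θ : ℂ) * w₂)
      = Complex.normSq w₁ + Complex.normSq w₂ := by
  have hE : Complex.normSq (Complex.exp ((φ':ℂ) * Complex.I)) = 1 := by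
    rw [Complex.normSq_eq_norm_sq, Complex.norm_exp_ofReal_mul_I]; norm_num
  have h1 : Complex.exp ((φ':ℂ) * Complex.I) * (Real.cos θ : ℂ) * (z * w₁)
        + Complex.exp ((φ':ℂ) * Complex.I) * (Real.sin θ : ℂ) * w₂
      = Complex.exp ((φ':ℂ) * Complex.I) * ((Real.cos θ : ℂ) * (z * w₁) + (Real.sin θ : ℂ) * w₂) := by
    ring
  rw [h1, Complex.normSq_mul, hE, one_mul, aux_rot_sum (Real.cos θ) (Real.sin θ) (z*w₁) w₂]
  rw [Complex.normSq_mul, hz, one_mul]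
  have : Real.cos θ ^2 + Real.sin θ ^2 = 1 := by
    rw [add_comm]; exact Real.sin_sq_add_cos_sq θ
  rw [this, one_mul]

/-- Descent identity used in the backward direction. -/
lemma aux_backward_step (u v : ℝ) (a b z p q : ℂ) (hz : Complex.normSq z = 1)
    (hc : (u:ℂ) * a + (v:ℂ) * b = 0) :
    u * Complex.normSq (z * p + a * q) + v * Complex.normSq (z * p + b * q)
      = (u + v) * Complex.normSq p
        + (u * Complex.normSq a + v * Complex.normSq b) * Complex.normSq q := by
  have hc' : (u:ℂ) * (starRingEnd ℂ) a + (v:ℂ) * (starRingEnd ℂ) b = 0 := by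
    have := congrArg (starRingEnd ℂ) hc
    simpa [map_add, map_mul, Complex.conj_ofReal] using this
  rw [Complex.normSq_add, Complex.normSq_add, Complex.normSq_mul, Complex.normSq_mul,
    Complex.normSq_mul, hz, one_mul]
  have key : u * (2 * (z * p * (starRingEnd ℂ) (a * q)).re)
      + v * (2 * (z * p * (starRingEnd ℂ) (b * q)).re) = 0 := by
    have e1 : z * p * (starRingEnd ℂ) (a * q) = (z * p * (starRingEnd ℂ) q) * ((starRingEnd ℂ) a) := by
      rw [map_mul]; ring
    have e2 : z * p * (starRingEnd ℂ) (b * q) = (z * p * (starRingEnd ℂ) q) * ((starRingEnd ℂ) b) := by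
      rw [map_mul]; ring
    rw [e1, e2]
    have : u * (2 * ((z * p * (starRingEnd ℂ) q) * (starRingEnd ℂ) a).re)
        + v * (2 * ((z * p * (starRingEnd ℂ) q) * (starRingEnd ℂ) b).re)
        = 2 * ((z * p * (starRingEnd ℂ) q) * ((u:ℂ) * (starRingEnd ℂ) a + (v:ℂ) * (starRingEnd ℂ) b)).re := by
      rw [mul_add]
      simp only [Complex.add_re]
      have r1 : ((z * p * (starRingEnd ℂ) q) * ((u:ℂ) * (starRingEnd ℂ) a)).re
          = u * ((z * p * (starRingEnd ℂ) q) * (starRingEnd ℂ) a).re := by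
        rw [show (z * p * (starRingEnd ℂ) q) * ((u:ℂ) * (starRingEnd ℂ) a)
            = (u:ℂ) * ((z * p * (starRingEnd ℂ) q) * (starRingEnd ℂ) a) by ring,
          Complex.re_ofReal_mul]
      have r2 : ((z * p * (starRingEnd ℂ) q) * ((v:ℂ) * (starRingEnd ℂ) b)).re
          = v * ((z * p * (starRingEnd ℂ) q) * (starRingEnd ℂ) b).re := by
        rw [show (z * p * (starRingEnd ℂ) q) * ((v:ℂ) * (starRingEnd ℂ) b)
            = (v:ℂ) * ((z * p * (starRingEnd ℂ) q) * (starRingEnd ℂ) b) by ring,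
          Complex.re_ofReal_mul]
      rw [r1, r2]; ring
    rw [this, hc', mul_zero, Complex.zero_re, mul_zero]
  nlinarith [key]

/-- Conjugate-reversal of `p` at level `m`. -/
def revc (m : ℕ) (p : Polynomial ℂ) : Polynomial ℂ :=
  ∑ k ∈ Finset.range (m+1), Polynomial.C ((starRingEnd ℂ) (p.coeff k)) * X ^ (m - k)

lemma revc_natDegree_le (m : ℕ) (p : Polynomial ℂ) : (revc m p).natDegree ≤ m := by
  apply Polynomial.natDegree_sum_le_of_forall_le
  intro k hk
  apply le_trans (Polynomial.natDegree_C_mul_le _ _)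
  simpa using Nat.sub_le m k

lemma revc_coeff_top (m : ℕ) (p : Polynomial ℂ) :
    (revc m p).coeff m = (starRingEnd ℂ) (p.coeff 0) := by
  rw [revc, Polynomial.finset_sum_coeff]
  rw [Finset.sum_eq_single 0]
  · simp
  · intro k hk hk0
    simp only [Finset.mem_range] at hk
    have : ¬ (m = m - k) := by omega
    simp [Polynomial.coeff_C_mul, Polynomial.coeff_X_pow, this]
  · intro h; simp at h

lemma revc_eval (m : ℕ) (p : Polynomial ℂ) (hp : p.natDegree ≤ m) (z : ℂ)
    (hz : ‖z‖ = 1) :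
    (revc m p).eval z = z ^ m * (starRingEnd ℂ) (p.eval z) := by
  have hz0 : z ≠ 0 := by
    intro h; rw [h] at hz; simp at hz
  have hconjz : (starRingEnd ℂ) z = z⁻¹ := by
    have h1 : z * (starRingEnd ℂ) z = 1 := by
      rw [Complex.mul_conj]
      rw [Complex.normSq_eq_norm_sq, hz]; norm_num
    field_simp
    linear_combination h1
  have heval : p.eval z = ∑ k ∈ Finset.range (m+1), p.coeff k * z ^ k :=
    Polynomial.eval_eq_sum_range' (lt_of_le_of_lt hp (Nat.lt_succ_self m)) z
  rw [heval, map_sum, Finset.mul_sum, revc, Polynomial.eval_finset_sum]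
  apply Finset.sum_congr rfl
  intro k hk
  simp only [Finset.mem_range] at hk
  have hkm : k ≤ m := by omega
  simp only [Polynomial.eval_mul, Polynomial.eval_C, Polynomial.eval_pow, Polynomial.eval_X,
    map_mul, map_pow, hconjz]
  rw [show z ^ m * ((starRingEnd ℂ) (p.coeff k) * (z⁻¹) ^ k)
      = (starRingEnd ℂ) (p.coeff k) * (z ^ m * (z ^ k)⁻¹) by rw [inv_pow]; ring]
  congr 1
  rw [pow_sub₀ z hz0 hkm]

/-- Top coefficient of a product with degree bounds. -/
lemma aux_coeff_mul_top (f g : Polynomial ℂ) (d e : ℕ) (hf : f.natDegree ≤ d)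
    (hg : g.natDegree ≤ e) : (f * g).coeff (d + e) = f.coeff d * g.coeff e := by
  rw [Polynomial.coeff_mul]
  rw [Finset.sum_eq_single (d, e)]
  · rintro ⟨i, j⟩ hij hne
    rw [Finset.HasAntidiagonal.mem_antidiagonal] at hij
    simp only
    rcases Nat.lt_or_ge d i with h | h
    · rw [Polynomial.coeff_eq_zero_of_natDegree_lt (lt_of_le_of_lt hf h), zero_mul]
    · have : e < j ∨ (i = d ∧ j = e) := by omega
      rcases this with h2 | ⟨rfl, rfl⟩
      · rw [Polynomial.coeff_eq_zero_of_natDegree_lt (lt_of_le_of_lt hg h2), mul_zero]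
      · exact absurd rfl hne
  · intro h
    rw [Finset.HasAntidiagonal.mem_antidiagonal] at h
    exact absurd rfl h


lemma aux_sqrt_cancel (u v : ℝ) (hu : 0 < u) (hv : 0 < v) :
    Real.sqrt (v/u) * Real.sqrt (u/v) = 1 := by
  rw [← Real.sqrt_mul (by positivity)]
  rw [show v/u * (u/v) = 1 by field_simp]
  exact Real.sqrt_one

lemma aux_sqrt_flip (u v : ℝ) (hu : 0 < u) (hv : 0 < v) :
    Real.sqrt (v/u) * (u/v) = Real.sqrt (u/v) := by
  rw [show u/v = Real.sqrt ((u/v)^2) by rw [Real.sqrt_sq (by positivity)]]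
  rw [← Real.sqrt_mul (by positivity)]
  congr 1
  rw [Real.sqrt_sq (by positivity)]
  field_simp
noncomputable section

/-- `Lml L s` is the linear functional `p ↦ L (T s * toLaurent p)`. -/
def Lml (L : LaurentPolynomial ℂ →ₗ[ℂ] ℂ) (s : ℤ) : Polynomial ℂ →ₗ[ℂ] ℂ :=
  L ∘ₗ (LinearMap.mulLeft ℂ (LaurentPolynomial.T s)) ∘ₗ (Polynomial.toLaurentAlg (R := ℂ)).toLinearMap

lemma Lml_apply (L : LaurentPolynomial ℂ →ₗ[ℂ] ℂ) (s : ℤ) (p : Polynomial ℂ) :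
    Lml L s p = L (LaurentPolynomial.T s * p.toLaurent) := rfl

lemma Lml_X_pow_mul (L : LaurentPolynomial ℂ →ₗ[ℂ] ℂ) (s : ℤ) (k : ℕ) (p : Polynomial ℂ) :
    Lml L s (X ^ k * p) = Lml L (s + k) p := by
  simp only [Lml_apply]
  congr 1
  rw [map_mul, Polynomial.toLaurent_X_pow, ← mul_assoc, ← LaurentPolynomial.T_add]

lemma Lml_C_mul (L : LaurentPolynomial ℂ →ₗ[ℂ] ℂ) (s : ℤ) (a : ℂ) (p : Polynomial ℂ) :
    Lml L s (Polynomial.C a * p) = a * Lml L s p := by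
  have : (Polynomial.C a : Polynomial ℂ) * p = a • p := by
    rw [Polynomial.smul_eq_C_mul]
  rw [this, map_smul, smul_eq_mul]

lemma Lml_monomial_mul (L : LaurentPolynomial ℂ →ₗ[ℂ] ℂ) (s : ℤ) (k : ℕ) (a : ℂ)
    (p : Polynomial ℂ) :
    Lml L s (monomial k a * p) = a * Lml L (s + k) p := by
  rw [show ((monomial k a : Polynomial ℂ)) = Polynomial.C a * X ^ k by
    rw [Polynomial.C_mul_X_pow_eq_monomial], mul_assoc, Lml_C_mul, Lml_X_pow_mul]

/-- The family `T (-l) * Q l` for `l ≤ k`. -/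
def vQf (Q : ℕ → Polynomial ℂ) (k : ℕ) : Fin (k+1) → LaurentPolynomial ℂ :=
  fun l => LaurentPolynomial.T (-((l : ℕ) : ℤ)) * (Q (l : ℕ)).toLaurent

/-- Span of the twisted `Q`-family up to level `k`. -/
def Wsp (Q : ℕ → Polynomial ℂ) (k : ℕ) : Submodule ℂ (LaurentPolynomial ℂ) :=
  Submodule.span ℂ (Set.range (vQf Q k))

/-- Pairing against `P j`. -/
def pairP (L : LaurentPolynomial ℂ →ₗ[ℂ] ℂ) (Pj : Polynomial ℂ) :
    LaurentPolynomial ℂ →ₗ[ℂ] ℂ :=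
  L ∘ₗ (LinearMap.mulRight ℂ (Pj.toLaurent))

lemma pairP_apply (L : LaurentPolynomial ℂ →ₗ[ℂ] ℂ) (Pj F : Polynomial ℂ)
    (G : LaurentPolynomial ℂ) : True := trivial

lemma pairP_T_mul (L : LaurentPolynomial ℂ →ₗ[ℂ] ℂ) (Pj g : Polynomial ℂ) (s : ℤ) :
    pairP L Pj (LaurentPolynomial.T s * g.toLaurent) = Lml L s (g * Pj) := by
  simp only [pairP, Lml, LinearMap.comp_apply, LinearMap.mulRight_apply, LinearMap.mulLeft_apply,
    AlgHom.toLinearMap_apply]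
  congr 1
  have : (Polynomial.toLaurentAlg (R := ℂ)) (g * Pj) = g.toLaurent * Pj.toLaurent := by
    rw [show (Polynomial.toLaurentAlg (R := ℂ)) (g * Pj) = Polynomial.toLaurent (g * Pj) from rfl]
    exact map_mul Polynomial.toLaurent g Pj
  rw [this, mul_assoc]

lemma Wsp_mono (Q : ℕ → Polynomial ℂ) {s k : ℕ} (h : s ≤ k) : Wsp Q s ≤ Wsp Q k := by
  rw [Wsp, Submodule.span_le]
  rintro x ⟨l, rfl⟩
  apply Submodule.subset_span
  exact ⟨⟨(l : ℕ), by omega⟩, rfl⟩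

section Machinery

variable (L : LaurentPolynomial ℂ →ₗ[ℂ] ℂ) (n : ℕ) (P Q : ℕ → Polynomial ℂ) (χ : ℕ → ℂ)

/-- killing lemma -/
lemma pairP_kill (hb : ∀ i ≤ n, ∀ j ≤ n, Lml L (-(i:ℤ)) (Q i * P j) = if i = j then χ i else 0)
    {k j : ℕ} (hk : k ≤ n) (hj : j ≤ n) (hkj : k < j) :
    ∀ F ∈ Wsp Q k, pairP L (P j) F = 0 := by
  intro F hF
  have : Wsp Q k ≤ LinearMap.ker (pairP L (P j)) := by
    rw [Wsp, Submodule.span_le]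
    rintro x ⟨l, rfl⟩
    have hl : (l : ℕ) ≤ k := by omega
    simp only [SetLike.mem_coe, LinearMap.mem_ker]
    rw [vQf, pairP_T_mul]
    rw [hb (l : ℕ) (le_trans hl (le_trans hkj.le hj)) j hj]
    rw [if_neg (by omega)]
  exact LinearMap.mem_ker.mp (this hF)

/-- sums of monomials times T land in the span. -/
lemma TmulMem (k : ℕ)
    (hall : ∀ s, s ≤ k → (LaurentPolynomial.T (-(s:ℤ))) ∈ Wsp Q s)
    (g : Polynomial ℂ) (hg : g.natDegree ≤ k) :
    LaurentPolynomial.T (-(k:ℤ)) * g.toLaurent ∈ Wsp Q k := by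
  have hgs := Polynomial.as_sum_range' g (k+1) (by omega)
  rw [hgs]
  have : ((∑ i ∈ Finset.range (k+1), (monomial i) (g.coeff i) : Polynomial ℂ)).toLaurent
      = ∑ i ∈ Finset.range (k+1), ((monomial i) (g.coeff i) : Polynomial ℂ).toLaurent := by
    exact map_sum Polynomial.toLaurent _ _
  rw [this, Finset.mul_sum]
  apply Submodule.sum_mem
  intro i hi
  simp only [Finset.mem_range] at hi
  have hik : i ≤ k := by omega
  rw [Polynomial.toLaurent_C_mul_T]
  have : LaurentPolynomial.T (-(k:ℤ)) * (LaurentPolynomial.C (g.coeff i) * LaurentPolynomial.T (i:ℤ))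
      = g.coeff i • LaurentPolynomial.T (-(((k - i : ℕ)):ℤ)) := by
    rw [show (-(((k - i : ℕ)):ℤ)) = (-(k:ℤ)) + (i:ℤ) by push_cast [hik]; ring]
    rw [LaurentPolynomial.T_add]
    rw [Algebra.smul_def, LaurentPolynomial.algebraMap_apply, Algebra.algebraMap_self, RingHom.id_apply]
    ring
  rw [this]
  exact Submodule.smul_mem _ _ ((Wsp_mono Q (by omega : k - i ≤ k)) (hall (k-i) (by omega)))

end Machinery

section Main

variable (L : LaurentPolynomial ℂ →ₗ[ℂ] ℂ) (n : ℕ) (P Q : ℕ → Polynomial ℂ) (χ : ℕ → ℂ)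
variable (hPm : ∀ i ≤ n, (P i).Monic ∧ (P i).natDegree = i)
variable (hQm : ∀ i ≤ n, (Q i).Monic ∧ (Q i).natDegree = i)
variable (hχ : ∀ i ≤ n, χ i ≠ 0)
variable (hb : ∀ i ≤ n, ∀ j ≤ n, Lml L (-(i:ℤ)) (Q i * P j) = if i = j then χ i else 0)

lemma T_cancel (a : ℤ) (x y : LaurentPolynomial ℂ)
    (h : LaurentPolynomial.T (-a) * x = LaurentPolynomial.T (-a) * y) : x = y := by
  have := congrArg (fun w => LaurentPolynomial.T a * w) h
  simpa [← mul_assoc, ← LaurentPolynomial.T_add] using this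

lemma T_smul_comm (a : ℤ) (c : ℂ) (y : LaurentPolynomial ℂ) :
    LaurentPolynomial.T a * (c • y) = c • (LaurentPolynomial.T a * y) :=
  mul_smul_comm c _ y

lemma C_mul_eq_smul' (c : ℂ) (y : LaurentPolynomial ℂ) :
    LaurentPolynomial.C c * y = c • y := by
  rw [Algebra.smul_def, LaurentPolynomial.algebraMap_apply, Algebra.algebraMap_self,
    RingHom.id_apply]

include hQm hχ hb in
/-- Main structural induction. -/
lemma lemJ : ∀ t, t ≤ n → (Q t).coeff 0 ≠ 0 ∧
    (LaurentPolynomial.T (-(t:ℤ))) ∈ Wsp Q t := by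
  intro t
  induction t using Nat.strong_induction_on with
  | _ t IH =>
    intro htn
    have hgen : LaurentPolynomial.T (-(t:ℤ)) * (Q t).toLaurent ∈ Wsp Q t :=
      Submodule.subset_span ⟨⟨t, by omega⟩, rfl⟩
    rcases Nat.eq_zero_or_pos t with rfl | ht1
    · have hQ0 : Q 0 = 1 := ((hQm 0 (by omega)).1.natDegree_eq_zero).mp
        (hQm 0 (by omega)).2
      refine ⟨by rw [hQ0]; simp, ?_⟩
      have h2 : LaurentPolynomial.T (-((0:ℕ):ℤ)) * (Q 0).toLaurent
          = LaurentPolynomial.T (-((0:ℕ):ℤ)) := by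
        rw [hQ0]; simp
      rw [← h2]; exact hgen
    · have hallIH : ∀ s, s ≤ t - 1 → (LaurentPolynomial.T (-(s:ℤ))) ∈ Wsp Q s :=
        fun s hs => (IH s (by omega) (by omega)).2
      have key : ∀ g : Polynomial ℂ, g.coeff 0 = 0 → g.natDegree ≤ t →
          LaurentPolynomial.T (-(t:ℤ)) * g.toLaurent ∈ Wsp Q (t-1) := by
        intro g hg0 hgdeg
        obtain ⟨S, hS⟩ := (Polynomial.X_dvd_iff).mpr hg0
        have hSdeg : S.natDegree ≤ t - 1 := by
          rw [Polynomial.natDegree_le_iff_coeff_eq_zero]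
          intro N hN
          have h1 : g.coeff (N + 1) = S.coeff N := by rw [hS, Polynomial.coeff_X_mul]
          have h2 : g.coeff (N+1) = 0 :=
            Polynomial.coeff_eq_zero_of_natDegree_lt (by omega)
          rw [← h1, h2]
        have heq : LaurentPolynomial.T (-(t:ℤ)) * g.toLaurent
            = LaurentPolynomial.T (-(((t-1:ℕ)):ℤ)) * S.toLaurent := by
          rw [hS, map_mul, Polynomial.toLaurent_X, ← mul_assoc, ← LaurentPolynomial.T_add,
            show (-(t:ℤ) + 1) = -(((t-1:ℕ)):ℤ) by push_cast [ht1]; ring]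
        rw [heq]
        exact TmulMem Q (t-1) hallIH S hSdeg
      have hq0 : (Q t).coeff 0 ≠ 0 := by
        intro hq0
        have hmem : LaurentPolynomial.T (-(t:ℤ)) * (Q t).toLaurent ∈ Wsp Q (t-1) :=
          key (Q t) hq0 (le_of_eq (hQm t htn).2)
        have hz := pairP_kill L n P Q χ hb (by omega : t - 1 ≤ n) htn (by omega)
          _ hmem
        rw [pairP_T_mul, hb t htn t htn, if_pos rfl] at hz
        exact hχ t htn hz
      refine ⟨hq0, ?_⟩
      set q0 := (Q t).coeff 0 with hq0def
      have hgmem : LaurentPolynomial.T (-(t:ℤ)) * (Q t - Polynomial.C q0).toLaurent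
          ∈ Wsp Q (t-1) := by
        apply key
        · simp [hq0def]
        · apply le_trans (Polynomial.natDegree_sub_le _ _)
          simp [le_of_eq (hQm t htn).2, Polynomial.natDegree_C]
      have hsplit : LaurentPolynomial.T (-(t:ℤ)) * (Q t).toLaurent
          = LaurentPolynomial.T (-(t:ℤ)) * (Q t - Polynomial.C q0).toLaurent
            + q0 • LaurentPolynomial.T (-(t:ℤ)) := by
        have : (Q t).toLaurent = (Q t - Polynomial.C q0).toLaurent + LaurentPolynomial.C q0 := by
          rw [← Polynomial.toLaurent_C, ← map_add]
          congr 1; ring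
        rw [this, mul_add]
        congr 1
        rw [mul_comm, C_mul_eq_smul']
      have hsm : q0 • LaurentPolynomial.T (-(t:ℤ)) ∈ Wsp Q t := by
        have h1 : LaurentPolynomial.T (-(t:ℤ)) * (Q t - Polynomial.C q0).toLaurent ∈ Wsp Q t :=
          Wsp_mono Q (by omega) hgmem
        have := Submodule.sub_mem (Wsp Q t) hgen h1
        rw [hsplit] at this
        simpa using this
      have := Submodule.smul_mem (Wsp Q t) q0⁻¹ hsm
      rwa [smul_smul, inv_mul_cancel₀ hq0, one_smul] at this

end Main

section Main2

variable (L : LaurentPolynomial ℂ →ₗ[ℂ] ℂ) (n : ℕ) (P Q : ℕ → Polynomial ℂ) (χ : ℕ → ℂ)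
variable (hPm : ∀ i ≤ n, (P i).Monic ∧ (P i).natDegree = i)
variable (hQm : ∀ i ≤ n, (Q i).Monic ∧ (Q i).natDegree = i)
variable (hχ : ∀ i ≤ n, χ i ≠ 0)
variable (hb : ∀ i ≤ n, ∀ j ≤ n, Lml L (-(i:ℤ)) (Q i * P j) = if i = j then χ i else 0)

include hPm in
/-- Monic families of each degree span. -/
lemma lemSP : ∀ k, k ≤ n → ∀ f : Polynomial ℂ, f.natDegree ≤ k →
    ∃ lam : ℕ → ℂ, f = ∑ j ∈ Finset.range (k+1), Polynomial.C (lam j) * P j := by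
  intro k
  induction k with
  | zero =>
    intro hk f hf
    have hP0 : P 0 = 1 := ((hPm 0 hk).1.natDegree_eq_zero).mp (hPm 0 hk).2
    exact ⟨fun _ => f.coeff 0, by
      rw [Finset.sum_range_one, hP0, mul_one, ← Polynomial.eq_C_of_natDegree_le_zero hf]⟩
  | succ k IHk =>
    intro hk f hf
    have hPk := hPm (k+1) hk
    set g := f - Polynomial.C (f.coeff (k+1)) * P (k+1) with hg
    have hgdeg : g.natDegree ≤ k := by
      rw [Polynomial.natDegree_le_iff_coeff_eq_zero]
      intro N hN
      rw [hg, Polynomial.coeff_sub, Polynomial.coeff_C_mul]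
      rcases Nat.lt_or_ge (k+1) N with h | h
      · rw [Polynomial.coeff_eq_zero_of_natDegree_lt (by omega : f.natDegree < N),
          Polynomial.coeff_eq_zero_of_natDegree_lt (by omega : (P (k+1)).natDegree < N)]
        ring
      · have hNk : N = k+1 := by omega
        subst hNk
        have : (P (k+1)).coeff (k+1) = 1 := by
          have := hPk.1.coeff_natDegree
          rwa [hPk.2] at this
        rw [this, mul_one, sub_self]
    obtain ⟨lam, hlam⟩ := IHk (by omega) g hgdeg
    refine ⟨Function.update lam (k+1) (f.coeff (k+1)), ?_⟩
    rw [Finset.sum_range_succ, Function.update_self]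
    have hrest : ∑ j ∈ Finset.range (k+1), Polynomial.C (Function.update lam (k+1) (f.coeff (k+1)) j) * P j
        = ∑ j ∈ Finset.range (k+1), Polynomial.C (lam j) * P j := by
      apply Finset.sum_congr rfl
      intro j hj
      rw [Function.update_of_ne (by simp only [Finset.mem_range] at hj; omega)]
    rw [hrest, ← hlam, hg]
    ring

include hQm hχ hb in
lemma lemT1 : ∀ t j : ℕ, j ≤ n → t < j → Lml L (-(t:ℤ)) (P j) = 0 := by
  intro t j hj htj
  have hmem := (lemJ L n P Q χ hQm hχ hb t (by omega)).2
  have hz := pairP_kill L n P Q χ hb (by omega : t ≤ n) hj htj _ hmem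
  have : pairP L (P j) (LaurentPolynomial.T (-(t:ℤ)))
      = Lml L (-(t:ℤ)) (P j) := by
    have h1 : (LaurentPolynomial.T (-(t:ℤ))) = LaurentPolynomial.T (-(t:ℤ)) *
        (1 : Polynomial ℂ).toLaurent := by simp
    rw [h1, pairP_T_mul, one_mul]
  rwa [this] at hz

include hPm hb in
lemma lemT2 : ∀ i, i ≤ n → ∀ s : ℕ, 1 ≤ s → s ≤ i → Lml L (-(s:ℤ)) (Q i) = 0 := by
  intro i hi s hs1 hsi
  obtain ⟨lam, hlam⟩ := lemSP n P hPm (i - s) (by omega) (X ^ (i-s))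
    (le_of_eq (Polynomial.natDegree_X_pow _))
  have key : Lml L (-(i:ℤ)) (X ^ (i-s) * Q i) = Lml L (-(s:ℤ)) (Q i) := by
    rw [Lml_X_pow_mul]
    congr 1
    push_cast [Nat.cast_sub hsi]
    ring
  rw [← key, hlam]
  rw [Finset.sum_mul, map_sum]
  apply Finset.sum_eq_zero
  intro j hj
  simp only [Finset.mem_range] at hj
  rw [mul_assoc, Lml_C_mul, mul_comm (P j) (Q i), hb i hi j (by omega), if_neg (by omega),
    mul_zero]

include hPm hQm hχ hb in
/-- Uniqueness lemma: a polynomial of degree `< m-1` annihilated by the moments vanishes. -/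
lemma lemU : ∀ m, 1 ≤ m → m ≤ n → ∀ U : Polynomial ℂ,
    (∀ k, m - 1 ≤ k → U.coeff k = 0) →
    (∀ s : ℕ, 1 ≤ s → s ≤ m - 1 → Lml L (-(s:ℤ)) U = 0) → U = 0 := by
  intro m hm1 hmn U hUc hUs
  have hUdeg : U.natDegree ≤ m - 1 := by
    rw [Polynomial.natDegree_le_iff_coeff_eq_zero]
    intro N hN; exact hUc N (by omega)
  have hall : ∀ s, s ≤ m - 1 → (LaurentPolynomial.T (-(s:ℤ))) ∈ Wsp Q s :=
    fun s hs => (lemJ L n P Q χ hQm hχ hb s (by omega)).2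
  have hFmem : LaurentPolynomial.T (-((m-1:ℕ):ℤ)) * U.toLaurent ∈ Wsp Q (m-1) :=
    TmulMem Q (m-1) hall U hUdeg
  rw [Wsp, Submodule.mem_span_range_iff_exists_fun] at hFmem
  obtain ⟨cvec, hcvec⟩ := hFmem
  -- coefficients below the top vanish
  have hzero : ∀ l : Fin ((m-1)+1), (l : ℕ) < m - 1 → cvec l = 0 := by
    intro l hl
    have happ := congrArg (pairP L (P (l:ℕ))) hcvec
    rw [map_sum] at happ
    have hLHS : ∑ i : Fin ((m-1)+1), pairP L (P (l:ℕ)) (cvec i • vQf Q (m-1) i)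
        = cvec l * χ (l:ℕ) := by
      rw [Finset.sum_eq_single l]
      · rw [map_smul, smul_eq_mul]
        congr 1
        rw [vQf, pairP_T_mul, hb (l:ℕ) (by omega) (l:ℕ) (by omega), if_pos rfl]
      · intro i _ hne
        rw [map_smul, smul_eq_mul, vQf, pairP_T_mul,
          hb (i:ℕ) (by omega) (l:ℕ) (by omega),
          if_neg (fun h => hne (Fin.ext h)), mul_zero]
      · intro h; exact absurd (Finset.mem_univ l) h
    have hRHS : pairP L (P (l:ℕ)) (LaurentPolynomial.T (-((m-1:ℕ):ℤ)) * U.toLaurent) = 0 := by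
      rw [pairP_T_mul]
      have hPl := Polynomial.as_sum_range' (P (l:ℕ)) ((l:ℕ)+1)
        (by rw [(hPm (l:ℕ) (by omega)).2]; omega)
      rw [show U * P (l:ℕ) = P (l:ℕ) * U by ring, hPl, Finset.sum_mul, map_sum]
      apply Finset.sum_eq_zero
      intro k hk
      simp only [Finset.mem_range] at hk
      rw [Lml_monomial_mul]
      have : (-((m-1:ℕ):ℤ) + (k:ℕ)) = -(((m-1-k:ℕ)):ℤ) := by
        push_cast [Nat.cast_sub (by omega : k ≤ m - 1)]; ring
      rw [this, hUs (m-1-k) (by omega) (by omega), mul_zero]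
    rw [hLHS, hRHS] at happ
    exact (mul_eq_zero.mp happ).resolve_right (hχ (l:ℕ) (by omega))
  -- only the top term remains
  have hlast : LaurentPolynomial.T (-((m-1:ℕ):ℤ)) * U.toLaurent
      = cvec ⟨m-1, by omega⟩ • (LaurentPolynomial.T (-((m-1:ℕ):ℤ)) * (Q (m-1)).toLaurent) := by
    rw [← hcvec, Finset.sum_eq_single (⟨m-1, by omega⟩ : Fin ((m-1)+1))]
    · rw [vQf]
    · intro i _ hne
      have : (i : ℕ) < m - 1 := by
        have hi2 := i.2
        by_contra h
        apply hne
        apply Fin.ext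
        show (i : ℕ) = m - 1
        omega
      rw [hzero i this, zero_smul]
    · intro h; exact absurd (Finset.mem_univ _) h
  set cc := cvec ⟨m-1, by omega⟩
  rw [← T_smul_comm] at hlast
  have hU : U.toLaurent = cc • (Q (m-1)).toLaurent := T_cancel _ _ _ hlast
  have hU2 : U = cc • Q (m-1) := by
    apply Polynomial.toLaurent_injective
    rw [hU]
    have : ((cc • Q (m-1) : Polynomial ℂ)).toLaurent
        = cc • ((Q (m-1)).toLaurent) := by
      rw [show (Polynomial.toLaurent : Polynomial ℂ →+* LaurentPolynomial ℂ) (cc • Q (m-1))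
          = (Polynomial.toLaurentAlg (R := ℂ)) (cc • Q (m-1)) from rfl, map_smul]
      rfl
    rw [this]
  have hcc : cc = 0 := by
    have h1 := hUc (m-1) (le_refl _)
    rw [hU2] at h1
    have h2 : (Q (m-1)).coeff (m-1) = 1 := by
      have := (hQm (m-1) (by omega)).1.coeff_natDegree
      rwa [(hQm (m-1) (by omega)).2] at this
    rw [Polynomial.coeff_smul, h2, smul_eq_mul, mul_one] at h1
    exact h1
  rw [hU2, hcc, zero_smul]

include hPm hQm hχ hb in
/-- The two-term recurrences forced by biorthogonality. -/
lemma lemR : ∀ m, 1 ≤ m → m ≤ n → ∃ a b : ℂ,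
    P m = X * P (m-1) + Polynomial.C a * Q (m-1) ∧
    Q m = X * P (m-1) + Polynomial.C b * Q (m-1) := by
  intro m hm1 hmn
  have hQtop : (Q (m-1)).coeff (m-1) = 1 := by
    have := (hQm (m-1) (by omega)).1.coeff_natDegree
    rwa [(hQm (m-1) (by omega)).2] at this
  have hPtop' : (P (m-1)).coeff (m-1) = 1 := by
    have := (hPm (m-1) (by omega)).1.coeff_natDegree
    rwa [(hPm (m-1) (by omega)).2] at this
  have main : ∀ R : Polynomial ℂ, R.Monic → R.natDegree = m →
      (∀ s : ℕ, 1 ≤ s → s ≤ m - 1 → Lml L (-(s:ℤ)) R = 0) →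
      ∃ a : ℂ, R = X * P (m-1) + Polynomial.C a * Q (m-1) := by
    intro R hRm hRd hRs
    set D := R - X * P (m-1) with hD
    set a := D.coeff (m-1) with ha
    set U := D - Polynomial.C a * Q (m-1) with hUdef
    have hXP : ∀ k, 1 ≤ k → (X * P (m-1)).coeff k = (P (m-1)).coeff (k-1) := by
      intro k hk
      rw [show k = (k-1)+1 by omega, Polynomial.coeff_X_mul, Nat.add_sub_cancel]
    have hUc : ∀ k, m - 1 ≤ k → U.coeff k = 0 := by
      intro k hkm
      rcases Nat.lt_or_ge k m with hkm2 | hkm2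
      · have hk : k = m - 1 := by omega
        subst hk
        rw [hUdef, Polynomial.coeff_sub, Polynomial.coeff_C_mul, hQtop, mul_one, ← ha, sub_self]
      · rw [hUdef, Polynomial.coeff_sub, Polynomial.coeff_C_mul,
          Polynomial.coeff_eq_zero_of_natDegree_lt
            (by rw [(hQm (m-1) (by omega)).2]; omega : (Q (m-1)).natDegree < k),
          mul_zero, sub_zero, hD, Polynomial.coeff_sub, hXP k (by omega)]
        rcases Nat.eq_or_lt_of_le hkm2 with hk | hk
        · subst hk
          have h1 : R.coeff m = 1 := by
            have := hRm.coeff_natDegree; rwa [hRd] at this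
          rw [h1, hPtop', sub_self]
        · rw [Polynomial.coeff_eq_zero_of_natDegree_lt (by omega : R.natDegree < k),
            Polynomial.coeff_eq_zero_of_natDegree_lt
              (by rw [(hPm (m-1) (by omega)).2]; omega : (P (m-1)).natDegree < k - 1),
            sub_self]
    have hUs : ∀ s : ℕ, 1 ≤ s → s ≤ m - 1 → Lml L (-(s:ℤ)) U = 0 := by
      intro s hs1 hs2
      rw [hUdef, hD, map_sub, map_sub, Lml_C_mul]
      rw [hRs s hs1 hs2]
      have hX1 : Lml L (-(s:ℤ)) (X * P (m-1)) = 0 := by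
        rw [show (X : Polynomial ℂ) = X^1 by ring, Lml_X_pow_mul]
        rw [show (-(s:ℤ) + (1:ℕ)) = -(((s-1:ℕ)):ℤ) by push_cast [Nat.cast_sub hs1]; ring]
        exact lemT1 L n P Q χ hQm hχ hb (s-1) (m-1) (by omega) (by omega)
      rw [hX1, lemT2 L n P Q χ hPm hb (m-1) (by omega) s hs1 hs2]
      ring
    have hU0 : U = 0 := lemU L n P Q χ hPm hQm hχ hb m hm1 hmn U hUc hUs
    refine ⟨a, ?_⟩
    rw [show R = U + X * P (m-1) + Polynomial.C a * Q (m-1) by rw [hUdef, hD]; ring, hU0]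
    ring
  obtain ⟨a, hA⟩ := main (P m) (hPm m hmn).1 (hPm m hmn).2
    (fun s h1 h2 => lemT1 L n P Q χ hQm hχ hb s m hmn (by omega))
  obtain ⟨b, hB⟩ := main (Q m) (hQm m hmn).1 (hQm m hmn).2
    (fun s h1 h2 => lemT2 L n P Q χ hPm hb m hmn s h1 (by omega))
  exact ⟨a, b, hA, hB⟩

end Main2

/-- **Proposition 4.7.** A biorthogonal pair of monic polynomial sequences is realizable by
generalized QSP (after rescaling) iff its top-degree pair can be rescaled so that the sum of
squared moduli is identically `1` on the unit circle. -/
theorem stmt_14 (c : ℤ → ℂ) (L : LaurentPolynomial ℂ →ₗ[ℂ] ℂ)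
    (hL : ∀ k : ℤ, L (LaurentPolynomial.T k) = c k)
    (n : ℕ) (hn : 1 ≤ n)
    (P Q : ℕ → Polynomial ℂ)
    (hPm : ∀ i ≤ n, (P i).Monic ∧ (P i).natDegree = i)
    (hQm : ∀ i ≤ n, (Q i).Monic ∧ (Q i).natDegree = i)
    (χ : ℕ → ℂ) (hχ : ∀ i ≤ n, χ i ≠ 0)
    (hbi : ∀ i ≤ n, ∀ j ≤ n,
      L (LaurentPolynomial.T (-(i : ℤ)) * (Q i).toLaurent * (P j).toLaurent) =
        if i = j then χ i else 0) :
    (∃ θ φ : ℕ → ℝ, ∃ α αt : ℕ → ℂ,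
        (∀ i ≤ n, α i ≠ 0 ∧ αt i ≠ 0) ∧
        (∀ i, 1 ≤ i → i ≤ n →
          C (α i)⁻¹ * P i =
            C (Complex.exp ((φ i : ℂ) * Complex.I) * (Real.cos (θ i) : ℂ)) *
              (X * (C (α (i - 1))⁻¹ * P (i - 1))) +
            C (Complex.exp ((φ i : ℂ) * Complex.I) * (Real.sin (θ i) : ℂ)) *
              (C (αt (i - 1))⁻¹ * Q (i - 1)) ∧
          C (αt i)⁻¹ * Q i =
            C ((Real.sin (θ i) : ℂ)) * (X * (C (α (i - 1))⁻¹ * P (i - 1))) -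
            C ((Real.cos (θ i) : ℂ)) * (C (αt (i - 1))⁻¹ * Q (i - 1)))) ↔
    (∃ αn αtn : ℂ, αn ≠ 0 ∧ αtn ≠ 0 ∧
      ∀ z : ℂ, ‖z‖ = 1 →
        ‖(P n).eval z / αn‖ ^ 2 + ‖(Q n).eval z / αtn‖ ^ 2 = 1) := by
  classical
  have hb : ∀ i ≤ n, ∀ j ≤ n, Lml L (-(i:ℤ)) (Q i * P j) = if i = j then χ i else 0 := by
    intro i hi j hj
    rw [Lml_apply, ← hbi i hi j hj]
    congr 1
    rw [map_mul, mul_assoc]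
  constructor
  · -- Forward direction
    rintro ⟨θ, φ, α, αt, hnz, hrec⟩
    have hP0 : P 0 = 1 := ((hPm 0 (by omega)).1.natDegree_eq_zero).mp
      (hPm 0 (by omega)).2
    have hQ0 : Q 0 = 1 := ((hQm 0 (by omega)).1.natDegree_eq_zero).mp
      (hQm 0 (by omega)).2
    set K : ℝ := Complex.normSq ((α 0)⁻¹) + Complex.normSq ((αt 0)⁻¹) with hK
    have hKpos : 0 < K := by
      have h1 : (α 0)⁻¹ ≠ 0 := inv_ne_zero (hnz 0 (by omega)).1
      have := Complex.normSq_pos.mpr h1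
      have h2 := Complex.normSq_nonneg ((αt 0)⁻¹)
      rw [hK]; linarith
    have claim : ∀ i, i ≤ n → ∀ z : ℂ, ‖z‖ = 1 →
        Complex.normSq ((α i)⁻¹ * (P i).eval z) + Complex.normSq ((αt i)⁻¹ * (Q i).eval z) = K := by
      intro i
      induction i with
      | zero =>
        intro _ z _
        rw [hP0, hQ0]; simp [hK]
      | succ i IH =>
        intro hin z hz
        have hIH := IH (by omega) z hz
        obtain ⟨h1, h2⟩ := hrec (i+1) (by omega) hin
        have he1 := congrArg (Polynomial.eval z) h1
        have he2 := congrArg (Polynomial.eval z) h2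
        simp only [Polynomial.eval_add, Polynomial.eval_sub, Polynomial.eval_mul,
          Polynomial.eval_C, Polynomial.eval_X, Nat.add_sub_cancel] at he1 he2
        have hzn : Complex.normSq z = 1 := by
          rw [Complex.normSq_eq_norm_sq, hz]; norm_num
        have := aux_forward_step (θ (i+1)) (φ (i+1)) z ((α i)⁻¹ * (P i).eval z)
          ((αt i)⁻¹ * (Q i).eval z) hzn
        have e1 : (α (i+1))⁻¹ * (P (i+1)).eval z
            = Complex.exp ((φ (i+1) : ℂ) * Complex.I) * (Real.cos (θ (i+1)) : ℂ)
                * (z * ((α i)⁻¹ * (P i).eval z))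
              + Complex.exp ((φ (i+1) : ℂ) * Complex.I) * (Real.sin (θ (i+1)) : ℂ)
                * ((αt i)⁻¹ * (Q i).eval z) := by
          rw [he1]
        have e2 : (αt (i+1))⁻¹ * (Q (i+1)).eval z
            = (Real.sin (θ (i+1)) : ℂ) * (z * ((α i)⁻¹ * (P i).eval z))
              - (Real.cos (θ (i+1)) : ℂ) * ((αt i)⁻¹ * (Q i).eval z) := by
          rw [he2]
        rw [e1, e2, this, hIH]
    refine ⟨(Real.sqrt K : ℂ) * α n, (Real.sqrt K : ℂ) * αt n, ?_, ?_, ?_⟩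
    · exact mul_ne_zero (by
        simp only [ne_eq, Complex.ofReal_eq_zero]
        positivity) (hnz n (le_refl n)).1
    · exact mul_ne_zero (by
        simp only [ne_eq, Complex.ofReal_eq_zero]
        positivity) (hnz n (le_refl n)).2
    · intro z hz
      have hcl := claim n (le_refl n) z hz
      rw [Complex.sq_norm, Complex.sq_norm, Complex.normSq_div, Complex.normSq_div]
      have hsqK : Complex.normSq ((Real.sqrt K : ℂ)) = K := by
        rw [Complex.normSq_ofReal, Real.mul_self_sqrt hKpos.le]
      rw [Complex.normSq_mul, Complex.normSq_mul, hsqK]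
      rw [Complex.normSq_mul, Complex.normSq_inv] at hcl
      rw [Complex.normSq_mul, Complex.normSq_inv] at hcl
      have hα : Complex.normSq (α n) ≠ 0 := Complex.normSq_pos.mpr (hnz n (le_refl n)).1 |>.ne'
      have hαt : Complex.normSq (αt n) ≠ 0 := Complex.normSq_pos.mpr (hnz n (le_refl n)).2 |>.ne'
      field_simp at hcl ⊢
      nlinarith [hcl, hKpos]
  · -- Backward direction
    rintro ⟨αn, αtn, hαn, hαtn, hcirc⟩
    have hR := lemR L n P Q χ hPm hQm hχ hb
    choose! a b hPQ using hR
    have hQ0ne : ∀ t, t ≤ n → (Q t).coeff 0 ≠ 0 :=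
      fun t ht => (lemJ L n P Q χ hQm hχ hb t ht).1
    have hC0 : ∀ z : ℂ, ‖z‖ = 1 →
        (Complex.normSq αn)⁻¹ * Complex.normSq ((P n).eval z)
          + (Complex.normSq αtn)⁻¹ * Complex.normSq ((Q n).eval z) = 1 := by
      intro z hz
      have h := hcirc z hz
      rw [Complex.sq_norm, Complex.sq_norm, Complex.normSq_div, Complex.normSq_div] at h
      rw [div_eq_mul_inv, div_eq_mul_inv] at h
      linarith [h]
    -- cross-relation extractor
    have crossOf : ∀ m, 1 ≤ m → m ≤ n → ∀ u v : ℝ, 0 < u → 0 < v →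
        (∀ z : ℂ, ‖z‖ = 1 →
          u * Complex.normSq ((P m).eval z) + v * Complex.normSq ((Q m).eval z) = 1) →
        ((u:ℂ) * a m + (v:ℂ) * b m = 0 ∧ a m ≠ 0 ∧ b m ≠ 0) := by
      intro m hm1 hmn u v hu hv hcm
      have hPdeg : (P m).natDegree ≤ m := le_of_eq (hPm m hmn).2
      have hQdeg : (Q m).natDegree ≤ m := le_of_eq (hQm m hmn).2
      have hid : Polynomial.C ((u:ℝ):ℂ) * (P m * revc m (P m))
          + Polynomial.C ((v:ℝ):ℂ) * (Q m * revc m (Q m)) = X ^ m := by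
        apply aux_poly_eq_of_circle
        intro z hz
        simp only [Polynomial.eval_add, Polynomial.eval_mul, Polynomial.eval_C,
          Polynomial.eval_pow, Polynomial.eval_X]
        rw [revc_eval m (P m) hPdeg z hz, revc_eval m (Q m) hQdeg z hz]
        have h1 : (P m).eval z * (z^m * (starRingEnd ℂ) ((P m).eval z))
            = z^m * (Complex.normSq ((P m).eval z) : ℂ) := by
          rw [← Complex.mul_conj]; ring
        have h2 : (Q m).eval z * (z^m * (starRingEnd ℂ) ((Q m).eval z))
            = z^m * (Complex.normSq ((Q m).eval z) : ℂ) := by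
          rw [← Complex.mul_conj]; ring
        rw [h1, h2]
        rw [show ((u:ℝ):ℂ) * (z^m * (Complex.normSq ((P m).eval z) : ℂ))
            + ((v:ℝ):ℂ) * (z^m * (Complex.normSq ((Q m).eval z) : ℂ))
            = z^m * (((u * Complex.normSq ((P m).eval z)
              + v * Complex.normSq ((Q m).eval z) : ℝ)) : ℂ) by push_cast; ring]
        rw [hcm z hz]
        simp
      have hco := congrArg (fun p => Polynomial.coeff p (m+m)) hid
      rw [Polynomial.coeff_add, Polynomial.coeff_C_mul, Polynomial.coeff_C_mul,
        aux_coeff_mul_top _ _ m m hPdeg (revc_natDegree_le _ _),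
        aux_coeff_mul_top _ _ m m hQdeg (revc_natDegree_le _ _),
        revc_coeff_top, revc_coeff_top, Polynomial.coeff_X_pow, if_neg (by omega)] at hco
      have hPtop : (P m).coeff m = 1 := by
        have := (hPm m hmn).1.coeff_natDegree; rwa [(hPm m hmn).2] at this
      have hQtop : (Q m).coeff m = 1 := by
        have := (hQm m hmn).1.coeff_natDegree; rwa [(hQm m hmn).2] at this
      rw [hPtop, hQtop, one_mul, one_mul] at hco
      have hP0c : (P m).coeff 0 = a m * (Q (m-1)).coeff 0 := by
        rw [(hPQ m hm1 hmn).1, Polynomial.coeff_add, Polynomial.coeff_C_mul,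
          Polynomial.mul_coeff_zero, Polynomial.coeff_X_zero, zero_mul, zero_add]
      have hQ0c : (Q m).coeff 0 = b m * (Q (m-1)).coeff 0 := by
        rw [(hPQ m hm1 hmn).2, Polynomial.coeff_add, Polynomial.coeff_C_mul,
          Polynomial.mul_coeff_zero, Polynomial.coeff_X_zero, zero_mul, zero_add]
      rw [hP0c, hQ0c, map_mul, map_mul] at hco
      have hQc := hQ0ne (m-1) (by omega)
      have hfac : (((u:ℝ):ℂ) * (starRingEnd ℂ) (a m) + ((v:ℝ):ℂ) * (starRingEnd ℂ) (b m))
          * (starRingEnd ℂ) ((Q (m-1)).coeff 0) = 0 := by linear_combination hco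
      have h0 : ((u:ℝ):ℂ) * (starRingEnd ℂ) (a m) + ((v:ℝ):ℂ) * (starRingEnd ℂ) (b m) = 0 := by
        rcases mul_eq_zero.mp hfac with h | h
        · exact h
        · exfalso
          apply hQc
          have := congrArg (starRingEnd ℂ) h
          simpa using this
      have hcross : ((u:ℝ):ℂ) * a m + ((v:ℝ):ℂ) * b m = 0 := by
        have := congrArg (starRingEnd ℂ) h0
        simpa [map_add, map_mul, Complex.conj_conj, Complex.conj_ofReal] using this
      have hbne : b m ≠ 0 := by
        intro hb0
        apply hQ0ne m hmn
        rw [hQ0c, hb0, zero_mul]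
      have hane : a m ≠ 0 := by
        intro ha0
        rw [ha0, mul_zero, zero_add] at hcross
        exact hbne (by
          have hvne : ((v:ℝ):ℂ) ≠ 0 := by exact_mod_cast hv.ne'
          exact (mul_eq_zero.mp hcross).resolve_left hvne)
      exact ⟨hcross, hane, hbne⟩
    -- downward induction
    let W : ℕ → ℝ × ℝ := fun k => Nat.rec ((Complex.normSq αn)⁻¹, (Complex.normSq αtn)⁻¹)
      (fun k p => (p.1 + p.2,
        p.1 * Complex.normSq (a (n - k)) + p.2 * Complex.normSq (b (n - k)))) k
    have hW0 : W 0 = ((Complex.normSq αn)⁻¹, (Complex.normSq αtn)⁻¹) := rfl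
    have hWs1 : ∀ k, (W (k+1)).1 = (W k).1 + (W k).2 := fun k => rfl
    have hWs2 : ∀ k, (W (k+1)).2
        = (W k).1 * Complex.normSq (a (n - k)) + (W k).2 * Complex.normSq (b (n - k)) :=
      fun k => rfl
    have main : ∀ k, k ≤ n → 0 < (W k).1 ∧ 0 < (W k).2 ∧
        ∀ z : ℂ, ‖z‖ = 1 →
          (W k).1 * Complex.normSq ((P (n-k)).eval z)
            + (W k).2 * Complex.normSq ((Q (n-k)).eval z) = 1 := by
      intro k
      induction k with
      | zero =>
        intro _
        refine ⟨inv_pos.mpr (Complex.normSq_pos.mpr hαn),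
          inv_pos.mpr (Complex.normSq_pos.mpr hαtn), ?_⟩
        intro z hz
        simpa [hW0] using hC0 z hz
      | succ k IHk =>
        intro hk
        obtain ⟨hu, hv, hck⟩ := IHk (by omega)
        have hm1 : 1 ≤ n - k := by omega
        have hmn : n - k ≤ n := by omega
        obtain ⟨hcross, hane, hbne⟩ := crossOf (n-k) hm1 hmn (W k).1 (W k).2 hu hv hck
        have hm' : n - (k+1) = (n - k) - 1 := by omega
        refine ⟨by rw [hWs1]; exact add_pos hu hv, ?_, ?_⟩
        · rw [hWs2]
          have h1 : 0 ≤ (W k).1 * Complex.normSq (a (n-k)) :=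
            mul_nonneg hu.le (Complex.normSq_nonneg _)
          have h2 : 0 < (W k).2 * Complex.normSq (b (n-k)) :=
            mul_pos hv (Complex.normSq_pos.mpr hbne)
          linarith
        · intro z hz
          have hzn : Complex.normSq z = 1 := by rw [Complex.normSq_eq_norm_sq, hz]; norm_num
          have he1 : (P (n-k)).eval z
              = z * (P (n-k-1)).eval z + a (n-k) * (Q (n-k-1)).eval z := by
            conv_lhs => rw [(hPQ (n-k) hm1 hmn).1]
            simp [Polynomial.eval_add, Polynomial.eval_mul]
          have he2 : (Q (n-k)).eval z
              = z * (P (n-k-1)).eval z + b (n-k) * (Q (n-k-1)).eval z := by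
            conv_lhs => rw [(hPQ (n-k) hm1 hmn).2]
            simp [Polynomial.eval_add, Polynomial.eval_mul]
          have hstep := aux_backward_step (W k).1 (W k).2 (a (n-k)) (b (n-k)) z
            ((P (n-k-1)).eval z) ((Q (n-k-1)).eval z) hzn hcross
          rw [hWs1, hWs2, hm']
          rw [← hstep, ← he1, ← he2]
          exact hck z hz
    -- level-indexed data
    set uu : ℕ → ℝ := fun m => (W (n - m)).1 with huudef
    set vv : ℕ → ℝ := fun m => (W (n - m)).2 with hvvdef
    have huu : ∀ m, m ≤ n → 0 < uu m := fun m hm => (main (n-m) (by omega)).1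
    have hvv : ∀ m, m ≤ n → 0 < vv m := fun m hm => (main (n-m) (by omega)).2.1
    have hcircm : ∀ m, m ≤ n → ∀ z : ℂ, ‖z‖ = 1 →
        uu m * Complex.normSq ((P m).eval z) + vv m * Complex.normSq ((Q m).eval z) = 1 := by
      intro m hm z hz
      have := (main (n-m) (by omega)).2.2 z hz
      rwa [show n - (n-m) = m by omega] at this
    have hcrossm : ∀ m, 1 ≤ m → m ≤ n →
        ((uu m : ℂ) * a m + (vv m : ℂ) * b m = 0 ∧ a m ≠ 0 ∧ b m ≠ 0) :=
      fun m h1 h2 => crossOf m h1 h2 (uu m) (vv m) (huu m h2) (hvv m h2) (hcircm m h2)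
    have hchain1 : ∀ m, 1 ≤ m → m ≤ n → uu (m-1) = uu m + vv m := by
      intro m h1 h2
      show (W (n - (m-1))).1 = _
      rw [show n - (m-1) = (n-m)+1 by omega, hWs1]
    have hchain2 : ∀ m, 1 ≤ m → m ≤ n →
        vv (m-1) = uu m * Complex.normSq (a m) + vv m * Complex.normSq (b m) := by
      intro m h1 h2
      show (W (n - (m-1))).2 = _
      rw [show n - (m-1) = (n-m)+1 by omega, hWs2, show n - (n-m) = m by omega]
    -- construction
    set tt : ℕ → ℝ := fun m => Real.sqrt (vv m / uu m) with httdef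
    set θf : ℕ → ℝ := fun m => Real.arctan (tt m) with hθdef
    set rr : ℕ → ℂ := fun m => a m * ((Real.sqrt (uu m / vv m) : ℝ) : ℂ) with hrrdef
    set φf : ℕ → ℝ := fun m =>
      if m < n then Complex.arg (((tt m : ℝ) : ℂ) / rr (m+1)) else 0 with hφdef
    set xx : ℕ → ℂ := fun m => ∏ i ∈ Finset.Icc 1 m,
      (Complex.exp ((φf i : ℂ) * Complex.I) * ((Real.cos (θf i) : ℝ) : ℂ)) with hxxdef
    set yy : ℕ → ℂ := fun m =>
      if m = 0 then rr 1 else ((Real.sin (θf m) : ℝ) : ℂ) * xx (m-1) with hyydef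
    have hcospos : ∀ m, 0 < Real.cos (θf m) := by
      intro m
      rw [hθdef]
      simp only
      rw [Real.cos_arctan]
      positivity
    have httpos : ∀ m, 1 ≤ m → m ≤ n → 0 < tt m := by
      intro m h1 h2
      exact Real.sqrt_pos.mpr (div_pos (hvv m h2) (huu m h2))
    have hsin_eq : ∀ m, Real.sin (θf m) = tt m * Real.cos (θf m) := by
      intro m
      rw [hθdef]
      simp only
      rw [Real.sin_arctan, Real.cos_arctan]
      ring
    have hsinpos : ∀ m, 1 ≤ m → m ≤ n → 0 < Real.sin (θf m) := fun m h1 h2 => by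
      rw [hsin_eq]; exact mul_pos (httpos m h1 h2) (hcospos m)
    have hxxne : ∀ m, xx m ≠ 0 := by
      intro m
      apply Finset.prod_ne_zero_iff.mpr
      intro i _
      exact mul_ne_zero (Complex.exp_ne_zero _)
        (by exact_mod_cast (hcospos i).ne')
    have hrrne : ∀ m, 1 ≤ m → m ≤ n → rr m ≠ 0 := by
      intro m h1 h2
      apply mul_ne_zero (hcrossm m h1 h2).2.1
      rw [Complex.ofReal_ne_zero]
      exact (Real.sqrt_pos.mpr (div_pos (huu m h2) (hvv m h2))).ne'
    -- square relation between u,v at consecutive levels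
    have hmod : ∀ m, 1 ≤ m → m < n → Complex.normSq (rr (m+1)) = (tt m)^2 := by
      intro m h1 h2
      have h2' : m + 1 ≤ n := by omega
      have hc := (hcrossm (m+1) (by omega) h2').1
      have hsq : (uu (m+1))^2 * Complex.normSq (a (m+1))
          = (vv (m+1))^2 * Complex.normSq (b (m+1)) := by
        have hneg : ((uu (m+1) : ℂ)) * a (m+1) = -(((vv (m+1)) : ℂ) * b (m+1)) := by
          linear_combination hc
        have h3 := congrArg Complex.normSq hneg
        rw [Complex.normSq_neg, Complex.normSq_mul, Complex.normSq_mul,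
          Complex.normSq_ofReal, Complex.normSq_ofReal] at h3
        nlinarith [h3]
      have hch1 := hchain1 (m+1) (by omega) h2'
      have hch2 := hchain2 (m+1) (by omega) h2'
      rw [Nat.add_sub_cancel] at hch1 hch2
      have hiden : vv m * vv (m+1) = uu (m+1) * Complex.normSq (a (m+1)) * uu m := by
        rw [hch1, hch2]
        nlinarith [hsq]
      have e1 : Complex.normSq (rr (m+1))
          = Complex.normSq (a (m+1)) * (uu (m+1) / vv (m+1)) := by
        rw [hrrdef]
        simp only
        rw [Complex.normSq_mul, Complex.normSq_ofReal,
          Real.mul_self_sqrt (le_of_lt (div_pos (huu _ h2') (hvv _ h2')))]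
      have e2 : (tt m)^2 = vv m / uu m := by
        rw [httdef]
        simp only
        rw [Real.sq_sqrt (le_of_lt (div_pos (hvv m (by omega)) (huu m (by omega))))]
      rw [e1, e2]
      have hu1 : uu m ≠ 0 := (huu m (by omega)).ne'
      have hv1 : vv (m+1) ≠ 0 := (hvv (m+1) h2').ne'
      field_simp
      linear_combination -hiden
    have hexp : ∀ m, 1 ≤ m → m < n →
        Complex.exp ((φf m : ℂ) * Complex.I) = ((tt m : ℝ) : ℂ) / rr (m+1) := by
      intro m h1 h2
      have hrne : rr (m+1) ≠ 0 := hrrne (m+1) (by omega) (by omega)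
      have habsr : ‖rr (m+1)‖ = tt m := by
        have h3 : ‖rr (m+1)‖ ^ 2 = (tt m)^2 := by
          rw [Complex.sq_norm]; exact hmod m h1 h2
        nlinarith [norm_nonneg (rr (m+1)), (httpos m h1 (by omega)).le, h3]
      have habs : ‖((tt m : ℝ) : ℂ) / rr (m+1)‖ = 1 := by
        rw [norm_div, Complex.norm_real, Real.norm_of_nonneg (httpos m h1 (by omega)).le, habsr,
          div_self (httpos m h1 (by omega)).ne']
      have hw := Complex.norm_mul_exp_arg_mul_I (((tt m : ℝ) : ℂ) / rr (m+1))
      rw [habs] at hw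
      rw [Complex.ofReal_one, one_mul] at hw
      have hφm : φf m = Complex.arg (((tt m : ℝ) : ℂ) / rr (m+1)) := by
        rw [hφdef]; simp only; rw [if_pos h2]
      rw [hφm]
      exact hw
    have hyx : ∀ m, 1 ≤ m → m ≤ n → yy (m-1) = rr m * xx (m-1) := by
      intro m h1 h2
      rcases Nat.eq_or_lt_of_le h1 with h | h
      · rw [← h]
        show yy 0 = rr 1 * xx 0
        rw [hyydef, hxxdef]
        simp
      · have hm2 : 2 ≤ m := h
        have hm1n : m - 1 < n := by omega
        have e0 : yy (m-1) = ((Real.sin (θf (m-1)) : ℝ) : ℂ) * xx (m-2) := by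
          rw [hyydef]
          simp only
          rw [if_neg (by omega)]
          rw [show m - 1 - 1 = m - 2 by omega]
        have e1 : xx (m-1) = xx (m-2)
            * (Complex.exp ((φf (m-1) : ℂ) * Complex.I) * ((Real.cos (θf (m-1)) : ℝ) : ℂ)) := by
          rw [hxxdef]
          simp only
          rw [show m - 1 = (m-2)+1 by omega, Finset.prod_Icc_succ_top (by omega : 1 ≤ m-2+1)]
        have hrm : rr m ≠ 0 := hrrne m (by omega) h2
        rw [e0, e1, hexp (m-1) (by omega) hm1n, show (m-1)+1 = m by omega, hsin_eq (m-1),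
          Complex.ofReal_mul]
        field_simp
    -- provide witnesses
    refine ⟨θf, φf, fun m => (xx m)⁻¹, fun m => (yy m)⁻¹, ?_, ?_⟩
    · intro i hi
      refine ⟨inv_ne_zero (hxxne i), inv_ne_zero ?_⟩
      rcases Nat.eq_zero_or_pos i with rfl | hi1
      · show yy 0 ≠ 0
        have hy0 : yy 0 = rr 1 := by simp [hyydef]
        rw [hy0]
        exact hrrne 1 (le_refl 1) hn
      · rw [hyydef]; simp only; rw [if_neg (by omega)]
        exact mul_ne_zero (by exact_mod_cast (hsinpos i hi1 hi).ne') (hxxne _)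
    · intro i hi1 hin
      have hupos := huu i hin
      have hvpos := hvv i hin
      have hcri := hcrossm i hi1 hin
      -- scalar identities
      have s1 : xx i = (Complex.exp ((φf i : ℂ) * Complex.I) * ((Real.cos (θf i) : ℝ) : ℂ))
          * xx (i-1) := by
        rw [hxxdef]
        simp only
        rw [show i = (i-1)+1 by omega, Finset.prod_Icc_succ_top (by omega : 1 ≤ (i-1)+1),
          show (i-1)+1-1 = i-1 by omega]
        ring
      have hstt : ((tt i : ℝ) : ℂ) * rr i = a i := by
        rw [hrrdef]
        simp only
        rw [show ((tt i : ℝ) : ℂ) * (a i * ((Real.sqrt (uu i / vv i) : ℝ) : ℂ))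
            = a i * (((tt i * Real.sqrt (uu i / vv i) : ℝ)) : ℂ) by push_cast; ring]
        rw [httdef]
        simp only
        rw [aux_sqrt_cancel (uu i) (vv i) hupos hvpos, Complex.ofReal_one, mul_one]
      have httb : ((tt i : ℝ) : ℂ) * b i = -(rr i) := by
        have hbv : b i = -(((uu i / vv i : ℝ)) : ℂ) * a i := by
          have hvne : ((vv i : ℝ) : ℂ) ≠ 0 := by exact_mod_cast (hvv i hin).ne'
          have := hcri.1
          push_cast
          field_simp
          linear_combination this
        rw [hbv, hrrdef]
        simp only
        rw [show ((tt i : ℝ) : ℂ) * (-(((uu i / vv i : ℝ)) : ℂ) * a i)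
            = -(a i * (((tt i * (uu i / vv i) : ℝ)) : ℂ)) by push_cast; ring]
        rw [httdef]
        simp only
        rw [aux_sqrt_flip (uu i) (vv i) hupos hvpos]
      have s2 : xx i * a i = (Complex.exp ((φf i : ℂ) * Complex.I) * ((Real.sin (θf i) : ℝ) : ℂ))
          * yy (i-1) := by
        rw [hyx i hi1 hin, s1, hsin_eq i, Complex.ofReal_mul]
        linear_combination (-(Complex.exp ((φf i : ℂ) * Complex.I) * ((Real.cos (θf i) : ℝ) : ℂ)
          * xx (i-1))) * hstt
      have s3 : yy i = ((Real.sin (θf i) : ℝ) : ℂ) * xx (i-1) := by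
        rw [hyydef]
        simp only
        rw [if_neg (by omega)]
      have s4 : yy i * b i = -(((Real.cos (θf i) : ℝ) : ℂ) * yy (i-1)) := by
        rw [s3, hyx i hi1 hin, hsin_eq i, Complex.ofReal_mul]
        linear_combination (((Real.cos (θf i) : ℝ) : ℂ) * xx (i-1)) * httb
      obtain ⟨hPrec, hQrec⟩ := hPQ i hi1 hin
      have s1C : Polynomial.C (xx i)
          = Polynomial.C (Complex.exp ((φf i : ℂ) * Complex.I) * ((Real.cos (θf i) : ℝ) : ℂ))
            * Polynomial.C (xx (i-1)) := by
        rw [← map_mul]; exact congrArg Polynomial.C s1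
      have s2C : Polynomial.C (xx i) * Polynomial.C (a i)
          = Polynomial.C (Complex.exp ((φf i : ℂ) * Complex.I) * ((Real.sin (θf i) : ℝ) : ℂ))
            * Polynomial.C (yy (i-1)) := by
        rw [← map_mul, ← map_mul]; exact congrArg Polynomial.C s2
      have s3C : Polynomial.C (yy i)
          = Polynomial.C (((Real.sin (θf i) : ℝ) : ℂ)) * Polynomial.C (xx (i-1)) := by
        rw [← map_mul]; exact congrArg Polynomial.C s3
      have s4C : Polynomial.C (yy i) * Polynomial.C (b i)
          = -(Polynomial.C (((Real.cos (θf i) : ℝ) : ℂ)) * Polynomial.C (yy (i-1))) := by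
        rw [← map_mul, ← map_mul, ← map_neg]; exact congrArg Polynomial.C s4
      constructor
      · simp only [inv_inv]
        rw [hPrec]
        linear_combination (X * P (i-1)) * s1C + (Q (i-1)) * s2C
      · simp only [inv_inv]
        rw [hQrec]
        linear_combination (X * P (i-1)) * s3C + (Q (i-1)) * s4C
end
end
end

section
/- Let n ≥ 1 and let θ_1, …, θ_n and φ_1, …, φ_n be real numbers. Define complex polynomials by P_0 = 1, Q_0 = 1, and for 1 ≤ j ≤ n: P_j(z) = e^{iφ_j}·cosh θ_j·z·P_{j−1}(z) + i·e^{iφ_j}·sinh θ_j·Q_{j−1}(z) and Q_j(z) = i·sinh θ_j·z·P_{j−1}(z) − cosh θ_j·Q_{j−1}(z). Define the rescaled polynomials P̂_j = (Π_{k=1}^{j} e^{−iφ_k}/cosh θ_k)·P_j and Q̃_j = (−1)^j·(Π_{k=1}^{j} 1/cosh θ_k)·Q_j. Then: (a) each P̂_j is monic of degree j; (b) there exist complex numbers ν_1, …, ν_n with |ν_j| = |tanh θ_j| < 1 such that the Szegő recurrences hold: P̂_j(z) = z·P̂_{j−1}(z) − conj(ν_j)·Q̃_{j−1}(z) and Q̃_j(z)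 = Q̃_{j−1}(z) − ν_j·z·P̂_{j−1}(z) for all 1 ≤ j ≤ n; (c) for every 0 ≤ j ≤ n, Q̃_j is the conjugate-reversed polynomial of P̂_j, i.e. if P̂_j(z) = Σ_{k=0}^{j} p_k·z^k then Q̃_j(z) = Σ_{k=0}^{j} conj(p_{j−k})·z^k. -/
open Polynomial BigOperators

private lemma sum_coeff_aux (N : ℕ) (a : ℕ → ℂ) (i : ℕ) :
    (∑ k ∈ Finset.range (N+1), C (a k) * X ^ k).coeff i
      = if i ≤ N then a i else 0 := by
  rw [finset_sum_coeff]
  simp only [coeff_C_mul, coeff_X_pow, mul_ite, mul_one, mul_zero]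
  simp [Finset.sum_ite_eq, Nat.lt_succ_iff]

private lemma sum_natDegree_aux (N : ℕ) (a : ℕ → ℂ) :
    (∑ k ∈ Finset.range (N+1), C (a k) * X ^ k).natDegree ≤ N := by
  refine Polynomial.natDegree_sum_le_of_forall_le _ _ ?_
  intro k hk
  refine le_trans (natDegree_C_mul_le _ _) ?_
  simpa [natDegree_X_pow] using Nat.lt_succ_iff.mp (Finset.mem_range.mp hk)

private lemma abs_tanh_lt_one (x : ℝ) : |Real.tanh x| < 1 := by
  rw [Real.tanh_eq_sinh_div_cosh, abs_div, abs_of_pos (Real.cosh_pos x),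
    div_lt_one (Real.cosh_pos x)]
  nlinarith [sq_abs (Real.sinh x), Real.cosh_pos x, Real.cosh_sq_sub_sinh_sq x,
    abs_nonneg (Real.sinh x)]

/-- **Algebraic core of Proposition 5.3.**  The SU(1,1)-QSP sequences, after the indicated
rescaling, are monic, satisfy the Szegő recurrence with Verblunsky coefficients of modulus
`|tanh θ_j| < 1`, and the companion sequence is the conjugate-reversed polynomial sequence. -/
theorem stmt_16 (n : ℕ) (hn : 1 ≤ n) (θ φ : ℕ → ℝ)
    (P Q : ℕ → Polynomial ℂ) (hP0 : P 0 = 1) (hQ0 : Q 0 = 1)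
    (hrecP : ∀ j, 1 ≤ j → j ≤ n →
      P j = C (Complex.exp ((φ j : ℂ) * Complex.I) * (Real.cosh (θ j) : ℂ)) * (X * P (j - 1)) +
        C (Complex.I * Complex.exp ((φ j : ℂ) * Complex.I) * (Real.sinh (θ j) : ℂ)) * Q (j - 1))
    (hrecQ : ∀ j, 1 ≤ j → j ≤ n →
      Q j = C (Complex.I * (Real.sinh (θ j) : ℂ)) * (X * P (j - 1)) -
        C ((Real.cosh (θ j) : ℂ)) * Q (j - 1))
    (Phat Qt : ℕ → Polynomial ℂ)
    (hPhat : ∀ j, Phat j =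
      C (∏ k ∈ Finset.Icc 1 j,
        (Complex.exp (-(φ k : ℂ) * Complex.I) / (Real.cosh (θ k) : ℂ))) * P j)
    (hQt : ∀ j, Qt j =
      C ((-1 : ℂ) ^ j * ∏ k ∈ Finset.Icc 1 j, ((Real.cosh (θ k) : ℂ))⁻¹) * Q j) :
    (∀ j ≤ n, (Phat j).Monic ∧ (Phat j).natDegree = j) ∧
    (∃ ν : ℕ → ℂ,
      (∀ j, 1 ≤ j → j ≤ n →
        ‖ν j‖ = |Real.tanh (θ j)| ∧ ‖ν j‖ < 1) ∧
      (∀ j, 1 ≤ j → j ≤ n →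
        Phat j = X * Phat (j - 1) - C ((starRingEnd ℂ) (ν j)) * Qt (j - 1) ∧
        Qt j = Qt (j - 1) - C (ν j) * (X * Phat (j - 1)))) ∧
    (∀ j ≤ n, Qt j = ∑ k ∈ Finset.range (j + 1),
      C ((starRingEnd ℂ) ((Phat j).coeff (j - k))) * X ^ k) := by
  have hch : ∀ k : ℕ, (Real.cosh (θ k) : ℂ) ≠ 0 := fun k =>
    Complex.ofReal_ne_zero.mpr (ne_of_gt (Real.cosh_pos _))
  set E : ℕ → ℂ := fun j => ∏ k ∈ Finset.Icc 1 j, Complex.exp (-(φ k : ℂ) * Complex.I)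
    with hE
  have hEabs : ∀ j, ‖E j‖ = 1 := by
    intro j
    rw [hE]
    simp only [norm_prod]
    refine Finset.prod_eq_one fun k _ => ?_
    rw [Complex.norm_exp]
    simp
  have hEne : ∀ j, E j ≠ 0 := by
    intro j h
    have := hEabs j
    rw [h] at this
    simp at this
  have hEconj : ∀ j, (starRingEnd ℂ) (E j) = (E j)⁻¹ := by
    intro j
    rw [Complex.inv_eq_conj]
    rw [hEabs]
  set ν : ℕ → ℂ := fun j =>
    Complex.I * (-1 : ℂ) ^ (j - 1) * (Real.tanh (θ j) : ℂ) * (E (j - 1))⁻¹ with hν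
  have hexp : ∀ k : ℕ, Complex.exp (-(φ k : ℂ) * Complex.I) *
      Complex.exp ((φ k : ℂ) * Complex.I) = 1 := by
    intro k
    rw [← Complex.exp_add, neg_mul, neg_add_cancel, Complex.exp_zero]
  have htanh : ∀ k : ℕ, (Real.tanh (θ k) : ℂ) =
      (Real.sinh (θ k) : ℂ) / (Real.cosh (θ k) : ℂ) := by
    intro k
    rw [Real.tanh_eq_sinh_div_cosh]
    push_cast
    ring
  have hneg : ∀ m : ℕ, ((-1 : ℂ) ^ m) * ((-1 : ℂ) ^ m) = 1 := by
    intro m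
    rw [← mul_pow]
    norm_num
  -- the Szegő recurrence
  have hrec : ∀ j, 1 ≤ j → j ≤ n →
      Phat j = X * Phat (j - 1) - C ((starRingEnd ℂ) (ν j)) * Qt (j - 1) ∧
      Qt j = Qt (j - 1) - C (ν j) * (X * Phat (j - 1)) := by
    intro j h1 h2
    obtain ⟨m, rfl⟩ : ∃ m, j = m + 1 := ⟨j - 1, by omega⟩
    simp only [Nat.add_sub_cancel]
    have hμ : (starRingEnd ℂ) (ν (m+1)) =
        -Complex.I * (-1 : ℂ) ^ m * (Real.tanh (θ (m+1)) : ℂ) * E m := by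
      simp only [hν, Nat.add_sub_cancel, map_mul, map_inv₀, Complex.conj_I, map_pow,
        map_neg, map_one, Complex.conj_ofReal, hEconj, inv_inv]
    have hν1 : ν (m+1) = Complex.I * (-1 : ℂ) ^ m * (Real.tanh (θ (m+1)) : ℂ) * (E m)⁻¹ := by
      simp only [hν, Nat.add_sub_cancel]
    have hcEH : ∀ j : ℕ, (∏ k ∈ Finset.Icc 1 j,
        (Complex.exp (-(φ k : ℂ) * Complex.I) / (Real.cosh (θ k) : ℂ))) =
        E j * ∏ k ∈ Finset.Icc 1 j, ((Real.cosh (θ k) : ℂ))⁻¹ := by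
      intro j
      rw [hE, ← Finset.prod_mul_distrib]
      exact Finset.prod_congr rfl fun k _ => div_eq_mul_inv _ _
    constructor
    · rw [hPhat (m+1), hrecP (m+1) (by omega) h2, hPhat m, hQt m]
      simp only [Nat.add_sub_cancel]
      have hcc : ((Real.cosh (θ (m+1)) : ℂ))⁻¹ * (Real.cosh (θ (m+1)) : ℂ) = 1 :=
        inv_mul_cancel₀ (hch (m+1))
      have key1 : (Complex.exp (-(φ (m+1) : ℂ) * Complex.I) / (Real.cosh (θ (m+1)) : ℂ)) *
          (Complex.exp ((φ (m+1) : ℂ) * Complex.I) * (Real.cosh (θ (m+1)) : ℂ)) = 1 := by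
        rw [div_eq_mul_inv]
        linear_combination (((Real.cosh (θ (m+1)) : ℂ))⁻¹ * (Real.cosh (θ (m+1)) : ℂ)) *
          hexp (m+1) + hcc
      have t1 : (∏ k ∈ Finset.Icc 1 (m+1),
            (Complex.exp (-(φ k : ℂ) * Complex.I) / (Real.cosh (θ k) : ℂ))) *
          (Complex.exp ((φ (m+1) : ℂ) * Complex.I) * (Real.cosh (θ (m+1)) : ℂ)) =
          (∏ k ∈ Finset.Icc 1 m,
            (Complex.exp (-(φ k : ℂ) * Complex.I) / (Real.cosh (θ k) : ℂ))) := by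
        rw [Finset.prod_Icc_succ_top (by omega : 1 ≤ m + 1), mul_assoc, key1, mul_one]
      have t2 : (∏ k ∈ Finset.Icc 1 (m+1),
            (Complex.exp (-(φ k : ℂ) * Complex.I) / (Real.cosh (θ k) : ℂ))) *
          (Complex.I * Complex.exp ((φ (m+1) : ℂ) * Complex.I) * (Real.sinh (θ (m+1)) : ℂ)) =
          -((starRingEnd ℂ) (ν (m+1)) *
            ((-1 : ℂ) ^ m * ∏ k ∈ Finset.Icc 1 m, ((Real.cosh (θ k) : ℂ))⁻¹)) := by
        rw [Finset.prod_Icc_succ_top (by omega : 1 ≤ m + 1), hμ, htanh (m+1), hcEH m]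
        linear_combination (Complex.I * (Real.sinh (θ (m+1)) : ℂ) *
            ((Real.cosh (θ (m+1)) : ℂ))⁻¹ * E m *
            (∏ k ∈ Finset.Icc 1 m, ((Real.cosh (θ k) : ℂ))⁻¹)) * hexp (m+1) -
          (Complex.I * (Real.sinh (θ (m+1)) : ℂ) *
            ((Real.cosh (θ (m+1)) : ℂ))⁻¹ * E m *
            (∏ k ∈ Finset.Icc 1 m, ((Real.cosh (θ k) : ℂ))⁻¹)) * hneg m
      have t1C : (C (∏ k ∈ Finset.Icc 1 (m+1),
            (Complex.exp (-(φ k : ℂ) * Complex.I) / (Real.cosh (θ k) : ℂ))) *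
          C (Complex.exp ((φ (m+1) : ℂ) * Complex.I) * (Real.cosh (θ (m+1)) : ℂ))
            : Polynomial ℂ) =
          C (∏ k ∈ Finset.Icc 1 m,
            (Complex.exp (-(φ k : ℂ) * Complex.I) / (Real.cosh (θ k) : ℂ))) := by
        rw [← C_mul, t1]
      have t2C : (C (∏ k ∈ Finset.Icc 1 (m+1),
            (Complex.exp (-(φ k : ℂ) * Complex.I) / (Real.cosh (θ k) : ℂ))) *
          C (Complex.I * Complex.exp ((φ (m+1) : ℂ) * Complex.I) * (Real.sinh (θ (m+1)) : ℂ))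
            : Polynomial ℂ) =
          -(C ((starRingEnd ℂ) (ν (m+1))) *
            C ((-1 : ℂ) ^ m * ∏ k ∈ Finset.Icc 1 m, ((Real.cosh (θ k) : ℂ))⁻¹)) := by
        rw [← C_mul, t2, ← C_mul, map_neg]
      linear_combination (X * P m) * t1C + (Q m) * t2C
    · rw [hQt (m+1), hrecQ (m+1) (by omega) h2, hQt m, hPhat m]
      simp only [Nat.add_sub_cancel]
      have t3 : ((-1 : ℂ) ^ (m+1) * ∏ k ∈ Finset.Icc 1 (m+1), ((Real.cosh (θ k) : ℂ))⁻¹) *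
          (Complex.I * (Real.sinh (θ (m+1)) : ℂ)) =
          -(ν (m+1) * ∏ k ∈ Finset.Icc 1 m,
            (Complex.exp (-(φ k : ℂ) * Complex.I) / (Real.cosh (θ k) : ℂ))) := by
        have hEm : (E m)⁻¹ * E m = 1 := inv_mul_cancel₀ (hEne m)
        rw [Finset.prod_Icc_succ_top (by omega : 1 ≤ m + 1), hν1, htanh (m+1), hcEH m,
          pow_succ]
        linear_combination (Complex.I * (-1 : ℂ) ^ m * (Real.sinh (θ (m+1)) : ℂ) *
            ((Real.cosh (θ (m+1)) : ℂ))⁻¹ *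
            (∏ k ∈ Finset.Icc 1 m, ((Real.cosh (θ k) : ℂ))⁻¹)) * hEm
      have t4 : ((-1 : ℂ) ^ (m+1) * ∏ k ∈ Finset.Icc 1 (m+1), ((Real.cosh (θ k) : ℂ))⁻¹) *
          (Real.cosh (θ (m+1)) : ℂ) =
          -((-1 : ℂ) ^ m * ∏ k ∈ Finset.Icc 1 m, ((Real.cosh (θ k) : ℂ))⁻¹) := by
        have hcc : ((Real.cosh (θ (m+1)) : ℂ))⁻¹ * (Real.cosh (θ (m+1)) : ℂ) = 1 :=
          inv_mul_cancel₀ (hch (m+1))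
        rw [Finset.prod_Icc_succ_top (by omega : 1 ≤ m + 1), pow_succ]
        linear_combination (-((-1 : ℂ) ^ m *
          ∏ k ∈ Finset.Icc 1 m, ((Real.cosh (θ k) : ℂ))⁻¹)) * hcc
      have t3C : (C ((-1 : ℂ) ^ (m+1) * ∏ k ∈ Finset.Icc 1 (m+1),
            ((Real.cosh (θ k) : ℂ))⁻¹) *
          C (Complex.I * (Real.sinh (θ (m+1)) : ℂ)) : Polynomial ℂ) =
          -(C (ν (m+1)) * C (∏ k ∈ Finset.Icc 1 m,
            (Complex.exp (-(φ k : ℂ) * Complex.I) / (Real.cosh (θ k) : ℂ)))) := by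
        rw [← C_mul, t3, ← C_mul, map_neg]
      have t4C : (C ((-1 : ℂ) ^ (m+1) * ∏ k ∈ Finset.Icc 1 (m+1),
            ((Real.cosh (θ k) : ℂ))⁻¹) *
          C ((Real.cosh (θ (m+1)) : ℂ)) : Polynomial ℂ) =
          -C ((-1 : ℂ) ^ m * ∏ k ∈ Finset.Icc 1 m, ((Real.cosh (θ k) : ℂ))⁻¹) := by
        rw [← C_mul, t4, map_neg]
      linear_combination (X * P m) * t3C - (Q m) * t4C
  -- main induction: monicity, degree, conjugate-reversal
  have main : ∀ j, j ≤ n → (Phat j).Monic ∧ (Phat j).natDegree = j ∧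
      Qt j = ∑ k ∈ Finset.range (j + 1),
        C ((starRingEnd ℂ) ((Phat j).coeff (j - k))) * X ^ k := by
    intro j
    induction j with
    | zero =>
      intro _
      have hPh0 : Phat 0 = 1 := by
        rw [hPhat 0, hP0]
        simp [Finset.Icc_eq_empty (by omega : ¬ (1:ℕ) ≤ 0)]
      have hQt0 : Qt 0 = 1 := by
        rw [hQt 0, hQ0]
        simp [Finset.Icc_eq_empty (by omega : ¬ (1:ℕ) ≤ 0)]
      refine ⟨by rw [hPh0]; exact monic_one, by rw [hPh0]; exact natDegree_one, ?_⟩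
      rw [hQt0]
      simp [hPh0]
    | succ m ih =>
      intro hj
      obtain ⟨hmon, hdeg, hq⟩ := ih (by omega)
      obtain ⟨hP', hQ'⟩ := hrec (m+1) (by omega) hj
      simp only [Nat.add_sub_cancel] at hP' hQ'
      have hQc : ∀ i, (Qt m).coeff i =
          if i ≤ m then (starRingEnd ℂ) ((Phat m).coeff (m - i)) else 0 := by
        intro i
        rw [hq]
        exact sum_coeff_aux m _ i
      have hqdeg : (Qt m).natDegree ≤ m := by
        rw [hq]
        exact sum_natDegree_aux m _
      have hXp : (X * Phat m).Monic := monic_X.mul hmon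
      have hXpd : (X * Phat m).natDegree = m + 1 := by
        rw [(monic_X (R := ℂ)).natDegree_mul hmon, natDegree_X, hdeg]
        omega
      have hlt : (C ((starRingEnd ℂ) (ν (m+1))) * Qt m).degree < (X * Phat m).degree := by
        rw [degree_eq_natDegree hXp.ne_zero, hXpd]
        refine lt_of_le_of_lt (degree_mul_le _ _) ?_
        refine lt_of_le_of_lt (add_le_add degree_C_le degree_le_natDegree) ?_
        rw [zero_add]
        exact_mod_cast Nat.lt_succ_of_le hqdeg
      have hmon1 : (Phat (m+1)).Monic := by
        rw [hP', sub_eq_add_neg]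
        exact hXp.add_of_left (by rwa [degree_neg])
      have hdeg1 : (Phat (m+1)).natDegree = m + 1 := by
        have hde : (Phat (m+1)).degree = ((m + 1 : ℕ) : WithBot ℕ) := by
          rw [hP', sub_eq_add_neg, degree_add_eq_left_of_degree_lt (by rwa [degree_neg]),
            degree_eq_natDegree hXp.ne_zero, hXpd]
        exact natDegree_eq_of_degree_eq_some hde
      have hpm : (Phat m).coeff m = 1 := by
        have := hmon.coeff_natDegree
        rwa [hdeg] at this
      have hp1 : (Phat (m+1)).coeff (m+1) = 1 := by
        have := hmon1.coeff_natDegree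
        rwa [hdeg1] at this
      have hXpc : ∀ i, (X * Phat m).coeff i =
          if i = 0 then 0 else (Phat m).coeff (i - 1) := by
        intro i
        cases i with
        | zero => simp [Polynomial.mul_coeff_zero]
        | succ k => simp [coeff_X_mul]
      have hPc : ∀ i, (Phat (m+1)).coeff i =
          (X * Phat m).coeff i - (starRingEnd ℂ) (ν (m+1)) * (Qt m).coeff i := by
        intro i
        rw [hP']
        simp [coeff_sub, coeff_C_mul]
      refine ⟨hmon1, hdeg1, ?_⟩
      apply Polynomial.ext
      intro i
      rw [sum_coeff_aux (m+1) _ i, hQ']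
      simp only [coeff_sub, coeff_C_mul]
      rw [hQc i, hXpc i]
      by_cases h0 : i = 0
      · subst h0
        simp only [if_pos (Nat.zero_le m), if_pos (Nat.zero_le (m+1)), if_pos rfl,
          Nat.sub_zero, mul_zero, sub_zero, hpm, hp1]
        simp
      · have h0' : 1 ≤ i := by omega
        by_cases h1 : i ≤ m
        · rw [if_pos h1, if_neg h0, if_pos (by omega : i ≤ m + 1), hPc (m + 1 - i),
            hXpc (m + 1 - i), hQc (m + 1 - i), if_neg (by omega : ¬ m + 1 - i = 0),
            if_pos (by omega : m + 1 - i ≤ m)]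
          have e1 : m + 1 - i - 1 = m - i := by omega
          have e2 : m - (m + 1 - i) = i - 1 := by omega
          rw [e1, e2]
          simp [map_sub, map_mul, Complex.conj_conj]
        · by_cases h2 : i ≤ m + 1
          · have hi : i = m + 1 := by omega
            subst hi
            rw [if_neg h1, if_pos le_rfl]
            simp only [Nat.sub_self]
            rw [hPc 0, hXpc 0, hQc 0, if_pos rfl, if_pos (Nat.zero_le m), Nat.sub_zero,
              if_neg (by omega : ¬ m + 1 = 0), hpm]
            simp [map_sub, map_mul, Complex.conj_conj, hpm]
          · rw [if_neg h1, if_neg h2, if_neg h0]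
            have hz : (Phat m).coeff (i - 1) = 0 :=
              coeff_eq_zero_of_natDegree_lt (by omega)
            rw [hz]
            simp
  refine ⟨fun j hj => ⟨(main j hj).1, (main j hj).2.1⟩, ⟨ν, ?_, hrec⟩,
    fun j hj => (main j hj).2.2⟩
  intro j _ _
  have habs : ‖ν j‖ = |Real.tanh (θ j)| := by
    rw [hν]
    simp [norm_mul, norm_inv, norm_pow, Complex.norm_I, Complex.norm_real, hEabs,
      norm_neg, norm_one]
    rw [← Complex.ofReal_tanh]
    exact Complex.norm_real _
  exact ⟨habs, by rw [habs]; exact abs_tanh_lt_one _⟩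
end

section
/- Let n ≥ 1 and let ν_1, …, ν_n be complex numbers with |ν_j| < 1 for all j. Define complex polynomials by P̂_0 = 1, Q̃_0 = 1, and for 1 ≤ j ≤ n: P̂_j(z) = z·P̂_{j−1}(z) − conj(ν_j)·Q̃_{j−1}(z) and Q̃_j(z) = Q̃_{j−1}(z) − ν_j·z·P̂_{j−1}(z). Then every complex root z₀ of P̂_n satisfies |z₀| < 1. -/
open Polynomial

lemma szego_normSq_key (ν A b : ℂ) :
    Complex.normSq (A - (starRingEnd ℂ) ν * b) - Complex.normSq (b - ν * A) =
      (1 - Complex.normSq ν) * (Complex.normSq A - Complex.normSq b) := by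
  simp only [Complex.normSq_apply, Complex.sub_re, Complex.sub_im, Complex.mul_re,
    Complex.mul_im, Complex.conj_re, Complex.conj_im]
  ring

/-- **Zeros Theorem (Corollary 5.5).**  Monic orthogonal polynomials on the unit circle,
defined by the Szegő recurrence with Verblunsky coefficients `|ν_j| < 1`, have all their
roots strictly inside the open unit disk. -/
theorem stmt_17 (n : ℕ) (hn : 1 ≤ n) (ν : ℕ → ℂ)
    (hν : ∀ j, 1 ≤ j → j ≤ n → ‖ν j‖ < 1)
    (P Q : ℕ → Polynomial ℂ) (hP0 : P 0 = 1) (hQ0 : Q 0 = 1)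
    (hrecP : ∀ j, 1 ≤ j → j ≤ n →
      P j = X * P (j - 1) - C ((starRingEnd ℂ) (ν j)) * Q (j - 1))
    (hrecQ : ∀ j, 1 ≤ j → j ≤ n →
      Q j = Q (j - 1) - C (ν j) * (X * P (j - 1))) :
    ∀ z : ℂ, (P n).eval z = 0 → ‖z‖ < 1 := by
  have main : ∀ j, j ≤ n → ∀ z : ℂ, 1 ≤ ‖z‖ →
      (P j).eval z ≠ 0 ∧ ‖(Q j).eval z‖ ≤ ‖(P j).eval z‖ := by
    intro j
    induction j with
    | zero => intro _ z _; simp [hP0, hQ0]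
    | succ k ih =>
      intro hk z hz
      have hk' : k ≤ n := Nat.le_of_succ_le hk
      obtain ⟨hPne, hQle⟩ := ih hk' z hz
      have h1 : 1 ≤ k + 1 := Nat.succ_le_succ (Nat.zero_le k)
      have hPj := hrecP (k + 1) h1 hk
      have hQj := hrecQ (k + 1) h1 hk
      simp only [Nat.add_sub_cancel] at hPj hQj
      set a := (P k).eval z with ha
      set b := (Q k).eval z with hb
      set c := ν (k + 1) with hc
      have hcabs : ‖c‖ < 1 := hν (k + 1) h1 hk
      have hevP : (P (k + 1)).eval z = z * a - (starRingEnd ℂ) c * b := by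
        rw [hPj]; simp [ha, hb]
      have hevQ : (Q (k + 1)).eval z = b - c * (z * a) := by
        rw [hQj]; simp [hb, ha]
      have hapos : 0 < ‖a‖ := by
        simpa [norm_pos_iff] using hPne
      have hba : ‖b‖ ≤ ‖z * a‖ := by
        rw [norm_mul]
        calc ‖b‖ ≤ ‖a‖ := hQle
        _ = 1 * ‖a‖ := (one_mul _).symm
        _ ≤ ‖z‖ * ‖a‖ := by
            exact mul_le_mul_of_nonneg_right hz hapos.le
      have hlt : ‖(starRingEnd ℂ) c * b‖ < ‖z * a‖ := by
        rw [norm_mul, Complex.norm_conj]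
        calc ‖c‖ * ‖b‖ ≤ ‖c‖ * ‖z * a‖ :=
              mul_le_mul_of_nonneg_left hba (norm_nonneg c)
        _ < 1 * ‖z * a‖ := by
              apply mul_lt_mul_of_pos_right hcabs
              rw [norm_mul]
              exact lt_of_lt_of_le hapos (le_mul_of_one_le_left hapos.le hz)
        _ = ‖z * a‖ := one_mul _
      have hPne' : (P (k + 1)).eval z ≠ 0 := by
        rw [hevP]
        intro hcontr
        rw [sub_eq_zero] at hcontr
        rw [← hcontr] at hlt
        exact lt_irrefl _ hlt
      refine ⟨hPne', ?_⟩
      have hkey := szego_normSq_key c (z * a) b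
      have hnsν : Complex.normSq c < 1 := by
        rw [← Complex.sq_norm]
        nlinarith [norm_nonneg c]
      have hns : Complex.normSq b ≤ Complex.normSq (z * a) := by
        rw [← Complex.sq_norm, ← Complex.sq_norm]
        exact pow_le_pow_left₀ (norm_nonneg b) hba 2
      have hdiff : 0 ≤ Complex.normSq ((P (k+1)).eval z) - Complex.normSq ((Q (k+1)).eval z) := by
        have h2 : 0 ≤ (1 - Complex.normSq c) * (Complex.normSq (z * a) - Complex.normSq b) :=
          mul_nonneg (by linarith) (by linarith)
        rw [hevP, hevQ, hkey]
        linarith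
      have : ‖(Q (k+1)).eval z‖ ^ 2 ≤ ‖(P (k+1)).eval z‖ ^ 2 := by
        rw [Complex.sq_norm, Complex.sq_norm]; linarith
      exact (pow_le_pow_iff_left₀ (norm_nonneg _) (norm_nonneg _)
        (two_ne_zero)).mp this
  intro z hz
  by_contra h
  push_neg at h
  exact (main n le_rfl z h).1 hz
end

section
/- Let n ≥ 1 and let P be a monic complex polynomial of degree n all of whose complex roots have modulus strictly less than 1. Then for every natural number j with 0 ≤ j ≤ n: (1/(2π))·∫_{0}^{2π} e^{−i·j·θ} · P(e^{iθ}) / |P(e^{iθ})|² dθ equals 1 if j = n and equals 0 if j < n. -/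
open Polynomial intervalIntegral

/-- **Bernstein–Szegő orthogonality (underlying Proposition 5.8).**  A monic polynomial of
degree `n` with all roots in the open unit disk is the `n`-th monic orthogonal polynomial on
the unit circle for the measure `dθ/(2π·|P(e^{iθ})|²)`:
`(1/2π)∫₀^{2π} e^{−ijθ}·P(e^{iθ})/|P(e^{iθ})|² dθ = δ_{jn}` for `0 ≤ j ≤ n`. -/
theorem stmt_18 (n : ℕ) (hn : 1 ≤ n) (P : Polynomial ℂ) (hm : P.Monic)
    (hdeg : P.natDegree = n)
    (hroots : ∀ z : ℂ, P.eval z = 0 → ‖z‖ < 1) :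
    ∀ j ≤ n,
      (1 / (2 * (Real.pi : ℂ))) *
        ∫ θ in (0 : ℝ)..(2 * Real.pi),
          Complex.exp (-(j : ℂ) * (θ : ℂ) * Complex.I) *
            P.eval (Complex.exp ((θ : ℂ) * Complex.I)) /
            ((Complex.normSq (P.eval (Complex.exp ((θ : ℂ) * Complex.I))) : ℝ) : ℂ)
      = if j = n then 1 else 0 := by
  intro j hj
  set Qm : Polynomial ℂ := P.map (starRingEnd ℂ) with hQmdef
  set Q : Polynomial ℂ := Qm.reverse with hQdef
  have hQmmonic : Qm.Monic := hm.map _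
  have hQmdeg : Qm.natDegree = n := by rw [hQmdef, hm.natDegree_map, hdeg]
  have hQ0 : Q.eval 0 = 1 := by
    rw [hQdef, ← Polynomial.coeff_zero_eq_eval_zero, Polynomial.coeff_zero_reverse]
    exact hQmmonic
  have hQmeval : ∀ x : ℂ, Qm.eval x = (starRingEnd ℂ) (P.eval ((starRingEnd ℂ) x)) := by
    intro x
    rw [hQmdef, Polynomial.eval_map]
    have h := Polynomial.eval₂_at_apply (p := P) (starRingEnd ℂ) ((starRingEnd ℂ) x)
    rwa [Complex.conj_conj] at h
  have hQeval : ∀ z : ℂ, z ≠ 0 → Q.eval z = z ^ n * Qm.eval z⁻¹ := by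
    intro z hz
    haveI : Invertible (z⁻¹) := invertibleOfNonzero (inv_ne_zero hz)
    have h := Polynomial.eval₂_reverse_mul_pow (RingHom.id ℂ) (z⁻¹) Qm
    rw [invOf_eq_inv, inv_inv, hQmdeg] at h
    have h' : Q.eval z * (z⁻¹) ^ n = Qm.eval z⁻¹ := h
    have hzn : (z⁻¹) ^ n ≠ 0 := pow_ne_zero _ (inv_ne_zero hz)
    rw [← h', mul_left_comm, ← mul_pow, mul_inv_cancel₀ hz, one_pow, mul_one]
  have hQne : ∀ z : ℂ, ‖z‖ ≤ 1 → Q.eval z ≠ 0 := by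
    intro z hz hzero
    rcases eq_or_ne z 0 with rfl | h0
    · rw [hQ0] at hzero; exact one_ne_zero hzero
    rw [hQeval z h0] at hzero
    rcases mul_eq_zero.mp hzero with h | h
    · exact pow_ne_zero n h0 h
    rw [hQmeval] at h
    have hroot : P.eval ((starRingEnd ℂ) z⁻¹) = 0 := by
      simpa using congrArg (starRingEnd ℂ) h
    have hlt := hroots _ hroot
    simp only [map_inv₀, norm_inv, Complex.norm_conj] at hlt
    have hpos : 0 < ‖z‖ := by
      simpa using h0
    have h1 : ‖z‖⁻¹ * ‖z‖ = 1 := inv_mul_cancel₀ hpos.ne'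
    nlinarith
  set f : ℂ → ℂ := fun z => z ^ (n - j) / Q.eval z with hfdef
  have hd : ∀ z ∈ Metric.closedBall (0 : ℂ) 1, DifferentiableAt ℂ f z := by
    intro z hz
    have h1 : ‖z‖ ≤ 1 := by
      simpa [Complex.dist_eq] using Metric.mem_closedBall.mp hz
    exact (differentiableAt_pow _).div (Polynomial.differentiableAt _) (hQne z h1)
  have key := Complex.circleIntegral_sub_inv_smul_of_differentiable_on_off_countable
    (s := (∅ : Set ℂ)) (R := 1) (c := 0) (w := 0) (f := f) Set.countable_empty
    (Metric.mem_ball_self one_pos)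
    (fun z hz => (hd z hz).continuousAt.continuousWithinAt)
    (fun z hz => hd z (Metric.ball_subset_closedBall hz.1))
  have lhs_eq : (∮ z in C(0, 1), (z - 0)⁻¹ • f z)
      = Complex.I * ∫ θ in (0 : ℝ)..(2 * Real.pi), f (Complex.exp ((θ : ℂ) * Complex.I)) := by
    rw [circleIntegral, ← intervalIntegral.integral_const_mul]
    apply intervalIntegral.integral_congr
    intro θ _
    have hz0 : Complex.exp ((θ : ℂ) * Complex.I) ≠ 0 := Complex.exp_ne_zero _
    simp only [deriv_circleMap, circleMap, Complex.ofReal_one, one_mul, zero_add, sub_zero,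
      smul_eq_mul]
    field_simp
  rw [lhs_eq] at key
  have h2pi : (2 * (Real.pi : ℂ)) ≠ 0 := by
    simp [Real.pi_ne_zero, Complex.ofReal_ne_zero]
  have key2 : (∫ θ in (0 : ℝ)..(2 * Real.pi), f (Complex.exp ((θ : ℂ) * Complex.I)))
      = 2 * (Real.pi : ℂ) * f 0 := by
    apply mul_left_cancel₀ Complex.I_ne_zero
    rw [key]
    simp [smul_eq_mul]
    ring
  have hint : ∀ θ : ℝ,
      Complex.exp (-(j : ℂ) * (θ : ℂ) * Complex.I) *
          P.eval (Complex.exp ((θ : ℂ) * Complex.I)) /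
          ((Complex.normSq (P.eval (Complex.exp ((θ : ℂ) * Complex.I))) : ℝ) : ℂ)
        = f (Complex.exp ((θ : ℂ) * Complex.I)) := by
    intro θ
    set z := Complex.exp ((θ : ℂ) * Complex.I) with hzdef
    have hz0 : z ≠ 0 := Complex.exp_ne_zero _
    have habs : ‖z‖ = 1 := Complex.norm_exp_ofReal_mul_I θ
    have hPz : P.eval z ≠ 0 := fun h => absurd (hroots z h) (by simp [habs])
    have hcz : (starRingEnd ℂ) z = z⁻¹ := by
      have h1 : z * (starRingEnd ℂ) z = 1 := by
        rw [Complex.mul_conj]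
        norm_cast
        rw [← Complex.sq_norm, habs]; norm_num
      field_simp at h1 ⊢
      linear_combination h1
    have hconjP : (starRingEnd ℂ) (P.eval z) = (z ^ n)⁻¹ * Q.eval z := by
      have h1 : Qm.eval ((starRingEnd ℂ) z) = (starRingEnd ℂ) (P.eval z) := by
        rw [hQmeval, Complex.conj_conj]
      rw [← h1, hcz, hQeval z hz0]
      have : (z : ℂ) ^ n ≠ 0 := pow_ne_zero _ hz0
      field_simp
    have hexp : Complex.exp (-(j : ℂ) * (θ : ℂ) * Complex.I) = (z ^ j)⁻¹ := by
      rw [hzdef, ← Complex.exp_nat_mul, ← Complex.exp_neg]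
      congr 1
      ring
    have hQz : Q.eval z ≠ 0 := hQne z habs.le
    have hpow : z ^ (n - j) = z ^ n * (z ^ j)⁻¹ := pow_sub₀ z hz0 hj
    have hnormSq : ((Complex.normSq (P.eval z) : ℝ) : ℂ)
        = P.eval z * (starRingEnd ℂ) (P.eval z) := (Complex.mul_conj _).symm
    rw [hnormSq, hexp, hconjP, hfdef]
    have hzj : (z : ℂ) ^ j ≠ 0 := pow_ne_zero _ hz0
    have hzn : (z : ℂ) ^ n ≠ 0 := pow_ne_zero _ hz0
    field_simp [hpow]
    ring
    rw [← pow_add, Nat.add_sub_cancel' hj]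
  rw [intervalIntegral.integral_congr (fun θ _ => hint θ), key2]
  have hf0 : f 0 = if j = n then 1 else 0 := by
    rw [hfdef]
    simp only [hQ0, div_one]
    rcases eq_or_ne j n with rfl | hne
    · simp
    · have hlt : 0 < n - j := Nat.sub_pos_of_lt (lt_of_le_of_ne hj hne)
      rw [zero_pow hlt.ne', if_neg hne]
  rw [hf0]
  field_simp
end
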